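/- arXiv:1202.5425 — 10 statements merged into one kernel-verified Lean document; each statement's English description precedes it below -/
import Mathlib

section
/- Let T be a real-linear bounded operator on L^p(Ω,μ;ℝ) for 1 ≤ p < ∞, and let T_ℂ be its canonical complex-linear extension to L^p(Ω,μ;ℂ) given by T_ℂ(f+ig) = Tf + i Tg. Then ‖T_ℂ‖ = ‖T‖. -/
open MeasureTheory Complex
open scoped ENNReal Real

noncomputable section NormComplexificationAux

/-- The averaging constant `∫ |cos θ|^q` over a period, as an `ℝ≥0∞`-valued integral. -/
private def cpq (q : ℝ) : ℝ≥0∞ :=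
  ∫⁻ θ in Set.Ioc 0 (2 * π), (ENNReal.ofReal ‖Real.cos θ‖) ^ q

private lemma cpq_ne_top {q : ℝ} (hq : 0 ≤ q) : cpq q ≠ ∞ := by
  have h : cpq q ≤ ∫⁻ _ in Set.Ioc 0 (2 * π), (1 : ℝ≥0∞) := by
    refine lintegral_mono fun θ => ?_
    refine ENNReal.rpow_le_one ?_ hq
    rw [← ENNReal.ofReal_one]
    exact ENNReal.ofReal_le_ofReal (by simpa [Real.norm_eq_abs] using Real.abs_cos_le_one θ)
  refine ne_top_of_le_ne_top ?_ h
  simp [lintegral_const, Real.volume_Ioc]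
  exact ENNReal.mul_ne_top (by norm_num) ENNReal.ofReal_ne_top

private lemma cpq_ne_zero {q : ℝ} (hq : 0 ≤ q) : cpq q ≠ 0 := by
  have hπ := Real.pi_pos
  have hsub : Set.Ioc (0:ℝ) (π/3) ⊆ Set.Ioc 0 (2*π) :=
    Set.Ioc_subset_Ioc le_rfl (by nlinarith)
  have hbound : ∀ θ ∈ Set.Ioc (0:ℝ) (π/3),
      (ENNReal.ofReal (1/2)) ^ q ≤ (ENNReal.ofReal ‖Real.cos θ‖) ^ q := by
    intro θ hθ
    refine ENNReal.rpow_le_rpow (ENNReal.ofReal_le_ofReal ?_) hq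
    have h1 : Real.cos (π/3) ≤ Real.cos θ :=
      Real.cos_le_cos_of_nonneg_of_le_pi hθ.1.le (by linarith) hθ.2
    rw [Real.cos_pi_div_three] at h1
    rw [Real.norm_eq_abs]
    exact le_trans h1 (le_abs_self _)
  have hlow : (ENNReal.ofReal (1/2)) ^ q * volume (Set.Ioc (0:ℝ) (π/3)) ≤ cpq q := by
    calc (ENNReal.ofReal (1/2)) ^ q * volume (Set.Ioc (0:ℝ) (π/3))
        = ∫⁻ _ in Set.Ioc (0:ℝ) (π/3), (ENNReal.ofReal (1/2)) ^ q := by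
          rw [setLIntegral_const]
      _ ≤ ∫⁻ θ in Set.Ioc (0:ℝ) (π/3), (ENNReal.ofReal ‖Real.cos θ‖) ^ q :=
          setLIntegral_mono' measurableSet_Ioc hbound
      _ ≤ cpq q := lintegral_mono_set hsub
  have hne : (ENNReal.ofReal (1/2) : ℝ≥0∞) ^ q ≠ 0 :=
    (ENNReal.rpow_pos (by simp) ENNReal.ofReal_ne_top).ne'
  have hv : volume (Set.Ioc (0:ℝ) (π/3)) ≠ 0 := by
    rw [Real.volume_Ioc]
    simp only [ne_eq, ENNReal.ofReal_eq_zero, not_le]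
    linarith
  intro h0
  rw [h0, le_zero_iff] at hlow
  exact (ENNReal.mul_pos hne hv).ne' hlow

/-- Translation invariance of the periodic integral. -/
private lemma lintegral_Ioc_shift {G : ℝ → ℝ≥0∞} (hG : Function.Periodic G (2 * π)) (t : ℝ) :
    ∫⁻ θ in Set.Ioc 0 (2 * π), G (θ + t) = ∫⁻ θ in Set.Ioc 0 (2 * π), G θ := by
  haveI : Fact (0 < 2 * π) := ⟨by positivity⟩
  have emb : MeasurableEmbedding (· + t : ℝ → ℝ) :=
    (Homeomorph.addRight t).measurableEmbedding
  have mp : MeasurePreserving (· + t : ℝ → ℝ) volume volume :=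
    measurePreserving_add_right volume t
  have hpre : ((· + t) ⁻¹' Set.Ioc t (t + 2 * π) : Set ℝ) = Set.Ioc 0 (2 * π) := by
    ext x
    simp only [Set.mem_preimage, Set.mem_Ioc]
    constructor <;> rintro ⟨h1, h2⟩ <;> constructor <;> linarith
  have h1 : ∫⁻ θ in Set.Ioc 0 (2 * π), G (θ + t)
      = ∫⁻ θ in Set.Ioc t (t + 2 * π), G θ := by
    rw [← hpre]
    exact mp.setLIntegral_comp_preimage_emb emb G _
  have h2 := AddCircle.lintegral_preimage (2 * π) t hG.lift
  have h3 := AddCircle.lintegral_preimage (2 * π) 0 hG.lift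
  simp only [Function.Periodic.lift_coe] at h2 h3
  rw [zero_add] at h3
  rw [h1, h2, ← h3]

/-- The pointwise averaging identity in `ℝ≥0∞`. -/
private lemma pointwise_avg {q : ℝ} (hq : 0 < q) (z : ℂ) :
    ∫⁻ θ in Set.Ioc 0 (2 * π), (ENNReal.ofReal ‖(Complex.exp (θ * I) * z).re‖) ^ q
      = cpq q * (ENNReal.ofReal ‖z‖) ^ q := by
  rcases eq_or_ne z 0 with rfl | hz
  · simp [ENNReal.zero_rpow_of_pos hq]
  · have hre : ∀ θ : ℝ, (Complex.exp (θ * I) * z).re = ‖z‖ * Real.cos (θ + z.arg) := by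
      intro θ
      have hmul : Complex.exp (θ * I) * z
          = (‖z‖ : ℂ) * Complex.exp ((↑(θ + z.arg) : ℂ) * I) := by
        conv_lhs => rw [← Complex.norm_mul_exp_arg_mul_I z]
        rw [mul_left_comm, ← Complex.exp_add]
        congr 2
        push_cast
        ring
      rw [hmul, Complex.re_ofReal_mul, Complex.exp_ofReal_mul_I_re]
    have hstep : ∀ θ : ℝ, (ENNReal.ofReal ‖(Complex.exp (θ * I) * z).re‖) ^ q
        = (ENNReal.ofReal ‖z‖) ^ q * (ENNReal.ofReal ‖Real.cos (θ + z.arg)‖) ^ q := by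
      intro θ
      rw [hre θ, norm_mul, ENNReal.ofReal_mul (norm_nonneg _),
        ENNReal.mul_rpow_of_nonneg _ _ hq.le, norm_norm]
    calc ∫⁻ θ in Set.Ioc 0 (2 * π), (ENNReal.ofReal ‖(Complex.exp (θ * I) * z).re‖) ^ q
        = ∫⁻ θ in Set.Ioc 0 (2 * π),
            (ENNReal.ofReal ‖z‖) ^ q * (ENNReal.ofReal ‖Real.cos (θ + z.arg)‖) ^ q :=
          lintegral_congr fun θ => hstep θ
      _ = (ENNReal.ofReal ‖z‖) ^ q
            * ∫⁻ θ in Set.Ioc 0 (2 * π), (ENNReal.ofReal ‖Real.cos (θ + z.arg)‖) ^ q :=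
          lintegral_const_mul' _ _ (ENNReal.rpow_ne_top_of_nonneg hq.le ENNReal.ofReal_ne_top)
      _ = (ENNReal.ofReal ‖z‖) ^ q * cpq q := by
          congr 1
          have hper : Function.Periodic (fun θ => (ENNReal.ofReal ‖Real.cos θ‖) ^ q) (2 * π) := by
            intro x; simp [Real.cos_add_two_pi]
          exact lintegral_Ioc_shift hper z.arg
      _ = cpq q * (ENNReal.ofReal ‖z‖) ^ q := mul_comm _ _

/-- `‖f‖^q` as a lower integral. -/
private lemma lp_norm_rpow {Ω : Type*} [MeasurableSpace Ω] {μ : Measure Ω} {p : ℝ≥0∞}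
    [Fact (1 ≤ p)] (hp : p ≠ ∞) {E : Type*} [NormedAddCommGroup E] (f : Lp E p μ) :
    ∫⁻ x, (ENNReal.ofReal ‖f x‖) ^ p.toReal ∂μ = (ENNReal.ofReal ‖f‖) ^ p.toReal := by
  have hp0 : p ≠ 0 := by
    have h1 : (1:ℝ≥0∞) ≤ p := Fact.out
    intro h; rw [h] at h1; exact absurd h1 (by simp)
  have hq0 : 0 < p.toReal := ENNReal.toReal_pos hp0 hp
  rw [Lp.norm_def, ENNReal.ofReal_toReal (Lp.eLpNorm_ne_top f),
    eLpNorm_eq_lintegral_rpow_enorm_toReal hp0 hp, ← ENNReal.rpow_mul,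
    one_div_mul_cancel hq0.ne', ENNReal.rpow_one]
  simp_rw [ofReal_norm]

/-- Dropping a set off which the integrand vanishes a.e. -/
private lemma lintegral_eq_restrict {Ω : Type*} [MeasurableSpace Ω] {μ : Measure Ω} {S : Set Ω}
    (hS : MeasurableSet S) {H : Ω → ℝ≥0∞} (h0 : ∀ᵐ x ∂(μ.restrict Sᶜ), H x = 0) :
    ∫⁻ x, H x ∂μ = ∫⁻ x in S, H x ∂μ := by
  have hc : ∫⁻ x in Sᶜ, H x ∂μ = 0 := by
    rw [lintegral_congr_ae h0, lintegral_zero]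
  rw [← lintegral_add_compl H hS, hc, add_zero]

/-- The key integral identity: averaging the real parts of rotations recovers the norm. -/
private lemma key_identity {Ω : Type*} [MeasurableSpace Ω] (μ : Measure Ω) (p : ℝ≥0∞)
    [Fact (1 ≤ p)] (hp : p ≠ ∞) (f : Lp ℂ p μ) :
    ∫⁻ θ in Set.Ioc 0 (2 * π),
        (ENNReal.ofReal ‖(Complex.reCLM.compLp (Complex.exp (θ * I) • f) : Lp ℝ p μ)‖) ^ p.toReal
      = cpq p.toReal * (ENNReal.ofReal ‖f‖) ^ p.toReal := by
  have hp0 : p ≠ 0 := by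
    have h1 : (1:ℝ≥0∞) ≤ p := Fact.out
    intro h; rw [h] at h1; exact absurd h1 (by simp)
  have hq0 : 0 < p.toReal := ENNReal.toReal_pos hp0 hp
  set q := p.toReal with hqdef
  have hgm : Measurable (⇑f : Ω → ℂ) := (Lp.stronglyMeasurable f).measurable
  have hfin : AEFinStronglyMeasurable (⇑f : Ω → ℂ) μ :=
    (Lp.memLp f).aefinStronglyMeasurable hp0 hp
  haveI := hfin.sigmaFinite_restrict
  set S := hfin.sigmaFiniteSet with hSdef
  have hSmeas : MeasurableSet S := hfin.measurableSet
  have hzero : ∀ᵐ x ∂(μ.restrict Sᶜ), f x = 0 := hfin.ae_eq_zero_compl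
  have hstep : ∀ θ : ℝ,
      (ENNReal.ofReal ‖(Complex.reCLM.compLp (Complex.exp (θ * I) • f) : Lp ℝ p μ)‖) ^ q
        = ∫⁻ x, (ENNReal.ofReal ‖(Complex.exp (θ * I) * f x).re‖) ^ q ∂μ := by
    intro θ
    rw [← lp_norm_rpow hp]
    refine lintegral_congr_ae ?_
    filter_upwards [Complex.reCLM.coeFn_compLp (Complex.exp (θ * I) • f),
      Lp.coeFn_smul (Complex.exp (θ * I)) f] with x h1 h2
    rw [h1, h2]
    simp [smul_eq_mul]
    rfl
  calc ∫⁻ θ in Set.Ioc 0 (2 * π),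
        (ENNReal.ofReal ‖(Complex.reCLM.compLp (Complex.exp (θ * I) • f) : Lp ℝ p μ)‖) ^ q
      = ∫⁻ θ in Set.Ioc 0 (2 * π),
          ∫⁻ x, (ENNReal.ofReal ‖(Complex.exp (θ * I) * f x).re‖) ^ q ∂μ :=
        lintegral_congr fun θ => hstep θ
    _ = ∫⁻ θ in Set.Ioc 0 (2 * π),
          ∫⁻ x in S, (ENNReal.ofReal ‖(Complex.exp (θ * I) * f x).re‖) ^ q ∂μ := by
        refine lintegral_congr fun θ => lintegral_eq_restrict hSmeas ?_
        filter_upwards [hzero] with x hx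
        rw [hx]
        simp [ENNReal.zero_rpow_of_pos hq0]
    _ = ∫⁻ x in S, (∫⁻ θ in Set.Ioc 0 (2 * π),
          (ENNReal.ofReal ‖(Complex.exp (θ * I) * f x).re‖) ^ q) ∂μ := by
        refine lintegral_lintegral_swap ?_
        refine Measurable.aemeasurable ?_
        have hm1 : Measurable fun zw : ℝ × Ω => Complex.exp ((zw.1 : ℂ) * I) * f zw.2 :=
          ((Complex.measurable_exp.comp
            ((Complex.measurable_ofReal.comp measurable_fst).mul_const I)).mul
            (hgm.comp measurable_snd))
        have hm2 : Measurable fun zw : ℝ × Ω =>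
            ENNReal.ofReal ‖(Complex.exp ((zw.1 : ℂ) * I) * f zw.2).re‖ :=
          ENNReal.measurable_ofReal.comp ((Complex.measurable_re.comp hm1).norm)
        exact ENNReal.continuous_rpow_const.measurable.comp hm2
    _ = ∫⁻ x in S, cpq q * (ENNReal.ofReal ‖f x‖) ^ q ∂μ :=
        lintegral_congr fun x => pointwise_avg hq0 (f x)
    _ = ∫⁻ x, cpq q * (ENNReal.ofReal ‖f x‖) ^ q ∂μ := by
        refine (lintegral_eq_restrict hSmeas ?_).symm
        filter_upwards [hzero] with x hx
        rw [hx]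
        simp [ENNReal.zero_rpow_of_pos hq0]
    _ = cpq q * ∫⁻ x, (ENNReal.ofReal ‖f x‖) ^ q ∂μ :=
        lintegral_const_mul' _ _ (cpq_ne_top hq0.le)
    _ = cpq q * (ENNReal.ofReal ‖f‖) ^ q := by rw [lp_norm_rpow hp]

end NormComplexificationAux

/-- The canonical complex-linear extension `T_ℂ (f + i g) = T f + i T g` of a bounded
real-linear operator `T` on `L^p(Ω, μ; ℝ)`, `1 ≤ p < ∞`, has the same norm as `T`. -/
theorem norm_complexification_eq
    {Ω : Type*} [MeasurableSpace Ω] (μ : Measure Ω)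
    (p : ℝ≥0∞) [Fact (1 ≤ p)] (hp : p ≠ ∞)
    (T : Lp ℝ p μ →L[ℝ] Lp ℝ p μ)
    (Tc : Lp ℂ p μ →L[ℂ] Lp ℂ p μ)
    (hTc : ∀ f : Lp ℂ p μ,
      Tc f = Complex.ofRealCLM.compLp (T (Complex.reCLM.compLp f))
        + Complex.I • Complex.ofRealCLM.compLp (T (Complex.imCLM.compLp f))) :
    ‖Tc‖ = ‖T‖ := by
  have hp0 : p ≠ 0 := by
    have h1 : (1:ℝ≥0∞) ≤ p := Fact.out
    intro h; rw [h] at h1; exact absurd h1 (by simp)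
  have hq0 : 0 < p.toReal := ENNReal.toReal_pos hp0 hp
  set q := p.toReal with hqdef
  -- real part commutes with Tc
  have hre_Tc : ∀ g : Lp ℂ p μ,
      Complex.reCLM.compLp (Tc g) = T (Complex.reCLM.compLp g) := by
    intro g
    rw [hTc g]
    apply Lp.ext
    filter_upwards [Complex.reCLM.coeFn_compLp
        (Complex.ofRealCLM.compLp (T (Complex.reCLM.compLp g))
          + Complex.I • Complex.ofRealCLM.compLp (T (Complex.imCLM.compLp g))),
      Lp.coeFn_add (Complex.ofRealCLM.compLp (T (Complex.reCLM.compLp g)))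
        (Complex.I • Complex.ofRealCLM.compLp (T (Complex.imCLM.compLp g))),
      Lp.coeFn_smul Complex.I (Complex.ofRealCLM.compLp (T (Complex.imCLM.compLp g))),
      Complex.ofRealCLM.coeFn_compLp (T (Complex.reCLM.compLp g)),
      Complex.ofRealCLM.coeFn_compLp (T (Complex.imCLM.compLp g))]
      with x h1 h2 h3 h4 h5
    rw [h1, h2]
    simp only [Pi.add_apply]
    rw [h3, h4]
    simp only [Pi.smul_apply, h5, smul_eq_mul]
    simp
  -- ofReal preserves norms
  have hnorm_ofReal : ∀ f : Lp ℝ p μ, ‖(Complex.ofRealCLM.compLp f : Lp ℂ p μ)‖ = ‖f‖ := by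
    intro f
    rw [Lp.norm_def, Lp.norm_def]
    congr 1
    apply eLpNorm_congr_norm_ae
    filter_upwards [Complex.ofRealCLM.coeFn_compLp f] with x hx
    rw [hx]
    simp
  -- `Tc` maps real functions to real functions via `T`
  have hTc_ofReal : ∀ f : Lp ℝ p μ,
      Tc (Complex.ofRealCLM.compLp f) = Complex.ofRealCLM.compLp (T f) := by
    intro f
    rw [hTc]
    have hre : Complex.reCLM.compLp (Complex.ofRealCLM.compLp f : Lp ℂ p μ) = f := by
      apply Lp.ext
      filter_upwards [Complex.reCLM.coeFn_compLp (Complex.ofRealCLM.compLp f : Lp ℂ p μ),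
        Complex.ofRealCLM.coeFn_compLp f] with x h1 h2
      rw [h1, h2]; simp
    have him : Complex.imCLM.compLp (Complex.ofRealCLM.compLp f : Lp ℂ p μ) = 0 := by
      apply Lp.ext
      filter_upwards [Complex.imCLM.coeFn_compLp (Complex.ofRealCLM.compLp f : Lp ℂ p μ),
        Complex.ofRealCLM.coeFn_compLp f, Lp.coeFn_zero ℝ p μ] with x h1 h2 h3
      rw [h1, h2, h3]; simp
    have hzero : Complex.ofRealCLM.compLp (0 : Lp ℝ p μ) = (0 : Lp ℂ p μ) := by
      apply Lp.ext
      filter_upwards [Complex.ofRealCLM.coeFn_compLp (0 : Lp ℝ p μ),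
        Lp.coeFn_zero ℝ p μ, Lp.coeFn_zero ℂ p μ] with x h1 h2 h3
      rw [h1, h3]
      rw [Pi.zero_apply]
      have : (0 : Lp ℝ p μ) x = 0 := by rw [h2]; rfl
      rw [this]
      simp
    rw [hre, him, map_zero, hzero, smul_zero, add_zero]
  refine le_antisymm ?_ ?_
  · -- hard direction : ‖Tc‖ ≤ ‖T‖
    refine ContinuousLinearMap.opNorm_le_bound _ (norm_nonneg T) fun h => ?_
    have key1 := key_identity μ p hp (Tc h)
    have key2 := key_identity μ p hp h
    have hmain : cpq q * (ENNReal.ofReal ‖Tc h‖) ^ q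
        ≤ cpq q * (ENNReal.ofReal ‖T‖ * ENNReal.ofReal ‖h‖) ^ q := by
      rw [← key1]
      have hrw : ∀ θ : ℝ,
          (Complex.reCLM.compLp (Complex.exp (θ * I) • Tc h) : Lp ℝ p μ)
            = T (Complex.reCLM.compLp (Complex.exp (θ * I) • h)) := by
        intro θ
        rw [← Tc.map_smul, hre_Tc]
      calc ∫⁻ θ in Set.Ioc 0 (2 * π),
            (ENNReal.ofReal ‖(Complex.reCLM.compLp (Complex.exp (θ * I) • Tc h) : Lp ℝ p μ)‖) ^ q
          = ∫⁻ θ in Set.Ioc 0 (2 * π),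
              (ENNReal.ofReal ‖T (Complex.reCLM.compLp (Complex.exp (θ * I) • h))‖) ^ q :=
            lintegral_congr fun θ => by rw [hrw θ]
        _ ≤ ∫⁻ θ in Set.Ioc 0 (2 * π), (ENNReal.ofReal ‖T‖) ^ q
              * (ENNReal.ofReal
                  ‖(Complex.reCLM.compLp (Complex.exp (θ * I) • h) : Lp ℝ p μ)‖) ^ q := by
            refine lintegral_mono fun θ => ?_
            rw [← ENNReal.mul_rpow_of_nonneg _ _ hq0.le, ← ENNReal.ofReal_mul (norm_nonneg T)]
            exact ENNReal.rpow_le_rpow (ENNReal.ofReal_le_ofReal (T.le_opNorm _)) hq0.le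
        _ = (ENNReal.ofReal ‖T‖) ^ q * ∫⁻ θ in Set.Ioc 0 (2 * π),
              (ENNReal.ofReal ‖(Complex.reCLM.compLp (Complex.exp (θ * I) • h) : Lp ℝ p μ)‖) ^ q :=
            lintegral_const_mul' _ _ (ENNReal.rpow_ne_top_of_nonneg hq0.le ENNReal.ofReal_ne_top)
        _ = (ENNReal.ofReal ‖T‖) ^ q * (cpq q * (ENNReal.ofReal ‖h‖) ^ q) := by rw [key2]
        _ = cpq q * (ENNReal.ofReal ‖T‖ * ENNReal.ofReal ‖h‖) ^ q := by
            rw [ENNReal.mul_rpow_of_nonneg _ _ hq0.le]; ring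
    have hnn : (ENNReal.ofReal ‖Tc h‖) ^ q ≤ (ENNReal.ofReal ‖T‖ * ENNReal.ofReal ‖h‖) ^ q :=
      (ENNReal.mul_le_mul_iff_right (cpq_ne_zero hq0.le) (cpq_ne_top hq0.le)).mp hmain
    have hnn2 : ENNReal.ofReal ‖Tc h‖ ≤ ENNReal.ofReal ‖T‖ * ENNReal.ofReal ‖h‖ :=
      (ENNReal.rpow_le_rpow_iff hq0).mp hnn
    rw [← ENNReal.ofReal_mul (norm_nonneg T)] at hnn2
    exact (ENNReal.ofReal_le_ofReal_iff (by positivity)).mp hnn2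
  · -- easy direction : ‖T‖ ≤ ‖Tc‖
    refine ContinuousLinearMap.opNorm_le_bound _ (norm_nonneg Tc) fun f => ?_
    calc ‖T f‖ = ‖(Complex.ofRealCLM.compLp (T f) : Lp ℂ p μ)‖ := (hnorm_ofReal _).symm
      _ = ‖Tc (Complex.ofRealCLM.compLp f)‖ := by rw [hTc_ofReal]
      _ ≤ ‖Tc‖ * ‖(Complex.ofRealCLM.compLp f : Lp ℂ p μ)‖ := Tc.le_opNorm _
      _ = ‖Tc‖ * ‖f‖ := by rw [hnorm_ofReal]
end

section
/- Let E = l^p_n with 1 < p < ∞, T : E → E a positive bounded operator, and define M : E⁺ → (E*)⁺ by Mα = T*((Tα)^{p-1}), where α^{p-1} means coordinatewise power. If α ∈ E⁺ satisfies ‖Tα‖_p = ‖T‖ ‖α‖_p, then Mα = ‖T‖^p · α^{p-1}. -/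
open scoped ENNReal

open Filter

private lemma hasDerivAt_abs_rpow' {r : ℝ} (hr : 1 < r) {a : ℝ} (ha : 0 ≤ a) :
    HasDerivAt (fun t : ℝ => |t| ^ r) (r * a ^ (r - 1)) a := by
  have h := hasDerivAt_abs_rpow a hr
  convert h using 1
  rcases eq_or_lt_of_le ha with rfl | ha'
  · simp [Real.zero_rpow (by linarith : r - 1 ≠ 0)]
  · have hpow : a ^ (r - 2) * a = a ^ (r - 1) := by
      rw [← Real.rpow_add_one ha'.ne']; congr 1; ring
    rw [abs_of_pos ha', mul_assoc, hpow]

/-- Let `E = l^p_n`, `1 < p < ∞`, `T : E → E` a positive bounded operator, and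
`M α = T*((Tα)^{p-1})` (in coordinates, `(Mα)_i = ∑_j T_{ji} (Tα)_j^{p-1}` with
`T_{ji} = (T e_i)_j`).  If `α ∈ E⁺` satisfies `‖Tα‖_p = ‖T‖‖α‖_p`, then
`Mα = ‖T‖^p · α^{p-1}`. -/
theorem extremal_vector_M_eq
    {n : ℕ} (p : ℝ≥0∞) [Fact (1 ≤ p)] (hp1 : 1 < p) (hp2 : p ≠ ∞)
    (T : PiLp p (fun _ : Fin n => ℝ) →L[ℝ] PiLp p (fun _ : Fin n => ℝ))
    (hTpos : ∀ x : PiLp p (fun _ : Fin n => ℝ), (∀ i, 0 ≤ x i) → ∀ i, 0 ≤ T x i)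
    (α : PiLp p (fun _ : Fin n => ℝ)) (hα : ∀ i, 0 ≤ α i)
    (hext : ‖T α‖ = ‖T‖ * ‖α‖) :
    ∀ i, ∑ j, T ((WithLp.equiv p (Fin n → ℝ)).symm (Pi.single i 1)) j
        * (T α j) ^ (p.toReal - 1)
      = ‖T‖ ^ p.toReal * (α i) ^ (p.toReal - 1) := by
  intro i
  set pr := p.toReal with hprdef
  have hpr : 1 < pr := by
    rw [hprdef, ← ENNReal.toReal_one]
    exact (ENNReal.toReal_lt_toReal (by simp) hp2).mpr hp1
  have hpr0 : 0 < pr := lt_trans zero_lt_one hpr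
  set e : PiLp p (fun _ : Fin n => ℝ) :=
    (WithLp.equiv p (Fin n → ℝ)).symm (Pi.single i 1) with hedef
  have hTα : ∀ j, 0 ≤ T α j := hTpos α hα
  -- norm to the p-th power is the sum
  have normpow : ∀ y : PiLp p (fun _ : Fin n => ℝ), ‖y‖ ^ pr = ∑ k, |y k| ^ pr := by
    intro y
    have hS : 0 ≤ ∑ k, ‖y k‖ ^ pr :=
      Finset.sum_nonneg fun k _ => Real.rpow_nonneg (norm_nonneg _) _
    rw [PiLp.norm_eq_sum hpr0, ← Real.rpow_mul hS, one_div,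
      inv_mul_cancel₀ hpr0.ne', Real.rpow_one]
    simp [Real.norm_eq_abs]
  -- coordinates of α + t • e and of T (α + t • e)
  have hx : ∀ (t : ℝ) (k : Fin n), (α + t • e) k = α k + t * e k := by
    intro t k
    simp [smul_eq_mul]
  have hT : ∀ (t : ℝ) (j : Fin n), T (α + t • e) j = T α j + t * T e j := by
    intro t j
    rw [map_add, map_smul]
    simp [smul_eq_mul]
  set F : ℝ → ℝ := fun t =>
    (∑ j, |T α j + t * T e j| ^ pr) - ‖T‖ ^ pr * ∑ k, |α k + t * e k| ^ pr with hFdef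
  have hFt : ∀ t, F t = ‖T (α + t • e)‖ ^ pr - ‖T‖ ^ pr * ‖α + t • e‖ ^ pr := by
    intro t
    rw [hFdef]
    simp only [normpow, hT, hx]
  have hle : ∀ t, F t ≤ 0 := by
    intro t
    have h1 : ‖T (α + t • e)‖ ≤ ‖T‖ * ‖α + t • e‖ := T.le_opNorm _
    have h2 : ‖T (α + t • e)‖ ^ pr ≤ (‖T‖ * ‖α + t • e‖) ^ pr :=
      Real.rpow_le_rpow (norm_nonneg _) h1 hpr0.le
    rw [Real.mul_rpow (norm_nonneg _) (norm_nonneg _)] at h2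
    rw [hFt]
    linarith
  have hF0 : F 0 = 0 := by
    rw [hFt 0]
    simp only [zero_smul, add_zero]
    rw [hext, Real.mul_rpow (norm_nonneg _) (norm_nonneg _)]
    ring
  have hmax : IsLocalMax F 0 :=
    Filter.Eventually.of_forall fun t => by rw [hF0]; exact hle t
  -- derivative of F at 0
  have hterm : ∀ (c d : ℝ), 0 ≤ c →
      HasDerivAt (fun t : ℝ => |c + t * d| ^ pr) (pr * c ^ (pr - 1) * d) 0 := by
    intro c d hc
    have hlin : HasDerivAt (fun t : ℝ => c + t * d) d 0 := by
      simpa using ((hasDerivAt_id (0:ℝ)).mul_const d).const_add c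
    have hc' : (0:ℝ) ≤ c + 0 * d := by simpa using hc
    have := (hasDerivAt_abs_rpow' hpr hc').comp 0 hlin
    simp only [zero_mul, add_zero] at this
    exact this
  have hd1 : HasDerivAt (fun t : ℝ => ∑ j, |T α j + t * T e j| ^ pr)
      (∑ j, pr * (T α j) ^ (pr - 1) * T e j) 0 :=
    HasDerivAt.fun_sum fun j _ => hterm _ _ (hTα j)
  have hd2 : HasDerivAt (fun t : ℝ => ∑ k, |α k + t * e k| ^ pr)
      (∑ k, pr * (α k) ^ (pr - 1) * e k) 0 :=
    HasDerivAt.fun_sum fun k _ => hterm _ _ (hα k)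
  have hdF : HasDerivAt F
      ((∑ j, pr * (T α j) ^ (pr - 1) * T e j)
        - ‖T‖ ^ pr * ∑ k, pr * (α k) ^ (pr - 1) * e k) 0 :=
    hd1.sub (hd2.const_mul (‖T‖ ^ pr))
  have hD := hmax.hasDerivAt_eq_zero hdF
  -- compute the second sum
  have hsum2 : ∑ k, pr * (α k) ^ (pr - 1) * e k = pr * (α i) ^ (pr - 1) := by
    simp only [hedef, WithLp.equiv_symm_apply, WithLp.ofLp_toLp, Pi.single_apply, mul_ite, mul_one, mul_zero]
    simp
  rw [hsum2, sub_eq_zero] at hD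
  have hfinal : pr * ∑ j, T e j * (T α j) ^ (pr - 1)
      = pr * (‖T‖ ^ pr * (α i) ^ (pr - 1)) := by
    rw [Finset.mul_sum]
    calc ∑ j, pr * (T e j * (T α j) ^ (pr - 1))
        = ∑ j, pr * (T α j) ^ (pr - 1) * T e j := by
          apply Finset.sum_congr rfl; intros; ring
      _ = ‖T‖ ^ pr * (pr * (α i) ^ (pr - 1)) := hD
      _ = pr * (‖T‖ ^ pr * (α i) ^ (pr - 1)) := by ring
  exact mul_left_cancel₀ hpr0.ne' hfinal
end

section
/- Let 1 < p < ∞, E = l^p_n, T : E → E a positive operator, and M(α) = T*((Tα)^{p-1}). If α, β ∈ E⁺ satisfy α·β = 0 (disjoint supports) and Mα ≤ α^{p-1} coordinatewise, then α·(Mβ) = 0 and M(α+β) = Mα + Mβ. -/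
open scoped ENNReal

/-- Let `E = l^p_n`, `1 < p < ∞`, `T` a positive operator and
`M γ = T*((Tγ)^{p-1})`.  If `α, β ∈ E⁺` have disjoint supports (`α·β = 0`) and
`Mα ≤ α^{p-1}` coordinatewise, then `α·(Mβ) = 0` and `M(α+β) = Mα + Mβ`. -/
theorem M_additive_on_disjoint
    {n : ℕ} (p : ℝ≥0∞) [Fact (1 ≤ p)] (hp1 : 1 < p) (hp2 : p ≠ ∞)
    (T : PiLp p (fun _ : Fin n => ℝ) →L[ℝ] PiLp p (fun _ : Fin n => ℝ))
    (hTpos : ∀ x : PiLp p (fun _ : Fin n => ℝ), (∀ i, 0 ≤ x i) → ∀ i, 0 ≤ T x i)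
    (M : PiLp p (fun _ : Fin n => ℝ) → Fin n → ℝ)
    (hM : ∀ γ i, M γ i
      = ∑ j, T ((WithLp.equiv p (Fin n → ℝ)).symm (Pi.single i 1)) j
          * (T γ j) ^ (p.toReal - 1))
    (α β : PiLp p (fun _ : Fin n => ℝ))
    (hα : ∀ i, 0 ≤ α i) (hβ : ∀ i, 0 ≤ β i)
    (hdisj : ∀ i, α i * β i = 0)
    (hMα : ∀ i, M α i ≤ (α i) ^ (p.toReal - 1)) :
    (∀ i, α i * M β i = 0) ∧ (∀ i, M (α + β) i = M α i + M β i) := by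
  set e : Fin n → PiLp p (fun _ : Fin n => ℝ) :=
    fun m => (WithLp.equiv p (Fin n → ℝ)).symm (Pi.single m 1) with he
  have hpt : 1 < p.toReal := by
    have h1 : (1 : ℝ≥0∞).toReal < p.toReal :=
      (ENNReal.toReal_lt_toReal (by simp) hp2).mpr hp1
    simpa using h1
  have hq : p.toReal - 1 ≠ 0 := by linarith
  have hq0 : 0 < p.toReal - 1 := by linarith
  have he' : ∀ m i, e m i = if i = m then (1:ℝ) else 0 := by
    intro m i
    rw [he]
    simp [WithLp.equiv_symm_apply, Pi.single_apply]
  have he_nonneg : ∀ m i, (0:ℝ) ≤ e m i := by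
    intro m i
    rw [he']
    by_cases h : i = m <;> simp [h]
  have hTe : ∀ m j, 0 ≤ T (e m) j := fun m j => hTpos _ (he_nonneg m) j
  have hTsum : ∀ (γ : PiLp p (fun _ : Fin n => ℝ)) j,
      T γ j = ∑ m, γ m * T (e m) j := by
    intro γ j
    have hγ : γ = ∑ m, γ m • e m := by
      apply WithLp.ofLp_injective
      funext i
      rw [WithLp.ofLp_sum, Finset.sum_apply]
      simp only [PiLp.smul_apply, smul_eq_mul]
      simp [he', mul_ite]
    have hTγ : T γ = ∑ m, γ m • T (e m) := by
      conv_lhs => rw [hγ]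
      rw [map_sum]
      simp only [map_smul]
    rw [hTγ, WithLp.ofLp_sum, Finset.sum_apply]
    simp only [PiLp.smul_apply, smul_eq_mul]
  have hTα : ∀ j, 0 ≤ T α j := hTpos α hα
  have hTβ : ∀ j, 0 ≤ T β j := hTpos β hβ
  -- if α m = 0 then every term in M α m vanishes
  have hzero : ∀ m, α m = 0 → ∀ j,
      T (e m) j * (T α j) ^ (p.toReal - 1) = 0 := by
    intro m hm j
    have h1 : M α m ≤ 0 := by
      have := hMα m
      rwa [hm, Real.zero_rpow hq] at this
    have hterm : ∀ j ∈ Finset.univ, (0:ℝ) ≤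
        T (e m) j * (T α j) ^ (p.toReal - 1) := fun j _ =>
      mul_nonneg (hTe m j) (Real.rpow_nonneg (hTα j) _)
    have hsum0 : ∑ j, T (e m) j * (T α j) ^ (p.toReal - 1) = 0 :=
      le_antisymm (by rw [← hM]; exact h1) (Finset.sum_nonneg hterm)
    exact (Finset.sum_eq_zero_iff_of_nonneg hterm).mp hsum0 j (Finset.mem_univ j)
  -- key: Tα and Tβ have disjoint supports
  have hK : ∀ j, T α j * T β j = 0 := by
    intro j
    rcases (hTβ j).eq_or_lt with h | hβj
    · rw [← h, mul_zero]
    by_contra h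
    have hαj : 0 < T α j := (hTα j).lt_of_ne fun h0 => h (by rw [← h0, zero_mul])
    have hsum : (0:ℝ) < ∑ m, β m * T (e m) j := by rw [← hTsum]; exact hβj
    obtain ⟨m, _, hm⟩ := Finset.exists_ne_zero_of_sum_ne_zero hsum.ne'
    have hβm : 0 < β m :=
      (hβ m).lt_of_ne fun h0 => hm (by rw [← h0, zero_mul])
    have hem : 0 < T (e m) j :=
      (hTe m j).lt_of_ne fun h0 => hm (by rw [← h0, mul_zero])
    have hαm : α m = 0 := by
      have := hdisj m
      rcases mul_eq_zero.mp this with h | h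
      · exact h
      · exact absurd h hβm.ne'
    have := hzero m hαm j
    have hpos : 0 < T (e m) j * (T α j) ^ (p.toReal - 1) :=
      mul_pos hem (Real.rpow_pos_of_pos hαj _)
    exact hpos.ne' this
  constructor
  · intro i
    rw [hM, Finset.mul_sum]
    apply Finset.sum_eq_zero
    intro j _
    rcases (hTβ j).eq_or_lt with h | hβj
    · rw [← h, Real.zero_rpow hq, mul_zero, mul_zero]
    · have hTαj : T α j = 0 := by
        rcases mul_eq_zero.mp (hK j) with h | h
        · exact h
        · exact absurd h hβj.ne'
      have hsum : ∑ m, α m * T (e m) j = 0 := by rw [← hTsum]; exact hTαj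
      have hterm : ∀ m ∈ Finset.univ, (0:ℝ) ≤ α m * T (e m) j := fun m _ =>
        mul_nonneg (hα m) (hTe m j)
      have h0 : α i * T (e i) j = 0 :=
        (Finset.sum_eq_zero_iff_of_nonneg hterm).mp hsum i (Finset.mem_univ i)
      calc α i * (T (e i) j * (T β j) ^ (p.toReal - 1))
          = (α i * T (e i) j) * (T β j) ^ (p.toReal - 1) := by ring
        _ = 0 := by rw [h0, zero_mul]
  · intro i
    rw [hM, hM, hM, ← Finset.sum_add_distrib]
    apply Finset.sum_congr rfl
    intro j _
    have hadd : T (α + β) j = T α j + T β j := by rw [map_add]; rfl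
    have hsplit : (T α j + T β j) ^ (p.toReal - 1)
        = (T α j) ^ (p.toReal - 1) + (T β j) ^ (p.toReal - 1) := by
      rcases mul_eq_zero.mp (hK j) with h | h
      · rw [h, zero_add, Real.zero_rpow hq, zero_add]
      · rw [h, add_zero, Real.zero_rpow hq, add_zero]
    rw [hadd, hsplit, mul_add]
end

section
/- Let 1 < p < ∞, E = l^p_n, and T : E → E a positive contraction. Then there exists u ∈ E⁺ with all coordinates strictly positive such that M(u) := T*((Tu)^{p-1}) ≤ u^{p-1} coordinatewise. -/
open scoped ENNReal

open Finset Filter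

private lemma deriv_nonpos_of_max_right {φ : ℝ → ℝ} {D : ℝ}
    (hφ : HasDerivAt φ D 0) (h0 : φ 0 = 0) (hle : ∀ t : ℝ, 0 ≤ t → φ t ≤ 0) : D ≤ 0 := by
  have h := hasDerivAt_iff_tendsto_slope.1 hφ
  have h' : Tendsto (slope φ 0) (nhdsWithin 0 (Set.Ioi 0)) (nhds D) :=
    h.mono_left (nhdsWithin_mono 0 (fun t ht => ne_of_gt ht))
  refine le_of_tendsto h' ?_
  filter_upwards [self_mem_nhdsWithin] with t ht
  have ht0 : (0:ℝ) < t := ht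
  rw [slope_def_field]
  have h1 : φ t ≤ 0 := hle t ht0.le
  have h2 : (φ t - φ 0) / (t - 0) ≤ 0 := by
    rw [h0, sub_zero, sub_zero]
    exact div_nonpos_of_nonpos_of_nonneg h1 ht0.le
  simpa [div_eq_inv_mul, slope_def_field] using h2

private lemma exists_supersol {r : ℝ} (hr : 1 < r) {ι κ : Type} [Fintype ι] [Fintype κ]
    [Nonempty ι] (a : κ → ι → ℝ) (ha : ∀ j i, 0 ≤ a j i)
    (hc : ∀ x : ι → ℝ, (∀ i, 0 ≤ x i) → ∑ j, (∑ i, a j i * x i) ^ r ≤ ∑ i, (x i) ^ r) :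
    ∃ v : ι → ℝ, (∀ i, 0 ≤ v i) ∧ (∃ i, 0 < v i) ∧
      ∀ i, ∑ j, a j i * (∑ i', a j i' * v i') ^ (r - 1) ≤ (v i) ^ (r - 1) := by
  classical
  have hr0 : (0:ℝ) < r := lt_trans one_pos hr
  have hrne : r ≠ 0 := ne_of_gt hr0
  let f : (ι → ℝ) → ℝ := fun x => ∑ j, (∑ i, a j i * x i) ^ r
  let S : Set (ι → ℝ) := {x | (∀ i, 0 ≤ x i) ∧ ∑ i, (x i) ^ r = 1}
  have hrpowcont : Continuous (fun y : ℝ => y ^ r) := Real.continuous_rpow_const hr0.le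
  have hfc : Continuous f := continuous_finset_sum _ fun j _ =>
    hrpowcont.comp (continuous_finset_sum _ fun i _ => continuous_const.mul (continuous_apply i))
  -- S nonempty
  obtain ⟨i₀⟩ := ‹Nonempty ι›
  have hx₀ : (Pi.single i₀ 1 : ι → ℝ) ∈ S := by
    constructor
    · intro i
      rcases eq_or_ne i i₀ with h | h
      · subst h; simp
      · simp [Pi.single_eq_of_ne h]
    · rw [Finset.sum_eq_single i₀]
      · simp
      · intro b _ hb
        rw [Pi.single_eq_of_ne hb, Real.zero_rpow hrne]
      · intro h; exact absurd (mem_univ i₀) h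
  -- S compact
  have hSclosed : IsClosed S := by
    have hSeq : S = {x : ι → ℝ | ∀ i, 0 ≤ x i} ∩ {x : ι → ℝ | ∑ i, (x i) ^ r = 1} := rfl
    rw [hSeq]
    refine IsClosed.inter ?_ ?_
    · have : {x : ι → ℝ | ∀ i, 0 ≤ x i} = ⋂ i, (fun x : ι → ℝ => x i) ⁻¹' Set.Ici 0 := by
        ext x; simp [Set.mem_iInter]
      rw [this]; exact isClosed_iInter fun i => isClosed_Ici.preimage (continuous_apply i)
    · exact isClosed_eq (continuous_finset_sum _ fun i _ =>
        hrpowcont.comp (continuous_apply i)) continuous_const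
  have hSb : Bornology.IsBounded S := by
    apply (Metric.isBounded_closedBall (x := (0 : ι → ℝ)) (r := 1)).subset
    rintro x ⟨hxnn, hxsum⟩
    rw [Metric.mem_closedBall, dist_zero_right]
    refine (pi_norm_le_iff_of_nonneg zero_le_one).2 fun i => ?_
    rw [Real.norm_eq_abs, abs_of_nonneg (hxnn i)]
    by_contra h; push_neg at h
    have h1 : (1:ℝ) < (x i) ^ r := by
      calc (1:ℝ) = 1 ^ r := (Real.one_rpow r).symm
      _ < (x i) ^ r := Real.rpow_lt_rpow zero_le_one h hr0
    have h2 : (x i) ^ r ≤ ∑ l, (x l) ^ r :=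
      Finset.single_le_sum (f := fun l => (x l) ^ r)
        (fun l _ => Real.rpow_nonneg (hxnn l) r) (mem_univ i)
    rw [hxsum] at h2
    linarith
  obtain ⟨v, hvS, hmax⟩ := (Metric.isCompact_of_isClosed_isBounded hSclosed hSb).exists_isMaxOn
    ⟨_, hx₀⟩ hfc.continuousOn
  obtain ⟨hvnn, hgv⟩ := hvS
  have hAvnn : ∀ j, 0 ≤ ∑ i', a j i' * v i' :=
    fun j => Finset.sum_nonneg fun i' _ => mul_nonneg (ha j i') (hvnn i')
  set lam : ℝ := ∑ j, (∑ i, a j i * v i) ^ r with hlam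
  have hlam1 : lam ≤ 1 := le_of_le_of_eq (hc v hvnn) hgv
  -- key homogeneity bound
  have key : ∀ y : ι → ℝ, (∀ i, 0 ≤ y i) →
      ∑ j, (∑ i, a j i * y i) ^ r ≤ lam * ∑ i, (y i) ^ r := by
    intro y hy
    have hgy0 : 0 ≤ ∑ i, (y i) ^ r := Finset.sum_nonneg fun i _ => Real.rpow_nonneg (hy i) r
    rcases eq_or_lt_of_le hgy0 with h0 | hpos
    · have hy0 : ∀ i, y i = 0 := by
        intro i
        by_contra hne
        have hyi : 0 < y i := lt_of_le_of_ne (hy i) (Ne.symm hne)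
        have h1 : 0 < (y i) ^ r := Real.rpow_pos_of_pos hyi r
        have h2 : (y i) ^ r ≤ ∑ l, (y l) ^ r :=
          Finset.single_le_sum (f := fun l => (y l) ^ r)
            (fun l _ => Real.rpow_nonneg (hy l) r) (mem_univ i)
        rw [← h0] at h2
        linarith
      have hfy : ∑ j, (∑ i, a j i * y i) ^ r = 0 := by
        apply Finset.sum_eq_zero
        intro j _
        have : ∑ i, a j i * y i = 0 := by
          apply Finset.sum_eq_zero; intro i _; rw [hy0 i, mul_zero]
        rw [this, Real.zero_rpow hrne]
      rw [hfy, ← h0, mul_zero]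
    · set c : ℝ := (∑ i, (y i) ^ r) ^ (1/r) with hcdef
      have hc0 : 0 < c := Real.rpow_pos_of_pos hpos _
      have hcr : c ^ r = ∑ i, (y i) ^ r := by
        rw [hcdef, ← Real.rpow_mul hpos.le, one_div_mul_cancel hrne, Real.rpow_one]
      have hxnn : ∀ i, 0 ≤ c⁻¹ * y i := fun i => mul_nonneg (inv_nonneg.2 hc0.le) (hy i)
      have hxS : (fun i => c⁻¹ * y i) ∈ S := by
        refine ⟨hxnn, ?_⟩
        have heach : ∀ i, (c⁻¹ * y i) ^ r = c⁻¹ ^ r * (y i) ^ r := fun i =>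
          Real.mul_rpow (inv_nonneg.2 hc0.le) (hy i)
        show (∑ i, (c⁻¹ * y i) ^ r) = 1
        simp_rw [heach]
        rw [← Finset.mul_sum, Real.inv_rpow hc0.le, hcr]
        exact inv_mul_cancel₀ (ne_of_gt hpos)
      have hfy : ∑ j, (∑ i, a j i * y i) ^ r = c ^ r * ∑ j, (∑ i, a j i * (c⁻¹ * y i)) ^ r := by
        rw [Finset.mul_sum]
        apply Finset.sum_congr rfl
        intro j _
        have h1 : ∑ i, a j i * (c⁻¹ * y i) = c⁻¹ * ∑ i, a j i * y i := by
          rw [Finset.mul_sum]; apply Finset.sum_congr rfl; intro i _; ring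
        rw [h1, Real.mul_rpow (inv_nonneg.2 hc0.le)
          (Finset.sum_nonneg fun i _ => mul_nonneg (ha j i) (hy i)),
          Real.inv_rpow hc0.le, ← mul_assoc, mul_inv_cancel₀ (by rw [hcr]; exact ne_of_gt hpos),
          one_mul]
      have hmaxx : ∑ j, (∑ i, a j i * (c⁻¹ * y i)) ^ r ≤ lam := hmax hxS
      calc ∑ j, (∑ i, a j i * y i) ^ r
          = c ^ r * ∑ j, (∑ i, a j i * (c⁻¹ * y i)) ^ r := hfy
        _ ≤ c ^ r * lam := mul_le_mul_of_nonneg_left hmaxx (Real.rpow_nonneg hc0.le r)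
        _ = lam * ∑ i, (y i) ^ r := by rw [hcr, mul_comm]
  refine ⟨v, hvnn, ?_, ?_⟩
  · by_contra h
    push_neg at h
    have hv0 : ∀ i, v i = 0 := fun i => le_antisymm (h i) (hvnn i)
    have hzero : ∑ i, (v i) ^ r = 0 := by
      apply Finset.sum_eq_zero; intro i _; rw [hv0 i, Real.zero_rpow hrne]
    rw [hgv] at hzero; exact one_ne_zero hzero
  · intro i
    set Av : κ → ℝ := fun j => ∑ i', a j i' * v i' with hAvdef
    set φ : ℝ → ℝ := fun t => (∑ j, (Av j + t * a j i) ^ r)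
      - lam * (∑ l, (v l + t * (if l = i then (1:ℝ) else 0)) ^ r) with hφdef
    have hinnersum : ∀ (t : ℝ) (j : κ),
        ∑ l, a j l * (v l + t * (if l = i then (1:ℝ) else 0)) = Av j + t * a j i := by
      intro t j
      have hterm : ∀ l, a j l * (v l + t * (if l = i then (1:ℝ) else 0))
          = a j l * v l + t * (a j l * (if l = i then (1:ℝ) else 0)) := fun l => by ring
      simp_rw [hterm]
      rw [Finset.sum_add_distrib, ← Finset.mul_sum]
      congr 1
      rw [Finset.sum_eq_single i]
      · simp
      · intro b _ hb; simp [hb]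
      · intro h; exact absurd (mem_univ i) h
    have hφle : ∀ t, 0 ≤ t → φ t ≤ 0 := by
      intro t ht
      have hynn : ∀ l, 0 ≤ v l + t * (if l = i then (1:ℝ) else 0) := fun l =>
        add_nonneg (hvnn l) (mul_nonneg ht (by split <;> norm_num))
      have h1 := key (fun l => v l + t * (if l = i then (1:ℝ) else 0)) hynn
      rw [hφdef]
      have h2 : ∑ j, (∑ l, a j l * (v l + t * (if l = i then (1:ℝ) else 0))) ^ r
          = ∑ j, (Av j + t * a j i) ^ r := by
        apply Finset.sum_congr rfl
        intro j _
        rw [hinnersum t j]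
      rw [h2] at h1
      simp only []
      linarith
    have hφ0 : φ 0 = 0 := by
      rw [hφdef]
      simp only []
      have h1 : ∀ j, Av j + 0 * a j i = Av j := fun j => by ring
      have h2 : ∀ l, v l + 0 * (if l = i then (1:ℝ) else 0) = v l := fun l => by ring
      simp_rw [h1, h2]
      rw [hgv, mul_one, hlam, sub_self]
    have hD : HasDerivAt φ ((∑ j, r * (Av j) ^ (r-1) * a j i)
        - lam * (∑ l, r * (v l) ^ (r-1) * (if l = i then (1:ℝ) else 0))) 0 := by
      have hpart : ∀ (c d : ℝ), HasDerivAt (fun t : ℝ => (c + t * d) ^ r)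
          (r * c ^ (r-1) * d) 0 := by
        intro c d
        have hinner : HasDerivAt (fun t : ℝ => c + t * d) d 0 := by
          simpa using ((hasDerivAt_id (0:ℝ)).mul_const d).const_add c
        have houter : HasDerivAt (fun y : ℝ => y ^ r)
            (r * ((fun t : ℝ => c + t * d) 0) ^ (r-1)) ((fun t : ℝ => c + t * d) 0) :=
          Real.hasDerivAt_rpow_const (Or.inr hr.le)
        have hcomp := houter.comp 0 hinner
        have : (fun t : ℝ => c + t * d) 0 = c := by simp
        rw [this] at hcomp
        simpa [Function.comp_def, mul_assoc] using hcomp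
      have h1 : HasDerivAt (fun t : ℝ => ∑ j, (Av j + t * a j i) ^ r)
          (∑ j, r * (Av j) ^ (r-1) * a j i) 0 :=
        HasDerivAt.fun_sum fun j _ => hpart (Av j) (a j i)
      have h2 : HasDerivAt (fun t : ℝ => ∑ l, (v l + t * (if l = i then (1:ℝ) else 0)) ^ r)
          (∑ l, r * (v l) ^ (r-1) * (if l = i then (1:ℝ) else 0)) 0 :=
        HasDerivAt.fun_sum fun l _ => hpart (v l) _
      exact h1.sub (h2.const_mul lam)
    have hDle := deriv_nonpos_of_max_right hD hφ0 hφle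
    have hsum2 : (∑ l, r * (v l) ^ (r-1) * (if l = i then (1:ℝ) else 0)) = r * (v i) ^ (r-1) := by
      rw [Finset.sum_eq_single i]
      · simp
      · intro b _ hb; simp [hb]
      · intro h; exact absurd (mem_univ i) h
    rw [hsum2] at hDle
    have hsum1 : (∑ j, r * (Av j) ^ (r-1) * a j i) = r * ∑ j, a j i * (Av j) ^ (r-1) := by
      rw [Finset.mul_sum]; apply Finset.sum_congr rfl; intro j _; ring
    rw [hsum1] at hDle
    have hstep : ∑ j, a j i * (Av j) ^ (r-1) ≤ lam * (v i) ^ (r-1) := by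
      nlinarith [Real.rpow_nonneg (hvnn i) (r-1)]
    calc ∑ j, a j i * (Av j) ^ (r-1) ≤ lam * (v i) ^ (r-1) := hstep
      _ ≤ 1 * (v i) ^ (r-1) :=
        mul_le_mul_of_nonneg_right hlam1 (Real.rpow_nonneg (hvnn i) (r-1))
      _ = (v i) ^ (r-1) := one_mul _

private lemma core_lemma {r : ℝ} (hr : 1 < r) :
    ∀ (N : ℕ) (ι κ : Type) [Fintype ι] [Fintype κ], Fintype.card ι ≤ N →
      ∀ (a : κ → ι → ℝ), (∀ j i, 0 ≤ a j i) →
      (∀ x : ι → ℝ, (∀ i, 0 ≤ x i) → ∑ j, (∑ i, a j i * x i) ^ r ≤ ∑ i, (x i) ^ r) →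
      ∃ u : ι → ℝ, (∀ i, 0 < u i) ∧
        ∀ i, ∑ j, a j i * (∑ i', a j i' * u i') ^ (r - 1) ≤ (u i) ^ (r - 1) := by
  have hr0 : (0:ℝ) < r := lt_trans one_pos hr
  have hrne : r ≠ 0 := ne_of_gt hr0
  have hr1 : (0:ℝ) < r - 1 := by linarith
  have hr1ne : r - 1 ≠ 0 := ne_of_gt hr1
  intro N
  induction N with
  | zero =>
    intro ι κ _ _ hcard a ha hc
    have hempty : IsEmpty ι := Fintype.card_eq_zero_iff.mp (Nat.le_zero.mp hcard)
    exact ⟨fun _ => 1, fun i => isEmptyElim i, fun i => isEmptyElim i⟩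
  | succ N IH =>
    intro ι κ _ _ hcard a ha hc
    classical
    by_cases hempty : IsEmpty ι
    · exact ⟨fun _ => 1, fun i => isEmptyElim i, fun i => isEmptyElim i⟩
    have hne : Nonempty ι := not_isEmpty_iff.mp hempty
    obtain ⟨v, hvnn, ⟨i₀, hvi₀⟩, hvsup⟩ := exists_supersol hr a ha hc
    by_cases hpos : ∀ i, 0 < v i
    · exact ⟨v, hpos, hvsup⟩
    have hAvnn : ∀ j, 0 ≤ ∑ i', a j i' * v i' :=
      fun j => Finset.sum_nonneg fun i' _ => mul_nonneg (ha j i') (hvnn i')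
    -- dagger facts
    have hdag : ∀ i, v i = 0 → ∀ j, (∑ i', a j i' * v i') ≠ 0 → a j i = 0 := by
      intro i hvi j hAj
      have h1 := hvsup i
      rw [hvi, Real.zero_rpow hr1ne] at h1
      have hterms : ∀ j' ∈ Finset.univ (α := κ), 0 ≤ a j' i * (∑ i', a j' i' * v i') ^ (r-1) :=
        fun j' _ => mul_nonneg (ha j' i) (Real.rpow_nonneg (hAvnn j') _)
      have hsum0 : ∑ j', a j' i * (∑ i', a j' i' * v i') ^ (r-1) = 0 :=
        le_antisymm h1 (Finset.sum_nonneg hterms)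
      have heach := (Finset.sum_eq_zero_iff_of_nonneg hterms).mp hsum0 j (mem_univ j)
      have hApos : 0 < (∑ i', a j i' * v i') := lt_of_le_of_ne (hAvnn j) (Ne.symm hAj)
      have hp2 : 0 < (∑ i', a j i' * v i') ^ (r-1) := Real.rpow_pos_of_pos hApos _
      rcases mul_eq_zero.mp heach with h | h
      · exact h
      · exact absurd h (ne_of_gt hp2)
    have hdag2 : ∀ j, (∑ i', a j i' * v i') = 0 → ∀ i, v i ≠ 0 → a j i = 0 := by
      intro j hj i hvi
      have hterms : ∀ i' ∈ Finset.univ (α := ι), 0 ≤ a j i' * v i' :=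
        fun i' _ => mul_nonneg (ha j i') (hvnn i')
      have heach := (Finset.sum_eq_zero_iff_of_nonneg hterms).mp hj i (mem_univ i)
      have hvpos : 0 < v i := lt_of_le_of_ne (hvnn i) (Ne.symm hvi)
      rcases mul_eq_zero.mp heach with h | h
      · exact h
      · exact absurd h (ne_of_gt hvpos)
    -- subtype sum helpers
    have helper1 : ∀ (F : ι → ℝ), (∀ i, ¬ (v i = 0) → F i = 0) →
        ∑ i, F i = ∑ i' : {i : ι // v i = 0}, F i'.1 := by
      intro F hF
      rw [← Finset.sum_filter_add_sum_filter_not Finset.univ (fun i => v i = 0) F]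
      have hzero : ∑ i ∈ Finset.univ.filter (fun i => ¬ (v i = 0)), F i = 0 :=
        Finset.sum_eq_zero fun i hi => hF i (Finset.mem_filter.mp hi).2
      rw [hzero, add_zero]
      exact Finset.sum_subtype (Finset.univ.filter (fun i => v i = 0)) (by simp) F
    have helper2 : ∀ (G : κ → ℝ), (∀ j, ¬ ((∑ i', a j i' * v i') = 0) → G j = 0) →
        ∑ j, G j = ∑ j' : {j : κ // (∑ i', a j i' * v i') = 0}, G j'.1 := by
      intro G hG
      rw [← Finset.sum_filter_add_sum_filter_not Finset.univ
        (fun j => (∑ i', a j i' * v i') = 0) G]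
      have hzero : ∑ j ∈ Finset.univ.filter (fun j => ¬ ((∑ i', a j i' * v i') = 0)), G j = 0 :=
        Finset.sum_eq_zero fun j hj => hG j (Finset.mem_filter.mp hj).2
      rw [hzero, add_zero]
      exact Finset.sum_subtype _ (by simp) G
    -- cardinality
    have hcard' : Fintype.card {i : ι // v i = 0} ≤ N := by
      have hlt : Fintype.card {i : ι // v i = 0} < Fintype.card ι :=
        Fintype.card_subtype_lt (x := i₀) (by intro h; rw [h] at hvi₀; exact lt_irrefl 0 hvi₀)
      omega
    -- contraction for restricted matrix
    have hc' : ∀ x : {i : ι // v i = 0} → ℝ, (∀ i, 0 ≤ x i) →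
        ∑ j : {j : κ // (∑ i', a j i' * v i') = 0},
          (∑ i : {i : ι // v i = 0}, a j.1 i.1 * x i) ^ r
          ≤ ∑ i : {i : ι // v i = 0}, (x i) ^ r := by
      intro x hx
      have hXnn : ∀ i, 0 ≤ (if h : v i = 0 then x ⟨i, h⟩ else 0) := by
        intro i; split
        · exact hx _
        · exact le_rfl
      have hXnP : ∀ i, ¬ (v i = 0) → (if h : v i = 0 then x ⟨i, h⟩ else 0) = 0 :=
        fun i h => dif_neg h
      have hrow : ∀ j : κ, ¬ ((∑ i', a j i' * v i') = 0) →
          ∑ i, a j i * (if h : v i = 0 then x ⟨i, h⟩ else 0) = 0 := by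
        intro j hj
        apply Finset.sum_eq_zero
        intro i _
        by_cases h : v i = 0
        · rw [hdag i h j hj, zero_mul]
        · rw [hXnP i h, mul_zero]
      have hinner : ∀ j : {j : κ // (∑ i', a j i' * v i') = 0},
          ∑ i, a j.1 i * (if h : v i = 0 then x ⟨i, h⟩ else 0)
            = ∑ i' : {i : ι // v i = 0}, a j.1 i'.1 * x i' := by
        intro j
        rw [helper1 (fun i => a j.1 i * (if h : v i = 0 then x ⟨i, h⟩ else 0))
          (fun i h => by beta_reduce; rw [hXnP i h, mul_zero])]
        apply Finset.sum_congr rfl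
        intro i' _
        beta_reduce
        rw [dif_pos i'.2]
      have hmain := hc (fun i => if h : v i = 0 then x ⟨i, h⟩ else 0) hXnn
      have hL : ∑ j, (∑ i, a j i * (if h : v i = 0 then x ⟨i, h⟩ else 0)) ^ r
          = ∑ j' : {j : κ // (∑ i', a j i' * v i') = 0},
              (∑ i' : {i : ι // v i = 0}, a j'.1 i'.1 * x i') ^ r := by
        rw [helper2 (fun j => (∑ i, a j i * (if h : v i = 0 then x ⟨i, h⟩ else 0)) ^ r)
          (fun j h => by beta_reduce; rw [hrow j h, Real.zero_rpow hrne])]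
        exact Finset.sum_congr rfl fun j' _ => by rw [hinner j']
      have hR : ∑ i, (if h : v i = 0 then x ⟨i, h⟩ else 0) ^ r
          = ∑ i' : {i : ι // v i = 0}, (x i') ^ r := by
        rw [helper1 (fun i => (if h : v i = 0 then x ⟨i, h⟩ else 0) ^ r)
          (fun i h => by beta_reduce; rw [hXnP i h, Real.zero_rpow hrne])]
        apply Finset.sum_congr rfl
        intro i' _
        beta_reduce
        rw [dif_pos i'.2]
      beta_reduce at hmain
      rw [hL, hR] at hmain
      exact hmain
    obtain ⟨w, hwpos, hwsup⟩ := IH {i : ι // v i = 0} {j : κ // (∑ i', a j i' * v i') = 0}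
      hcard' (fun j i => a j.1 i.1) (fun j i => ha j.1 i.1) hc'
    refine ⟨fun i => if h : v i = 0 then w ⟨i, h⟩ else v i, ?_, ?_⟩
    · intro i
      beta_reduce
      by_cases h : v i = 0
      · rw [dif_pos h]; exact hwpos _
      · rw [dif_neg h]; exact lt_of_le_of_ne (hvnn i) (Ne.symm h)
    · intro i
      beta_reduce
      have hAu : ∀ j : κ, (∑ i', a j i' * v i') ≠ 0 →
          (∑ i', a j i' * (if h : v i' = 0 then w ⟨i', h⟩ else v i')) = ∑ i', a j i' * v i' := by
        intro j hj
        apply Finset.sum_congr rfl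
        intro i' _
        by_cases h : v i' = 0
        · rw [hdag i' h j hj, zero_mul, zero_mul]
        · rw [dif_neg h]
      have hAu2 : ∀ j : {j : κ // (∑ i', a j i' * v i') = 0},
          (∑ i', a j.1 i' * (if h : v i' = 0 then w ⟨i', h⟩ else v i'))
            = ∑ i' : {i : ι // v i = 0}, a j.1 i'.1 * w i' := by
        intro j
        rw [helper1 (fun i' => a j.1 i' * (if h : v i' = 0 then w ⟨i', h⟩ else v i'))
          (fun i' h => by beta_reduce; rw [dif_neg h, hdag2 j.1 j.2 i' h, zero_mul])]
        apply Finset.sum_congr rfl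
        intro i' _
        beta_reduce
        rw [dif_pos i'.2]
      by_cases h : v i = 0
      · rw [helper2 (fun j => a j i *
            (∑ i', a j i' * (if h : v i' = 0 then w ⟨i', h⟩ else v i')) ^ (r-1))
          (fun j hj => by beta_reduce; rw [hdag i h j hj, zero_mul])]
        have hcongr : ∀ j' ∈ Finset.univ (α := {j : κ // (∑ i', a j i' * v i') = 0}),
            a j'.1 i * (∑ i', a j'.1 i' * (if h : v i' = 0 then w ⟨i', h⟩ else v i')) ^ (r-1)
              = a j'.1 i * (∑ i' : {i : ι // v i = 0}, a j'.1 i'.1 * w i') ^ (r-1) := by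
          intro j' _
          rw [hAu2 j']
        rw [Finset.sum_congr rfl hcongr, dif_pos h]
        exact hwsup ⟨i, h⟩
      · have hcongr : ∀ j ∈ Finset.univ (α := κ),
            a j i * (∑ i', a j i' * (if h : v i' = 0 then w ⟨i', h⟩ else v i')) ^ (r-1)
              = a j i * (∑ i', a j i' * v i') ^ (r-1) := by
          intro j _
          by_cases hj : (∑ i', a j i' * v i') = 0
          · rw [hdag2 j hj i h, zero_mul, zero_mul]
          · rw [hAu j hj]
        rw [Finset.sum_congr rfl hcongr, dif_neg h]
        exact hvsup i

/-- Let `E = l^p_n`, `1 < p < ∞`, and `T : E → E` a positive contraction.  Then there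
exists `u ∈ E⁺` with all coordinates strictly positive such that
`M(u) = T*((Tu)^{p-1}) ≤ u^{p-1}` coordinatewise. -/
theorem exists_strictly_positive_subinvariant
    {n : ℕ} (p : ℝ≥0∞) [Fact (1 ≤ p)] (hp1 : 1 < p) (hp2 : p ≠ ∞)
    (T : PiLp p (fun _ : Fin n => ℝ) →L[ℝ] PiLp p (fun _ : Fin n => ℝ))
    (hTpos : ∀ x : PiLp p (fun _ : Fin n => ℝ), (∀ i, 0 ≤ x i) → ∀ i, 0 ≤ T x i)
    (hTcontr : ‖T‖ ≤ 1) :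
    ∃ u : PiLp p (fun _ : Fin n => ℝ), (∀ i, 0 < u i) ∧
      ∀ i, ∑ j, T ((WithLp.equiv p (Fin n → ℝ)).symm (Pi.single i 1)) j
          * (T u j) ^ (p.toReal - 1)
        ≤ (u i) ^ (p.toReal - 1) := by
  classical
  have hr : 1 < p.toReal := by
    have h := (ENNReal.toReal_lt_toReal (a := 1) (b := p) (by simp) hp2).mpr hp1
    simpa using h
  have hr0 : (0:ℝ) < p.toReal := lt_trans one_pos hr
  have hrne : p.toReal ≠ 0 := ne_of_gt hr0
  set E := PiLp p (fun _ : Fin n => ℝ) with hE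
  let e : Fin n → E := fun i => (WithLp.equiv p (Fin n → ℝ)).symm (Pi.single i 1)
  let a : Fin n → Fin n → ℝ := fun j i => T (e i) j
  have he : ∀ (i l : Fin n), e i l = Pi.single (M := fun _ : Fin n => ℝ) i 1 l := fun i l => rfl
  have hsmul : ∀ (c : ℝ) (y : E) (l : Fin n), (c • y) l = c * y l := fun _ _ _ => rfl
  have ha : ∀ j i, 0 ≤ a j i := by
    intro j i
    apply hTpos
    intro l
    rw [he]
    rcases eq_or_ne l i with h | h
    · subst h; simp
    · rw [Pi.single_eq_of_ne h]
  -- pointwise application of sums in PiLp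
  have hsum_apply : ∀ (s : Finset (Fin n)) (f : Fin n → E) (l : Fin n),
      (∑ i ∈ s, f i) l = ∑ i ∈ s, f i l := by
    intro s f
    induction s using Finset.induction_on with
    | empty => intro l; simp
    | insert _ _ hnotmem ih =>
        intro l
        rw [Finset.sum_insert hnotmem, Finset.sum_insert hnotmem, ← ih l]
        rfl
  have hTapply : ∀ (x : E) (j : Fin n), T x j = ∑ i, a j i * x i := by
    intro x j
    have hx : x = ∑ i, x i • e i := by
      refine PiLp.ext fun l => ?_
      rw [hsum_apply]
      rw [Finset.sum_eq_single l]
      · rw [hsmul, he]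
        simp
      · intro b _ hb
        rw [hsmul, he, Pi.single_eq_of_ne (Ne.symm hb), mul_zero]
      · intro h; exact absurd (Finset.mem_univ l) h
    have h1 : T x = ∑ i, x i • T (e i) := by
      conv_lhs => rw [hx]
      rw [map_sum]
      exact Finset.sum_congr rfl fun i _ => T.map_smul (x i) (e i)
    rw [h1, hsum_apply]
    exact Finset.sum_congr rfl fun i _ => mul_comm (x i) (T (e i) j)
  -- contraction in coordinates
  have hcontr : ∀ x : Fin n → ℝ, (∀ i, 0 ≤ x i) →
      ∑ j, (∑ i, a j i * x i) ^ p.toReal ≤ ∑ i, (x i) ^ p.toReal := by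
    intro x hx
    set X : E := (WithLp.equiv p (Fin n → ℝ)).symm x with hX
    have hXi : ∀ i, X i = x i := fun i => rfl
    have hXnn : ∀ i, 0 ≤ X i := fun i => hx i
    have hnorm : ‖T X‖ ≤ ‖X‖ := by
      calc ‖T X‖ ≤ ‖T‖ * ‖X‖ := T.le_opNorm X
        _ ≤ 1 * ‖X‖ := mul_le_mul_of_nonneg_right hTcontr (norm_nonneg X)
        _ = ‖X‖ := one_mul _
    have h1 : ‖T X‖ = (∑ j, ‖T X j‖ ^ p.toReal) ^ (1 / p.toReal) := PiLp.norm_eq_sum hr0 (T X)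
    have h2 : ‖X‖ = (∑ i, ‖X i‖ ^ p.toReal) ^ (1 / p.toReal) := PiLp.norm_eq_sum hr0 X
    have hs1 : 0 ≤ ∑ j, ‖T X j‖ ^ p.toReal :=
      Finset.sum_nonneg fun j _ => Real.rpow_nonneg (norm_nonneg _) _
    have hs2 : 0 ≤ ∑ i, ‖X i‖ ^ p.toReal :=
      Finset.sum_nonneg fun i _ => Real.rpow_nonneg (norm_nonneg _) _
    have h3 : ∑ j, ‖T X j‖ ^ p.toReal ≤ ∑ i, ‖X i‖ ^ p.toReal := by
      have h4 := Real.rpow_le_rpow (norm_nonneg (T X)) hnorm hr0.le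
      rw [h1, h2, ← Real.rpow_mul hs1, ← Real.rpow_mul hs2, one_div_mul_cancel hrne,
        Real.rpow_one, Real.rpow_one] at h4
      exact h4
    have hL : ∀ j, ‖T X j‖ = ∑ i, a j i * x i := by
      intro j
      rw [Real.norm_eq_abs, abs_of_nonneg (hTpos X hXnn j), hTapply X j]
      exact Finset.sum_congr rfl fun i _ => by rw [hXi]
    have hR : ∀ i, ‖X i‖ = x i := by
      intro i; rw [Real.norm_eq_abs, abs_of_nonneg (hXnn i), hXi]
    calc ∑ j, (∑ i, a j i * x i) ^ p.toReal = ∑ j, ‖T X j‖ ^ p.toReal := by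
          exact Finset.sum_congr rfl fun j _ => by rw [hL j]
      _ ≤ ∑ i, ‖X i‖ ^ p.toReal := h3
      _ = ∑ i, (x i) ^ p.toReal := Finset.sum_congr rfl fun i _ => by rw [hR i]
  obtain ⟨u, hupos, husup⟩ := core_lemma hr n (Fin n) (Fin n) (le_of_eq (Fintype.card_fin n))
    a ha hcontr
  set U : E := (WithLp.equiv p (Fin n → ℝ)).symm u with hU
  have hUi : ∀ i, U i = u i := fun i => rfl
  refine ⟨U, fun i => hupos i, ?_⟩
  intro i
  have hTe : ∀ j, T ((WithLp.equiv p (Fin n → ℝ)).symm (Pi.single i 1)) j = a j i := fun j => rfl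
  have hTU : ∀ j, T U j = ∑ i', a j i' * u i' := by
    intro j
    rw [hTapply U j]
    exact Finset.sum_congr rfl fun i' _ => by rw [hUi]
  calc ∑ j, T ((WithLp.equiv p (Fin n → ℝ)).symm (Pi.single i 1)) j * (T U j) ^ (p.toReal - 1)
      = ∑ j, a j i * (∑ i', a j i' * u i') ^ (p.toReal - 1) :=
        Finset.sum_congr rfl fun j _ => by rw [hTe j, hTU j]
    _ ≤ (u i) ^ (p.toReal - 1) := husup i
    _ = (U i) ^ (p.toReal - 1) := by rw [hUi]
end

section
/- Let (A, ≤) be a directed partially ordered set. Then there exists a multiplicative linear functional LIM on l^∞(A;ℂ) such that for every real-valued f ∈ l^∞(A;ℝ): liminf_{α∈A} f(α) ≤ LIM(f) ≤ limsup_{α∈A} f(α), where liminf_{α} f(α) = sup_β inf_{α≥β} f(α) and limsup is defined dually. -/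
set_option maxHeartbeats 1000000
set_option synthInstance.maxHeartbeats 400000

open Filter Topology
open scoped ENNReal

/-- On a directed partially ordered set `A`, there exists a multiplicative linear
functional `LIM` on `l^∞(A;ℂ)` such that for every real-valued bounded function `f`,
`liminf_{α} f(α) ≤ LIM f ≤ limsup_{α} f(α)` (the limits taken along the directedness
filter `atTop`). -/
theorem exists_multiplicative_banach_limit
    (A : Type*) [PartialOrder A] [IsDirected A (· ≤ ·)] [Nonempty A] :
    ∃ LIM : lp (fun _ : A => ℂ) ∞ →ₐ[ℂ] ℂ,
      ∀ f : lp (fun _ : A => ℂ) ∞, (∀ a, (f a).im = 0) →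
        (LIM f).im = 0 ∧
        liminf (fun a => (f a).re) atTop ≤ (LIM f).re ∧
        (LIM f).re ≤ limsup (fun a => (f a).re) atTop := by
  have hne : (atTop : Filter A).NeBot := atTop_neBot_iff.2 ⟨‹_›, ‹_›⟩
  set U : Ultrafilter A := Ultrafilter.of atTop with hU
  have hUle : (U : Filter A) ≤ atTop := Ultrafilter.of_le _
  have hbound : ∀ (f : lp (fun _ : A => ℂ) ∞) (a : A), ‖f a‖ ≤ ‖f‖ := fun f a =>
    lp.norm_apply_le_norm ENNReal.top_ne_zero f a
  -- every bounded function converges along U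
  have key : ∀ f : lp (fun _ : A => ℂ) ∞, ∃ c : ℂ,
      Tendsto (fun a => f a) (U : Filter A) (𝓝 c) := by
    intro f
    have hcompact : IsCompact (Metric.closedBall (0 : ℂ) ‖f‖) :=
      isCompact_closedBall _ _
    have hmem : ∀ᶠ a in (U : Filter A), f a ∈ Metric.closedBall (0 : ℂ) ‖f‖ := by
      filter_upwards with a
      simpa [Metric.mem_closedBall, dist_eq_norm] using hbound f a
    obtain ⟨c, _, hc⟩ := hcompact.ultrafilter_le_nhds (U.map fun a => f a)
      (by rw [Ultrafilter.coe_map]; exact le_principal_iff.2 (mem_map.2 hmem))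
    exact ⟨c, hc⟩
  choose L hL using key
  have huniq : ∀ (f : lp (fun _ : A => ℂ) ∞) (c : ℂ),
      Tendsto (fun a => f a) (U : Filter A) (𝓝 c) → L f = c := fun f c hc =>
    tendsto_nhds_unique (hL f) hc
  refine ⟨{ toFun := L
            map_one' := huniq 1 1 (by
              have h1 : (fun a => (1 : lp (fun _ : A => ℂ) ∞) a) = fun _ : A => (1 : ℂ) := by
                ext a; exact congrFun (lp.infty_coeFn_one (B := fun _ : A => ℂ)) a
              rw [h1]; exact tendsto_const_nhds)
            map_mul' := fun f g => huniq (f * g) (L f * L g) (by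
              have h1 : (fun a => (f * g) a) = fun a => f a * g a := by
                ext a; exact congrFun (lp.infty_coeFn_mul f g) a
              rw [h1]; exact (hL f).mul (hL g))
            map_zero' := huniq 0 0 (by
              have h1 : (fun a => (0 : lp (fun _ : A => ℂ) ∞) a) = fun _ : A => (0 : ℂ) := by
                ext a; exact congrFun (lp.coeFn_zero (fun _ : A => ℂ) ∞) a
              rw [h1]; exact tendsto_const_nhds)
            map_add' := fun f g => huniq (f + g) (L f + L g) (by
              have h1 : (fun a => (f + g) a) = fun a => f a + g a := by
                ext a; exact congrFun (lp.coeFn_add f g) a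
              rw [h1]; exact (hL f).add (hL g))
            commutes' := fun c => huniq _ c (by
              have h1 : (fun a => (algebraMap ℂ (lp (fun _ : A => ℂ) ∞) c) a) = fun _ : A => c := rfl
              rw [h1]; exact tendsto_const_nhds) }, ?_⟩
  intro f hf
  have hre : Tendsto (fun a => (f a).re) (U : Filter A) (𝓝 (L f).re) :=
    (Complex.continuous_re.continuousAt).tendsto.comp (hL f)
  have him : Tendsto (fun a => (f a).im) (U : Filter A) (𝓝 (L f).im) :=
    (Complex.continuous_im.continuousAt).tendsto.comp (hL f)
  have him0 : (L f).im = 0 := by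
    have h0 : Tendsto (fun a => (f a).im) (U : Filter A) (𝓝 0) := by
      have : (fun a => (f a).im) = fun _ : A => (0 : ℝ) := by ext a; exact hf a
      rw [this]; exact tendsto_const_nhds
    exact tendsto_nhds_unique him h0
  have habs : ∀ a : A, |(f a).re| ≤ ‖f‖ := fun a =>
    (Complex.abs_re_le_norm (f a)).trans
      (by simpa using hbound f a)
  have hbddabove : IsBoundedUnder (· ≤ ·) atTop (fun a => (f a).re) :=
    isBoundedUnder_of ⟨‖f‖, fun a => (le_abs_self _).trans (habs a)⟩
  have hbddbelow : IsBoundedUnder (· ≥ ·) atTop (fun a => (f a).re) :=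
    isBoundedUnder_of ⟨-‖f‖, fun a => by
      have h1 := habs a; have h2 := neg_abs_le ((f a).re); linarith⟩
  have hcob_ge : (U : Filter A).IsCoboundedUnder (· ≥ ·) (fun a => (f a).re) :=
    isCoboundedUnder_ge_of_le _ fun a => (le_abs_self _).trans (habs a)
  have hcob_le : (U : Filter A).IsCoboundedUnder (· ≤ ·) (fun a => (f a).re) :=
    isCoboundedUnder_le_of_le _ (x := -‖f‖) fun a => by
      have h1 := habs a; have h2 := neg_abs_le ((f a).re); linarith
  have hliminfU : liminf (fun a => (f a).re) (U : Filter A) = (L f).re := hre.liminf_eq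
  have hlimsupU : limsup (fun a => (f a).re) (U : Filter A) = (L f).re := hre.limsup_eq
  refine ⟨him0, ?_, ?_⟩
  · show liminf (fun a => (f a).re) atTop ≤ (L f).re
    rw [← hliminfU]
    exact liminf_le_liminf_of_le hUle hbddbelow hcob_ge
  · show (L f).re ≤ limsup (fun a => (f a).re) atTop
    rw [← hlimsupU]
    exact limsup_le_limsup_of_le hUle hcob_le hbddabove
end

section
/- An ultraproduct (with respect to a generalized Banach limit) of a net of L^p-spaces, 1 ≤ p < ∞, is itself an abstract L^p-space; that is, it is a Banach lattice in which f, g ≥ 0 with f ∧ g = 0 implies ‖f+g‖^p = ‖f‖^p + ‖g‖^p. -/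
open Filter MeasureTheory
open scoped ENNReal

/-- A function `A → ℝ` is bounded. -/
def BddFun {A : Type*} (f : A → ℝ) : Prop := ∃ C, ∀ a, |f a| ≤ C

lemma BddFun.of_le {A : Type*} {f : A → ℝ} {C : ℝ} (h : ∀ a, |f a| ≤ C) : BddFun f := ⟨C, h⟩

/-- Disjointness equality in an actual `L^p` space. -/
lemma lp_disjoint_norm_rpow {α : Type*} [MeasurableSpace α] {μ : Measure α}
    {p : ℝ≥0∞} [Fact (1 ≤ p)] (hp : p ≠ ∞) (u v : Lp ℝ p μ)
    (hu : 0 ≤ u) (hv : 0 ≤ v) (huv : u ⊓ v = 0) :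
    ‖u + v‖ ^ p.toReal = ‖u‖ ^ p.toReal + ‖v‖ ^ p.toReal := by
  have hp0 : p ≠ 0 := by
    have h1 := Fact.out (p := 1 ≤ p)
    intro h; rw [h] at h1; exact (not_le.2 zero_lt_one) h1
  have hq : 0 < p.toReal := ENNReal.toReal_pos hp0 hp
  set q := p.toReal with hqdef
  have key : ∀ h : Lp ℝ p μ,
      eLpNorm (h : α → ℝ) p μ ^ q = ∫⁻ x, (‖h x‖₊ : ℝ≥0∞) ^ q ∂μ := by
    intro h
    rw [eLpNorm_eq_eLpNorm' hp0 hp, eLpNorm', ← ENNReal.rpow_mul, one_div,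
      inv_mul_cancel₀ hq.ne', ENNReal.rpow_one]
    rfl
  have h0 : ⇑(u ⊓ v) =ᵐ[μ] 0 := by rw [huv]; exact Lp.coeFn_zero ℝ p μ
  have hae : (fun x => (‖(u + v : Lp ℝ p μ) x‖₊ : ℝ≥0∞) ^ q)
      =ᵐ[μ] fun x => (‖u x‖₊ : ℝ≥0∞) ^ q + (‖v x‖₊ : ℝ≥0∞) ^ q := by
    filter_upwards [Lp.coeFn_add u v, Lp.coeFn_inf u v, (Lp.coeFn_nonneg u).2 hu,
      (Lp.coeFn_nonneg v).2 hv, h0] with x h1 h2 h3 h4 h5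
    have hmin : u x ⊓ v x = 0 := by
      have := h2.symm.trans h5
      simpa using this
    have : u x = 0 ∨ v x = 0 := by
      rcases le_total (u x) (v x) with hle | hle
      · left; rw [inf_eq_left.2 hle] at hmin; exact hmin
      · right; rw [inf_eq_right.2 hle] at hmin; exact hmin
    rcases this with h | h
    · rw [h1, Pi.add_apply, h, zero_add]
      simp [ENNReal.zero_rpow_of_pos hq]
    · rw [h1, Pi.add_apply, h, add_zero]
      simp [ENNReal.zero_rpow_of_pos hq]
  have hmu : AEMeasurable (fun x => (‖u x‖₊ : ℝ≥0∞) ^ q) μ :=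
    ((Lp.aestronglyMeasurable u).aemeasurable.nnnorm.coe_nnreal_ennreal).pow_const q
  have hint : eLpNorm (⇑(u + v)) p μ ^ q = eLpNorm (⇑u) p μ ^ q + eLpNorm (⇑v) p μ ^ q := by
    rw [key, key, key, lintegral_congr_ae hae, lintegral_add_left' hmu]
  have hfin : ∀ h : Lp ℝ p μ, eLpNorm (⇑h) p μ ^ q ≠ ∞ :=
    fun h => (ENNReal.rpow_lt_top_of_nonneg hq.le (Lp.eLpNorm_ne_top h)).ne
  have hnorm : ∀ h : Lp ℝ p μ, ‖h‖ ^ q = (eLpNorm (⇑h) p μ ^ q).toReal := by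
    intro h
    rw [Lp.norm_def, ENNReal.toReal_rpow]
  rw [hnorm, hnorm, hnorm, hint, ENNReal.toReal_add (hfin u) (hfin v)]

/-- The ultraproduct (with respect to a generalized Banach limit `L`) of a net of
`L^p`-spaces, `1 ≤ p < ∞`, is an abstract `L^p`-space: if `f, g ≥ 0` with `f ∧ g = 0`
in the ultraproduct (i.e. `‖f ∧ g‖_LIM = 0`), then `‖f+g‖^p = ‖f‖^p + ‖g‖^p`,
where `‖h‖_LIM = L (a ↦ ‖h a‖)`. -/
theorem ultraproduct_Lp_is_abstract_Lp
    {A : Type*} [Preorder A] [IsDirected A (· ≤ ·)] [Nonempty A]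
    {Ω : A → Type*} [∀ a, MeasurableSpace (Ω a)] (μ : ∀ a, Measure (Ω a))
    (p : ℝ≥0∞) [Fact (1 ≤ p)] (hp : p ≠ ∞)
    (L : (A → ℝ) → ℝ)
    (hLadd : ∀ f g : A → ℝ, BddFun f → BddFun g → L (f + g) = L f + L g)
    (hLsmul : ∀ (c : ℝ) (f : A → ℝ), BddFun f → L (fun a => c * f a) = c * L f)
    (hLsq : ∀ f : A → ℝ, BddFun f →
      liminf f atTop ≤ L f ∧ L f ≤ limsup f atTop)
    (hLcomp : ∀ f : A → ℝ, BddFun f → ∀ u : ℝ → ℝ, Continuous u →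
      L (fun a => u (f a)) = u (L f))
    (f g : ∀ a, Lp ℝ p (μ a))
    (hfbd : ∃ C, ∀ a, ‖f a‖ ≤ C) (hgbd : ∃ C, ∀ a, ‖g a‖ ≤ C)
    (hf0 : ∀ a, 0 ≤ f a) (hg0 : ∀ a, 0 ≤ g a)
    (hdisj : L (fun a => ‖f a ⊓ g a‖) = 0) :
    (L (fun a => ‖f a + g a‖)) ^ p.toReal
      = (L (fun a => ‖f a‖)) ^ p.toReal + (L (fun a => ‖g a‖)) ^ p.toReal := by
  have hp0 : p ≠ 0 := by
    have h1 := Fact.out (p := 1 ≤ p)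
    intro h; rw [h] at h1; exact (not_le.2 zero_lt_one) h1
  have hq : 0 < p.toReal := ENNReal.toReal_pos hp0 hp
  set q := p.toReal with hqdef
  obtain ⟨Cf, hCf⟩ := hfbd
  obtain ⟨Cg, hCg⟩ := hgbd
  -- nonnegativity of L on bounded nonneg functions
  have Lnn : ∀ h : A → ℝ, BddFun h → (∀ a, 0 ≤ h a) → 0 ≤ L h := by
    intro h hb hpos
    refine le_trans ?_ (hLsq h hb).1
    obtain ⟨C, hC⟩ := hb
    have hbdd : IsBoundedUnder (· ≤ ·) (atTop : Filter A) h :=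
      isBoundedUnder_of ⟨C, fun a => (abs_le.1 (hC a)).2⟩
    exact le_liminf_of_le hbdd.isCoboundedUnder_ge (Eventually.of_forall hpos)
  -- L kills functions dominated by the disjointness witness
  set M : A → ℝ := fun a => ‖f a ⊓ g a‖ with hMdef
  have hm0 : ∀ a, 0 ≤ f a ⊓ g a := fun a => le_inf (hf0 a) (hg0 a)
  have hMleF : ∀ a, M a ≤ ‖f a‖ := by
    intro a
    refine norm_le_norm_of_abs_le_abs ?_
    rw [abs_of_nonneg (hm0 a), abs_of_nonneg (hf0 a)]
    exact inf_le_left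
  have hMnn : ∀ a, 0 ≤ M a := fun a => norm_nonneg _
  have hMbd : BddFun M := ⟨Cf, fun a => by
    rw [abs_of_nonneg (hMnn a)]; exact (hMleF a).trans (hCf a)⟩
  have hLM : L M = 0 := hdisj
  have Lzero : ∀ (c : ℝ) (d : A → ℝ), BddFun d → (∀ a, |d a| ≤ c * M a) → L d = 0 := by
    intro c d hdb0 hle
    have hcMbd : BddFun (fun a => c * M a) := by
      obtain ⟨CM, hCM⟩ := hMbd
      exact ⟨|c| * CM, fun a => by
        rw [abs_mul]
        exact mul_le_mul_of_nonneg_left (hCM a) (abs_nonneg c)⟩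
    obtain ⟨Cd, hCd⟩ := hdb0
    have hdb : BddFun d := ⟨Cd, hCd⟩
    obtain ⟨CM', hCM'⟩ := hcMbd
    have hub : BddFun (fun a => c * M a - d a) :=
      ⟨CM' + Cd, fun a => (abs_sub _ _).trans (add_le_add (hCM' a) (hCd a))⟩
    have hvb : BddFun (fun a => c * M a + d a) :=
      ⟨CM' + Cd, fun a => (abs_add_le _ _).trans (add_le_add (hCM' a) (hCd a))⟩
    have h1 : L (fun a => c * M a - d a) + L d = c * L M := by
      rw [← hLadd _ d hub hdb, ← hLsmul c M hMbd]
      congr 1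
      funext a
      simp
    have h2 : L (fun a => c * M a + d a) = c * L M + L d := by
      rw [← hLsmul c M hMbd, ← hLadd _ d ⟨CM', hCM'⟩ hdb]
      congr 1
    have hu0 : 0 ≤ L (fun a => c * M a - d a) :=
      Lnn _ hub fun a => sub_nonneg.2 ((abs_le.1 (hle a)).2)
    have hv0 : 0 ≤ L (fun a => c * M a + d a) :=
      Lnn _ hvb fun a => by
        have := (abs_le.1 (hle a)).1; linarith
    rw [hLM, mul_zero] at h1 h2
    have hd1 : L d ≤ 0 := by linarith
    have hd2 : 0 ≤ L d := by rw [h2] at hv0; linarith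
    linarith
  -- L h₁ = L h₂ when |h₁ - h₂| ≤ c * M
  have Leq : ∀ (c : ℝ) (h₁ h₂ : A → ℝ), BddFun h₁ → BddFun h₂ →
      (∀ a, |h₁ a - h₂ a| ≤ c * M a) → L h₁ = L h₂ := by
    intro c h₁ h₂ hb₁ hb₂ hle
    obtain ⟨C1, hC1⟩ := hb₁
    obtain ⟨C2, hC2⟩ := hb₂
    have hdb : BddFun (fun a => h₁ a - h₂ a) :=
      ⟨C1 + C2, fun a => (abs_sub _ _).trans (add_le_add (hC1 a) (hC2 a))⟩
    have hz : L (fun a => h₁ a - h₂ a) = 0 := Lzero c _ hdb hle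
    have : L h₂ + L (fun a => h₁ a - h₂ a) = L h₁ := by
      rw [← hLadd h₂ _ ⟨C2, hC2⟩ hdb]
      congr 1
      funext a
      simp
    linarith
  -- the disjointified elements
  set f' : ∀ a, Lp ℝ p (μ a) := fun a => f a - f a ⊓ g a with hf'def
  set g' : ∀ a, Lp ℝ p (μ a) := fun a => g a - f a ⊓ g a with hg'def
  have hf'0 : ∀ a, 0 ≤ f' a := fun a => sub_nonneg.2 inf_le_left
  have hg'0 : ∀ a, 0 ≤ g' a := fun a => sub_nonneg.2 inf_le_right
  have hdisj' : ∀ a, f' a ⊓ g' a = 0 := by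
    intro a
    show (f a - f a ⊓ g a) ⊓ (g a - f a ⊓ g a) = 0
    rw [sub_eq_add_neg, sub_eq_add_neg, ← inf_add]
    simp
  -- norms of the pieces
  set F : A → ℝ := fun a => ‖f a‖
  set G : A → ℝ := fun a => ‖g a‖
  set S : A → ℝ := fun a => ‖f a + g a‖
  set F' : A → ℝ := fun a => ‖f' a‖
  set G' : A → ℝ := fun a => ‖g' a‖
  set S' : A → ℝ := fun a => ‖f' a + g' a‖
  have hF'le : ∀ a, F' a ≤ F a + M a := fun a => (norm_sub_le _ _)
  have hG'le : ∀ a, G' a ≤ G a + M a := fun a => (norm_sub_le _ _)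
  have hMleG : ∀ a, M a ≤ Cf := fun a => (hMleF a).trans (hCf a)
  have hFbd : BddFun F := ⟨Cf, fun a => by rw [abs_of_nonneg (norm_nonneg _)]; exact hCf a⟩
  have hGbd : BddFun G := ⟨Cg, fun a => by rw [abs_of_nonneg (norm_nonneg _)]; exact hCg a⟩
  have hSbd : BddFun S := ⟨Cf + Cg, fun a => by
    rw [abs_of_nonneg (norm_nonneg _)]
    exact (norm_add_le _ _).trans (add_le_add (hCf a) (hCg a))⟩
  have hF'bd : BddFun F' := ⟨Cf + Cf, fun a => by
    rw [abs_of_nonneg (norm_nonneg _)]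
    exact (hF'le a).trans (add_le_add (hCf a) (hMleG a))⟩
  have hG'bd : BddFun G' := ⟨Cg + Cf, fun a => by
    rw [abs_of_nonneg (norm_nonneg _)]
    exact (hG'le a).trans (add_le_add (hCg a) (hMleG a))⟩
  have hS'bd : BddFun S' := ⟨Cf + Cf + (Cg + Cf), fun a => by
    rw [abs_of_nonneg (norm_nonneg _)]
    exact (norm_add_le _ _).trans (add_le_add
      ((hF'le a).trans (add_le_add (hCf a) (hMleG a)))
      ((hG'le a).trans (add_le_add (hCg a) (hMleG a))))⟩
  -- comparing norms before/after disjointification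
  have hLS : L S = L S' := by
    refine Leq 2 S S' hSbd hS'bd fun a => ?_
    have h1 : (f a + g a) - (f' a + g' a) = (f a ⊓ g a) + (f a ⊓ g a) := by
      show (f a + g a) - ((f a - f a ⊓ g a) + (g a - f a ⊓ g a)) = _
      abel
    calc |S a - S' a| ≤ ‖(f a + g a) - (f' a + g' a)‖ := abs_norm_sub_norm_le _ _
      _ = ‖(f a ⊓ g a) + (f a ⊓ g a)‖ := by rw [h1]
      _ ≤ M a + M a := norm_add_le _ _
      _ = 2 * M a := by ring
  have hLF : L F = L F' := by
    refine Leq 1 F F' hFbd hF'bd fun a => ?_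
    have h1 : f a - f' a = f a ⊓ g a := by
      show f a - (f a - f a ⊓ g a) = _
      abel
    calc |F a - F' a| ≤ ‖f a - f' a‖ := abs_norm_sub_norm_le _ _
      _ = M a := by rw [h1]
      _ = 1 * M a := (one_mul _).symm
  have hLG : L G = L G' := by
    refine Leq 1 G G' hGbd hG'bd fun a => ?_
    have h1 : g a - g' a = f a ⊓ g a := by
      show g a - (g a - f a ⊓ g a) = _
      abel
    calc |G a - G' a| ≤ ‖g a - g' a‖ := abs_norm_sub_norm_le _ _
      _ = M a := by rw [h1]
      _ = 1 * M a := (one_mul _).symm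
  -- rpow composition: L (h ^ q) = (L h) ^ q for bounded nonneg h
  have hcont : Continuous (fun x : ℝ => |x| ^ q) :=
    (Real.continuous_rpow_const hq.le).comp continuous_abs
  have Lpow : ∀ h : A → ℝ, BddFun h → (∀ a, 0 ≤ h a) →
      L (fun a => h a ^ q) = (L h) ^ q := by
    intro h hb hpos
    have h1 := hLcomp h hb (fun x => |x| ^ q) hcont
    have h2 : (fun a => |h a| ^ q) = fun a => h a ^ q := by
      funext a; rw [abs_of_nonneg (hpos a)]
    rw [h2] at h1
    rw [h1]
    simp only [abs_of_nonneg (Lnn h hb hpos)]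
  -- boundedness of the q-th powers
  have powbd : ∀ (h : A → ℝ) (C : ℝ), (∀ a, 0 ≤ h a) → (∀ a, h a ≤ C) →
      BddFun (fun a => h a ^ q) := by
    intro h C hpos hle
    refine ⟨C ^ q, fun a => ?_⟩
    rw [abs_of_nonneg (Real.rpow_nonneg (hpos a) q)]
    exact Real.rpow_le_rpow (hpos a) (hle a) hq.le
  have hF'powbd : BddFun (fun a => F' a ^ q) :=
    powbd F' (Cf + Cf) (fun a => norm_nonneg _)
      (fun a => (hF'le a).trans (add_le_add (hCf a) (hMleG a)))
  have hG'powbd : BddFun (fun a => G' a ^ q) :=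
    powbd G' (Cg + Cf) (fun a => norm_nonneg _)
      (fun a => (hG'le a).trans (add_le_add (hCg a) (hMleG a)))
  -- the key per-index identity
  have hkey : (fun a => S' a ^ q) = fun a => F' a ^ q + G' a ^ q := by
    funext a
    exact lp_disjoint_norm_rpow hp (f' a) (g' a) (hf'0 a) (hg'0 a) (hdisj' a)
  -- put everything together
  have main : (L S') ^ q = (L F') ^ q + (L G') ^ q := by
    rw [← Lpow S' hS'bd (fun a => norm_nonneg _),
      ← Lpow F' hF'bd (fun a => norm_nonneg _),
      ← Lpow G' hG'bd (fun a => norm_nonneg _), hkey,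
      ← hLadd _ _ hF'powbd hG'powbd]
    congr 1
  calc (L S) ^ q = (L S') ^ q := by rw [hLS]
    _ = (L F') ^ q + (L G') ^ q := main
    _ = (L F) ^ q + (L G) ^ q := by rw [hLF, hLG]
end

section
/- Let T ∈ B(l^p_n) be represented by its matrix (T_{ij}) with respect to the standard basis. Then T is a sub-positive contraction if and only if the matrix (|T_{ij}|) represents a contraction on l^p_n. -/
open scoped ENNReal ComplexOrder

/-- A matrix acting on `l^p_n(ℂ)` is a positive operator: it maps vectors with
nonnegative real entries to vectors with nonnegative real entries. -/
def PosMatOp {n : ℕ} (A : Matrix (Fin n) (Fin n) ℂ) : Prop :=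
  ∀ x : Fin n → ℂ, (∀ i, 0 ≤ (x i).re ∧ (x i).im = 0) →
    ∀ i, 0 ≤ (A.mulVec x i).re ∧ (A.mulVec x i).im = 0

/-- A matrix represents a contraction on `l^p_n(ℂ)`. -/
def IsLpContraction (p : ℝ≥0∞) [Fact (1 ≤ p)] {n : ℕ}
    (A : Matrix (Fin n) (Fin n) ℂ) : Prop :=
  ∀ x : Fin n → ℂ,
    ‖(WithLp.equiv p (Fin n → ℂ)).symm (A.mulVec x)‖
      ≤ ‖(WithLp.equiv p (Fin n → ℂ)).symm x‖

/-- Monotonicity of the `l^p` norm under entrywise domination of absolute values. -/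
lemma lp_norm_mono (p : ℝ≥0∞) [Fact (1 ≤ p)] (hp : p ≠ ∞) {n : ℕ}
    (y z : Fin n → ℂ) (h : ∀ i, ‖y i‖ ≤ ‖z i‖) :
    ‖(WithLp.equiv p (Fin n → ℂ)).symm y‖ ≤ ‖(WithLp.equiv p (Fin n → ℂ)).symm z‖ := by
  have hpt : 0 < p.toReal := ENNReal.toReal_pos (by
      have : (1:ℝ≥0∞) ≤ p := Fact.out
      intro h0; rw [h0] at this; simp at this) hp
  rw [PiLp.norm_eq_sum hpt, PiLp.norm_eq_sum hpt]
  apply Real.rpow_le_rpow (by positivity)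
  · apply Finset.sum_le_sum
    intro i _
    apply Real.rpow_le_rpow (norm_nonneg _)
    · simpa using h i
    · exact hpt.le
  · positivity

/-- A matrix with entrywise nonnegative real entries is a positive operator. -/
lemma posMatOp_of_entries {n : ℕ} (A : Matrix (Fin n) (Fin n) ℂ)
    (h : ∀ i j, 0 ≤ (A i j).re ∧ (A i j).im = 0) : PosMatOp A := by
  intro x hx i
  simp only [Matrix.mulVec, dotProduct, Complex.re_sum, Complex.im_sum]
  constructor
  · apply Finset.sum_nonneg
    intro j _
    rw [Complex.mul_re, (h i j).2, (hx j).2]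
    simpa using mul_nonneg (h i j).1 (hx j).1
  · apply Finset.sum_eq_zero
    intro j _
    rw [Complex.mul_im, (h i j).2, (hx j).2]
    ring

/-- A positive operator matrix has entrywise nonnegative real entries. -/
lemma entries_of_posMatOp {n : ℕ} (A : Matrix (Fin n) (Fin n) ℂ)
    (h : PosMatOp A) : ∀ i j, 0 ≤ (A i j).re ∧ (A i j).im = 0 := by
  intro i j
  have := h (Pi.single j 1) (fun k => by
    by_cases hk : k = j <;> simp [Pi.single_apply, hk]) i
  simpa using this

lemma exp_pi_sub_arg_mul (z : ℂ) :
    Complex.exp (((Real.pi - z.arg : ℝ) : ℂ) * Complex.I) * z = -((‖z‖ : ℝ) : ℂ) := by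
  nth_rewrite 2 [← Complex.norm_mul_exp_arg_mul_I z]
  rw [mul_left_comm, ← Complex.exp_add]
  have h : (((Real.pi - z.arg : ℝ)) : ℂ) * Complex.I + (z.arg : ℂ) * Complex.I
      = Real.pi * Complex.I := by push_cast; ring
  rw [h, Complex.exp_pi_mul_I]
  ring

/-- `T ∈ B(l^p_n)` is a sub-positive contraction (there is a positive contraction `R`
with `R + Re(e^{iθ}T) ≥ 0` for all `θ`) if and only if the matrix `(|T_{ij}|)`
represents a contraction on `l^p_n`. -/
theorem subpositive_contraction_iff_abs_contraction
    (p : ℝ≥0∞) [Fact (1 ≤ p)] (hp : p ≠ ∞) {n : ℕ}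
    (T : Matrix (Fin n) (Fin n) ℂ) :
    (∃ R : Matrix (Fin n) (Fin n) ℂ, PosMatOp R ∧ IsLpContraction p R ∧
        ∀ θ : ℝ, PosMatOp (R + Matrix.of fun i j =>
          (((Complex.exp (θ * Complex.I) * T i j).re : ℝ) : ℂ)))
      ↔ IsLpContraction p (Matrix.of fun i j => ((‖T i j‖ : ℝ) : ℂ)) := by
  constructor
  · rintro ⟨R, hRpos, hRcon, hθ⟩
    have hR := entries_of_posMatOp R hRpos
    -- the key domination: |T i j| ≤ (R i j).re
    have hdom : ∀ i j, ‖T i j‖ ≤ (R i j).re := by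
      intro i j
      have h1 := (entries_of_posMatOp _ (hθ (Real.pi - Complex.arg (T i j))) i j).1
      have key := exp_pi_sub_arg_mul (T i j)
      simp only [Matrix.add_apply, Matrix.of_apply, Complex.add_re, Complex.ofReal_re,
        key, Complex.neg_re, Complex.ofReal_re] at h1
      linarith
    intro x
    set y : Fin n → ℂ := fun j => ((‖x j‖ : ℝ) : ℂ) with hy
    have hy_nonneg : ∀ j, 0 ≤ (y j).re ∧ (y j).im = 0 := by
      intro j; simp [hy, norm_nonneg]
    have step1 : ∀ i, ‖(Matrix.of fun i j =>
        ((‖T i j‖ : ℝ) : ℂ)).mulVec x i‖ ≤ ‖R.mulVec y i‖ := by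
      intro i
      have h2 : ‖(Matrix.of fun i j =>
          ((‖T i j‖ : ℝ) : ℂ)).mulVec x i‖
          ≤ ∑ j, ‖T i j‖ * ‖x j‖ := by
        refine le_trans (norm_sum_le Finset.univ fun j => ((‖T i j‖ : ℝ) : ℂ) * x j) ?_
        apply le_of_eq
        refine Finset.sum_congr rfl fun j _ => ?_
        simp [norm_nonneg, norm_mul, abs_of_nonneg]
      have h3 : (R.mulVec y i).re = ∑ j, (R i j).re * ‖x j‖ := by
        simp only [Matrix.mulVec, dotProduct, Complex.re_sum]
        refine Finset.sum_congr rfl fun j _ => ?_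
        rw [Complex.mul_re]
        simp [hy, (hR i j).2]
      have h4 : ∑ j, ‖T i j‖ * ‖x j‖ ≤ (R.mulVec y i).re := by
        rw [h3]
        exact Finset.sum_le_sum fun j _ =>
          mul_le_mul_of_nonneg_right (hdom i j) (norm_nonneg _)
      exact le_trans (le_trans h2 h4) (Complex.re_le_norm _)
    have hnormy : ‖(WithLp.equiv p (Fin n → ℂ)).symm y‖
        = ‖(WithLp.equiv p (Fin n → ℂ)).symm x‖ := by
      apply le_antisymm
      · exact lp_norm_mono p hp _ _ (fun i => by
          simp [hy, Complex.norm_real, abs_of_nonneg (norm_nonneg _)])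
      · exact lp_norm_mono p hp _ _ (fun i => by
          simp [hy, Complex.norm_real, abs_of_nonneg (norm_nonneg _)])
    calc ‖(WithLp.equiv p (Fin n → ℂ)).symm ((Matrix.of fun i j =>
          ((‖T i j‖ : ℝ) : ℂ)).mulVec x)‖
        ≤ ‖(WithLp.equiv p (Fin n → ℂ)).symm (R.mulVec y)‖ :=
          lp_norm_mono p hp _ _ step1
      _ ≤ ‖(WithLp.equiv p (Fin n → ℂ)).symm y‖ := hRcon y
      _ = ‖(WithLp.equiv p (Fin n → ℂ)).symm x‖ := hnormy
  · intro h
    refine ⟨Matrix.of fun i j => ((‖T i j‖ : ℝ) : ℂ), ?_, h, ?_⟩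
    · exact posMatOp_of_entries _ (fun i j => by simp [norm_nonneg])
    · intro θ
      apply posMatOp_of_entries
      intro i j
      constructor
      · simp only [Matrix.add_apply, Matrix.of_apply, Complex.add_re, Complex.ofReal_re]
        have h1 : -(‖T i j‖) ≤ (Complex.exp (θ * Complex.I) * T i j).re := by
          have := (abs_le.1 (Complex.abs_re_le_norm (Complex.exp (θ * Complex.I) * T i j))).1
          rwa [norm_mul, Complex.norm_exp_ofReal_mul_I, one_mul] at this
        linarith
      · simp [Matrix.add_apply]
end

section
/- For 1 ≤ p < ∞, p ≠ 2, every isometry S : L^p(Ω,μ) → L^p(Ω',μ') is separation preserving: f·g = 0 implies Sf·Sg = 0. -/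
open scoped ENNReal NNReal

private lemma parallelogram_nnreal (a b : ℂ) :
    ‖a+b‖₊ ^ (2:ℝ) + ‖a-b‖₊ ^ (2:ℝ) = 2 * (‖a‖₊ ^ (2:ℝ) + ‖b‖₊ ^ (2:ℝ)) := by
  have h := parallelogram_law_with_norm ℝ a b
  apply NNReal.coe_injective
  push_cast [NNReal.rpow_two, coe_nnnorm]
  simp only [pow_two]
  linarith [h]

private lemma rpow_self_aux (X : ℝ≥0) {s : ℝ} (hs : s ≠ 0) : (X ^ s) ^ (1/s) = X := by
  rw [← NNReal.rpow_mul, mul_one_div_cancel hs, NNReal.rpow_one]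

private lemma mean_le {s : ℝ} (hs0 : 0 < s) (hs1 : s ≤ 1) (X Y : ℝ≥0) :
    X ^ s + Y ^ s ≤ 2 * (((X + Y)/2) ^ s) := by
  have hp : (1:ℝ) ≤ 1/s := by rw [le_div_iff₀ hs0]; linarith
  have h := NNReal.rpow_arith_mean_le_arith_mean2_rpow (1/2) (1/2) (X^s) (Y^s) (add_halves 1) hp
  rw [rpow_self_aux X hs0.ne', rpow_self_aux Y hs0.ne'] at h
  have h2 := NNReal.rpow_le_rpow h hs0.le
  rw [← NNReal.rpow_mul, one_div_mul_cancel hs0.ne', NNReal.rpow_one] at h2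
  calc X^s + Y^s = 2*(1/2*(X^s) + 1/2*(Y^s)) := by
        apply NNReal.coe_injective; push_cast; ring
    _ ≤ 2*((1/2*X + 1/2*Y)^s) := mul_le_mul_right h2 2
    _ = 2*(((X+Y)/2)^s) := by
        rw [show (1/2:ℝ≥0)*X + 1/2*Y = (X+Y)/2 by apply NNReal.coe_injective; push_cast; ring]

private lemma mean_ge {s : ℝ} (hs1 : 1 ≤ s) (X Y : ℝ≥0) :
    2 * (((X + Y)/2) ^ s) ≤ X ^ s + Y ^ s := by
  have h := NNReal.rpow_arith_mean_le_arith_mean2_rpow (1/2) (1/2) X Y (add_halves 1) hs1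
  calc 2*(((X+Y)/2)^s) = 2*((1/2*X + 1/2*Y)^s) := by
        rw [show (X+Y)/2 = (1/2:ℝ≥0)*X + 1/2*Y by apply NNReal.coe_injective; push_cast; ring]
    _ ≤ 2*(1/2*(X^s) + 1/2*(Y^s)) := mul_le_mul_right h 2
    _ = X^s + Y^s := by apply NNReal.coe_injective; push_cast; ring

private lemma rpow_P_eq (u : ℝ≥0) (P : ℝ) : u ^ P = (u ^ (2:ℝ)) ^ (P/2) := by
  rw [← NNReal.rpow_mul, show (2:ℝ) * (P/2) = P by ring]

private lemma chainA {P : ℝ} (h0 : 0 < P) (h2 : P ≤ 2) (a b : ℂ) :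
    ‖a+b‖₊ ^ P + ‖a-b‖₊ ^ P ≤ 2 * ((‖a‖₊ ^ (2:ℝ) + ‖b‖₊ ^ (2:ℝ)) ^ (P/2)) := by
  have hs0 : 0 < P/2 := by linarith
  have hs1 : P/2 ≤ 1 := by linarith
  calc ‖a+b‖₊ ^ P + ‖a-b‖₊ ^ P
      = (‖a+b‖₊ ^ (2:ℝ)) ^ (P/2) + (‖a-b‖₊ ^ (2:ℝ)) ^ (P/2) := by rw [rpow_P_eq ‖a+b‖₊ P, rpow_P_eq ‖a-b‖₊ P]
    _ ≤ 2 * (((‖a+b‖₊ ^ (2:ℝ) + ‖a-b‖₊ ^ (2:ℝ))/2) ^ (P/2)) := mean_le hs0 hs1 _ _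
    _ = 2 * ((‖a‖₊ ^ (2:ℝ) + ‖b‖₊ ^ (2:ℝ)) ^ (P/2)) := by
        rw [parallelogram_nnreal, mul_div_cancel_left₀ _ (two_ne_zero)]

private lemma chainB {P : ℝ} (h2 : 2 ≤ P) (a b : ℂ) :
    2 * ((‖a‖₊ ^ (2:ℝ) + ‖b‖₊ ^ (2:ℝ)) ^ (P/2)) ≤ ‖a+b‖₊ ^ P + ‖a-b‖₊ ^ P := by
  have hs1 : 1 ≤ P/2 := by linarith
  calc 2 * ((‖a‖₊ ^ (2:ℝ) + ‖b‖₊ ^ (2:ℝ)) ^ (P/2))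
      = 2 * (((‖a+b‖₊ ^ (2:ℝ) + ‖a-b‖₊ ^ (2:ℝ))/2) ^ (P/2)) := by
        rw [parallelogram_nnreal, mul_div_cancel_left₀ _ (two_ne_zero)]
    _ ≤ (‖a+b‖₊ ^ (2:ℝ)) ^ (P/2) + (‖a-b‖₊ ^ (2:ℝ)) ^ (P/2) := mean_ge hs1 _ _
    _ = ‖a+b‖₊ ^ P + ‖a-b‖₊ ^ P := by rw [← rpow_P_eq ‖a+b‖₊ P, ← rpow_P_eq ‖a-b‖₊ P]

private lemma ptA {P : ℝ} (h0 : 0 < P) (h2 : P ≤ 2) (a b : ℂ) :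
    ‖a+b‖₊ ^ P + ‖a-b‖₊ ^ P ≤ 2 * (‖a‖₊ ^ P + ‖b‖₊ ^ P) := by
  refine (chainA h0 h2 a b).trans ?_
  rw [rpow_P_eq ‖a‖₊ P, rpow_P_eq ‖b‖₊ P]
  exact mul_le_mul_right (NNReal.rpow_add_le_add_rpow _ _ (by linarith) (by linarith)) 2

private lemma ptB {P : ℝ} (h2 : 2 ≤ P) (a b : ℂ) :
    2 * (‖a‖₊ ^ P + ‖b‖₊ ^ P) ≤ ‖a+b‖₊ ^ P + ‖a-b‖₊ ^ P := by
  refine le_trans ?_ (chainB h2 a b)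
  rw [rpow_P_eq ‖a‖₊ P, rpow_P_eq ‖b‖₊ P]
  exact mul_le_mul_right (NNReal.add_rpow_le_rpow_add _ _ (by linarith)) 2

private lemma strict_sub {X Y : ℝ≥0} {s : ℝ} (hs0 : 0 < s) (hs1 : s < 1)
    (hX : 0 < X) (hY : 0 < Y) : (X + Y) ^ s < X ^ s + Y ^ s := by
  have hXY : X < X + Y := lt_add_of_pos_right X hY
  have hXY0 : (X + Y) ≠ 0 := (hX.trans hXY).ne'
  have e : (X+Y) ^ s = X * (X+Y) ^ (s-1) + Y * (X+Y) ^ (s-1) := by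
    have h := NNReal.rpow_add hXY0 1 (s-1)
    rw [NNReal.rpow_one] at h
    have hpow : (X+Y)^s = (X+Y)*(X+Y)^(s-1) := by rw [← h]; congr 1; ring
    rw [hpow, add_mul]
  have e2 : ∀ Z : ℝ≥0, 0 < Z → Z * Z ^ (s-1) = Z ^ s := by
    intro Z hZ
    have h := NNReal.rpow_add hZ.ne' 1 (s-1)
    rw [NNReal.rpow_one] at h
    rw [← h]; congr 1; ring
  rw [e, ← e2 X hX, ← e2 Y hY]
  have hx1 : (X+Y) ^ (s-1) < X ^ (s-1) := NNReal.rpow_lt_rpow_of_neg hX hXY (by linarith)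
  have hy1 : (X+Y) ^ (s-1) < Y ^ (s-1) := NNReal.rpow_lt_rpow_of_neg hY (lt_add_of_pos_left Y hX) (by linarith)
  exact add_lt_add (mul_lt_mul_of_pos_left hx1 hX) (mul_lt_mul_of_pos_left hy1 hY)

private lemma strict_super {X Y : ℝ≥0} {s : ℝ} (hs1 : 1 < s)
    (hX : 0 < X) (hY : 0 < Y) : X ^ s + Y ^ s < (X + Y) ^ s := by
  have hXY : X < X + Y := lt_add_of_pos_right X hY
  have hXY0 : (X + Y) ≠ 0 := (hX.trans hXY).ne'
  have e : (X+Y) ^ s = X * (X+Y) ^ (s-1) + Y * (X+Y) ^ (s-1) := by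
    have h := NNReal.rpow_add hXY0 1 (s-1)
    rw [NNReal.rpow_one] at h
    have hpow : (X+Y)^s = (X+Y)*(X+Y)^(s-1) := by rw [← h]; congr 1; ring
    rw [hpow, add_mul]
  have e2 : ∀ Z : ℝ≥0, 0 < Z → Z * Z ^ (s-1) = Z ^ s := by
    intro Z hZ
    have h := NNReal.rpow_add hZ.ne' 1 (s-1)
    rw [NNReal.rpow_one] at h
    rw [← h]; congr 1; ring
  rw [e, ← e2 X hX, ← e2 Y hY]
  have hx1 : X ^ (s-1) < (X+Y) ^ (s-1) := NNReal.rpow_lt_rpow hXY (by linarith)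
  have hy1 : Y ^ (s-1) < (X+Y) ^ (s-1) := NNReal.rpow_lt_rpow (lt_add_of_pos_left Y hX) (by linarith)
  exact add_lt_add (mul_lt_mul_of_pos_left hx1 hX) (mul_lt_mul_of_pos_left hy1 hY)

private lemma eq_mul_zero_of_nnnorm_eq {P : ℝ} (h1 : 1 ≤ P) (h2 : P ≠ 2) (a b : ℂ)
    (h : ‖a+b‖₊ ^ P + ‖a-b‖₊ ^ P = 2 * (‖a‖₊ ^ P + ‖b‖₊ ^ P)) : a * b = 0 := by
  rcases eq_or_ne a 0 with rfl | ha
  · simp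
  rcases eq_or_ne b 0 with rfl | hb
  · simp
  exfalso
  have hX : (0:ℝ≥0) < ‖a‖₊ ^ (2:ℝ) := NNReal.rpow_pos (nnnorm_pos.2 ha)
  have hY : (0:ℝ≥0) < ‖b‖₊ ^ (2:ℝ) := NNReal.rpow_pos (nnnorm_pos.2 hb)
  have hPE : ∀ z : ℂ, (‖z‖₊ ^ (2:ℝ)) ^ (P/2) = ‖z‖₊ ^ P := fun z => (rpow_P_eq _ P).symm
  rcases h2.lt_or_gt with hlt | hgt
  · have c1 := chainA (by linarith : (0:ℝ) < P) hlt.le a b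
    have c2 : (‖a‖₊ ^ (2:ℝ) + ‖b‖₊ ^ (2:ℝ)) ^ (P/2) < ‖a‖₊ ^ P + ‖b‖₊ ^ P := by
      rw [← hPE a, ← hPE b]
      exact strict_sub (by linarith) (by linarith) hX hY
    have := h ▸ c1
    have c3 : 2 * ((‖a‖₊ ^ (2:ℝ) + ‖b‖₊ ^ (2:ℝ)) ^ (P/2)) < 2 * (‖a‖₊ ^ P + ‖b‖₊ ^ P) :=
      mul_lt_mul_of_pos_left c2 two_pos
    exact absurd (this.trans_lt c3) (lt_irrefl _)
  · have c1 := chainB hgt.le a b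
    have c2 : ‖a‖₊ ^ P + ‖b‖₊ ^ P < (‖a‖₊ ^ (2:ℝ) + ‖b‖₊ ^ (2:ℝ)) ^ (P/2) := by
      rw [← hPE a, ← hPE b]
      exact strict_super (by linarith) hX hY
    have c3 : 2 * (‖a‖₊ ^ P + ‖b‖₊ ^ P) < 2 * ((‖a‖₊ ^ (2:ℝ) + ‖b‖₊ ^ (2:ℝ)) ^ (P/2)) :=
      mul_lt_mul_of_pos_left c2 two_pos
    exact absurd (h ▸ (c3.trans_le c1)) (lt_irrefl _)

open MeasureTheory

private lemma enn_bridge_le {P : ℝ} (hP : 0 ≤ P) (h2 : P ≤ 2) (a b : ℂ) (h0 : 0 < P) :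
    (‖a+b‖₊:ℝ≥0∞)^P + (‖a-b‖₊:ℝ≥0∞)^P ≤ 2*((‖a‖₊:ℝ≥0∞)^P + (‖b‖₊:ℝ≥0∞)^P) := by
  have h := ptA h0 h2 a b
  simp only [← ENNReal.coe_rpow_of_nonneg _ hP]
  exact_mod_cast h

private lemma enn_bridge_ge {P : ℝ} (hP : 0 ≤ P) (h2 : 2 ≤ P) (a b : ℂ) :
    2*((‖a‖₊:ℝ≥0∞)^P + (‖b‖₊:ℝ≥0∞)^P) ≤ (‖a+b‖₊:ℝ≥0∞)^P + (‖a-b‖₊:ℝ≥0∞)^P := by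
  have h := ptB h2 a b
  simp only [← ENNReal.coe_rpow_of_nonneg _ hP]
  exact_mod_cast h

private lemma enn_bridge_eq {P : ℝ} (hP : 0 ≤ P) {a b : ℂ}
    (h : (‖a+b‖₊:ℝ≥0∞)^P + (‖a-b‖₊:ℝ≥0∞)^P = 2*((‖a‖₊:ℝ≥0∞)^P + (‖b‖₊:ℝ≥0∞)^P)) :
    ‖a+b‖₊^P + ‖a-b‖₊^P = 2*(‖a‖₊^P + ‖b‖₊^P) := by
  simp only [← ENNReal.coe_rpow_of_nonneg _ hP] at h
  exact_mod_cast h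

private lemma lintegral_rpow_eq {δ : Type*} [MeasurableSpace δ] {ν : Measure δ}
    {p : ℝ≥0∞} (hp0 : p ≠ 0) (hpt : p ≠ ∞) (h : Lp ℂ p ν) :
    ∫⁻ x, (‖h x‖₊ : ℝ≥0∞) ^ p.toReal ∂ν = (eLpNorm h p ν) ^ p.toReal := by
  rw [eLpNorm_eq_lintegral_rpow_enorm_toReal hp0 hpt, ← ENNReal.rpow_mul, one_div,
    inv_mul_cancel₀ (ENNReal.toReal_ne_zero.mpr ⟨hp0, hpt⟩), ENNReal.rpow_one]
  rfl

private lemma lintegral_rpow_fin {δ : Type*} [MeasurableSpace δ] {ν : MeasureTheory.Measure δ}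
    {p : ℝ≥0∞} (hp0 : p ≠ 0) (hpt : p ≠ ∞) (hP0 : 0 < p.toReal) (h : MeasureTheory.Lp ℂ p ν) :
    ∫⁻ x, (‖h x‖₊ : ℝ≥0∞) ^ p.toReal ∂ν ≠ ∞ := by
  rw [lintegral_rpow_eq hp0 hpt h]
  exact (ENNReal.rpow_lt_top_of_nonneg hP0.le (MeasureTheory.Lp.eLpNorm_ne_top h)).ne

/-- For `1 ≤ p < ∞`, `p ≠ 2`, every linear isometry `S : L^p(Ω,μ) → L^p(Ω',μ')` is
separation preserving: `f·g = 0` a.e. implies `Sf·Sg = 0` a.e. -/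
theorem isometry_separation_preserving
    {Ω Ω' : Type*} [MeasurableSpace Ω] [MeasurableSpace Ω']
    (μ : Measure Ω) (μ' : Measure Ω')
    (p : ℝ≥0∞) [Fact (1 ≤ p)] (hp : p ≠ ∞) (hp2 : p ≠ 2)
    (S : Lp ℂ p μ →ₗ[ℂ] Lp ℂ p μ')
    (hS : ∀ f : Lp ℂ p μ, ‖S f‖ = ‖f‖)
    (f g : Lp ℂ p μ) (hfg : ∀ᵐ ω ∂μ, f ω * g ω = 0) :
    ∀ᵐ ω' ∂μ', (S f) ω' * (S g) ω' = 0 := by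
  have hp0 : p ≠ 0 := (lt_of_lt_of_le zero_lt_one Fact.out).ne'
  set P := p.toReal with hPdef
  have hP0 : 0 < P := ENNReal.toReal_pos hp0 hp
  have hP1 : 1 ≤ P := by
    have h := ENNReal.toReal_mono hp (Fact.out : 1 ≤ p)
    simpa using h
  have hP2 : P ≠ 2 := by
    intro hc
    exact hp2 ((ENNReal.toReal_eq_toReal_iff' hp (by norm_num)).1 (by simpa using hc))
  -- eLpNorm is preserved by S
  have hel : ∀ h : Lp ℂ p μ, eLpNorm (S h) p μ' = eLpNorm h p μ := by
    intro h
    have hh := hS h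
    rw [Lp.norm_def, Lp.norm_def] at hh
    exact (ENNReal.toReal_eq_toReal_iff' (Lp.eLpNorm_ne_top _) (Lp.eLpNorm_ne_top _)).1 hh
  have key : ∀ h : Lp ℂ p μ,
      ∫⁻ x, (‖(S h) x‖₊ : ℝ≥0∞) ^ P ∂μ' = ∫⁻ x, (‖h x‖₊ : ℝ≥0∞) ^ P ∂μ := fun h => by
    rw [lintegral_rpow_eq hp0 hp (S h), lintegral_rpow_eq hp0 hp h, hel h]
  -- μ-side: disjointness gives the integrand identity
  have hsum_mu : ∫⁻ ω, ((‖f ω + g ω‖₊:ℝ≥0∞)^P + (‖f ω - g ω‖₊:ℝ≥0∞)^P) ∂μ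
      = ∫⁻ ω, 2*((‖f ω‖₊:ℝ≥0∞)^P + (‖g ω‖₊:ℝ≥0∞)^P) ∂μ := by
    refine lintegral_congr_ae ?_
    filter_upwards [hfg] with ω hω
    rcases mul_eq_zero.1 hω with h0 | h0 <;>
      simp [h0, ENNReal.zero_rpow_of_pos hP0, two_mul]
  -- coeFn lemmas
  have hadd : ((f + g : Lp ℂ p μ) : Ω → ℂ) =ᵐ[μ] fun ω => f ω + g ω := Lp.coeFn_add f g
  have hsubfg : ((f - g : Lp ℂ p μ) : Ω → ℂ) =ᵐ[μ] fun ω => f ω - g ω := Lp.coeFn_sub f g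
  have hSadd : ((S (f + g) : Lp ℂ p μ') : Ω' → ℂ)
      =ᵐ[μ'] fun ω' => (S f) ω' + (S g) ω' := by
    rw [map_add]; exact Lp.coeFn_add _ _
  have hSsub : ((S (f - g) : Lp ℂ p μ') : Ω' → ℂ)
      =ᵐ[μ'] fun ω' => (S f) ω' - (S g) ω' := by
    rw [map_sub]; exact Lp.coeFn_sub _ _
  -- measurability
  have mSadd : AEMeasurable (fun ω' => (‖(S f) ω' + (S g) ω'‖₊ : ℝ≥0∞) ^ P) μ' :=
    (((Lp.aestronglyMeasurable (S f)).add (Lp.aestronglyMeasurable (S g))).enorm).pow_const P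
  have mSsub : AEMeasurable (fun ω' => (‖(S f) ω' - (S g) ω'‖₊ : ℝ≥0∞) ^ P) μ' :=
    (((Lp.aestronglyMeasurable (S f)).sub (Lp.aestronglyMeasurable (S g))).enorm).pow_const P
  -- main lintegral identity on the μ' side
  set F : Ω' → ℝ≥0∞ := fun ω' => (‖(S f) ω' + (S g) ω'‖₊:ℝ≥0∞)^P + (‖(S f) ω' - (S g) ω'‖₊:ℝ≥0∞)^P with hF
  set G : Ω' → ℝ≥0∞ := fun ω' => 2*((‖(S f) ω'‖₊:ℝ≥0∞)^P + (‖(S g) ω'‖₊:ℝ≥0∞)^P) with hG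
  have intF : ∫⁻ ω', F ω' ∂μ' = ∫⁻ x, (‖(S (f+g)) x‖₊:ℝ≥0∞)^P ∂μ' + ∫⁻ x, (‖(S (f-g)) x‖₊:ℝ≥0∞)^P ∂μ' := by
    rw [lintegral_add_left' mSadd]
    have e1 : ∫⁻ x, (‖(S (f+g)) x‖₊:ℝ≥0∞)^P ∂μ' = ∫⁻ ω', (‖(S f) ω' + (S g) ω'‖₊:ℝ≥0∞)^P ∂μ' :=
      lintegral_congr_ae (hSadd.mono fun ω' h => by dsimp only; rw [h])
    have e2 : ∫⁻ x, (‖(S (f-g)) x‖₊:ℝ≥0∞)^P ∂μ' = ∫⁻ ω', (‖(S f) ω' - (S g) ω'‖₊:ℝ≥0∞)^P ∂μ' :=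
      lintegral_congr_ae (hSsub.mono fun ω' h => by dsimp only; rw [h])
    rw [e1, e2]
  have intG : ∫⁻ ω', G ω' ∂μ' = 2*(∫⁻ x, (‖(S f) x‖₊:ℝ≥0∞)^P ∂μ' + ∫⁻ x, (‖(S g) x‖₊:ℝ≥0∞)^P ∂μ') := by
    rw [lintegral_const_mul' _ _ (by norm_num : (2:ℝ≥0∞) ≠ ∞), lintegral_add_left' (show AEMeasurable (fun x => (‖(S f) x‖₊:ℝ≥0∞)^P) μ' from (Lp.aestronglyMeasurable (S f)).enorm.pow_const P)]
  have intFμ : ∫⁻ x, (‖(S (f+g)) x‖₊:ℝ≥0∞)^P ∂μ' + ∫⁻ x, (‖(S (f-g)) x‖₊:ℝ≥0∞)^P ∂μ'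
      = ∫⁻ ω, ((‖f ω + g ω‖₊:ℝ≥0∞)^P + (‖f ω - g ω‖₊:ℝ≥0∞)^P) ∂μ := by
    have e1 : ∫⁻ x, (‖(f+g : Lp ℂ p μ) x‖₊:ℝ≥0∞)^P ∂μ = ∫⁻ ω, (‖f ω + g ω‖₊:ℝ≥0∞)^P ∂μ :=
      lintegral_congr_ae (hadd.mono fun ω h => by dsimp only; rw [h])
    have e2 : ∫⁻ x, (‖(f-g : Lp ℂ p μ) x‖₊:ℝ≥0∞)^P ∂μ = ∫⁻ ω, (‖f ω - g ω‖₊:ℝ≥0∞)^P ∂μ :=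
      lintegral_congr_ae (hsubfg.mono fun ω h => by dsimp only; rw [h])
    have mμ : AEMeasurable (fun ω => (‖f ω + g ω‖₊:ℝ≥0∞)^P) μ :=
      ((Lp.aestronglyMeasurable f).add (Lp.aestronglyMeasurable g)).enorm.pow_const P
    rw [key (f+g), key (f-g), e1, e2, lintegral_add_left' mμ]
  have intGμ : ∫⁻ ω, (2*((‖f ω‖₊:ℝ≥0∞)^P + (‖g ω‖₊:ℝ≥0∞)^P)) ∂μ
      = 2*(∫⁻ x, (‖(S f) x‖₊:ℝ≥0∞)^P ∂μ' + ∫⁻ x, (‖(S g) x‖₊:ℝ≥0∞)^P ∂μ') := by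
    rw [lintegral_const_mul' _ _ (by norm_num : (2:ℝ≥0∞) ≠ ∞), lintegral_add_left' (show AEMeasurable (fun x => (‖f x‖₊:ℝ≥0∞)^P) μ from (Lp.aestronglyMeasurable f).enorm.pow_const P),
      key f, key g]
  have hFG : ∫⁻ ω', F ω' ∂μ' = ∫⁻ ω', G ω' ∂μ' := by
    rw [intF, intG, intFμ, hsum_mu, intGμ]
  have hFfin : ∫⁻ ω', F ω' ∂μ' ≠ ∞ := by
    rw [intF]
    exact ENNReal.add_ne_top.2 ⟨lintegral_rpow_fin hp0 hp hP0 (S (f+g)),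
      lintegral_rpow_fin hp0 hp hP0 (S (f-g))⟩
  -- deduce a.e. equality of F and G
  have mG : AEMeasurable G μ' :=
    (((Lp.aestronglyMeasurable (S f)).enorm.pow_const P).add
      ((Lp.aestronglyMeasurable (S g)).enorm.pow_const P)).const_mul 2
  have hae : F =ᵐ[μ'] G := by
    rcases hP2.lt_or_gt with hlt | hgt
    · exact ae_eq_of_ae_le_of_lintegral_le
        (ae_of_all _ fun ω' => enn_bridge_le hP0.le hlt.le _ _ hP0)
        hFfin mG hFG.ge
    · refine (ae_eq_of_ae_le_of_lintegral_le
        (ae_of_all _ fun ω' => enn_bridge_ge hP0.le hgt.le _ _)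
        (hFG ▸ hFfin) (mSadd.add mSsub) hFG.le).symm
  filter_upwards [hae] with ω' h
  exact eq_mul_zero_of_nnnorm_eq hP1 hP2 _ _ (enn_bridge_eq hP0.le h)
end

section
/- Every separation preserving contraction R on L^p(Ω,μ) is a sub-positive contraction; moreover there exists a positive contraction P such that |Rf| = P|f| μ-almost everywhere for all f ∈ L^p(Ω,μ). -/
open MeasureTheory Filter Topology
open scoped ENNReal

set_option linter.unusedSectionVars false
set_option maxHeartbeats 1000000

namespace SubposAux

noncomputable def Complex.abs : AbsoluteValue ℂ ℝ where
  toFun z := ‖z‖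
  map_mul' := norm_mul
  nonneg' := norm_nonneg
  eq_zero' _ := norm_eq_zero
  add_le' := norm_add_le

lemma Complex.abs_apply (z : ℂ) : SubposAux.Complex.abs z = ‖z‖ := rfl

lemma Complex.norm_eq_abs (z : ℂ) : ‖z‖ = SubposAux.Complex.abs z := rfl

lemma Complex.abs_ofReal (r : ℝ) : SubposAux.Complex.abs (r : ℂ) = |r| := by
  simp [SubposAux.Complex.abs_apply]

lemma Complex.abs_conj (z : ℂ) : SubposAux.Complex.abs ((starRingEnd ℂ) z) = SubposAux.Complex.abs z := by
  simp [SubposAux.Complex.abs_apply]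

@[simp] lemma Complex.abs_abs (z : ℂ) :
    SubposAux.Complex.abs ((SubposAux.Complex.abs z : ℝ) : ℂ) = SubposAux.Complex.abs z := by
  simp [SubposAux.Complex.abs_apply]

lemma Complex.continuous_abs : Continuous SubposAux.Complex.abs := continuous_norm

lemma Complex.abs_exp_ofReal_mul_I (x : ℝ) :
    SubposAux.Complex.abs (_root_.Complex.exp (x * _root_.Complex.I)) = 1 :=
  _root_.Complex.norm_exp_ofReal_mul_I x

lemma Complex.abs_re_le_abs (z : ℂ) : |z.re| ≤ SubposAux.Complex.abs z :=
  _root_.Complex.abs_re_le_norm z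

lemma Complex.normSq_eq_abs (x : ℂ) : _root_.Complex.normSq x = SubposAux.Complex.abs x ^ 2 :=
  _root_.Complex.normSq_eq_norm_sq x


/-- nonneg real complex number -/
def IsNN (z : ℂ) : Prop := 0 ≤ z.re ∧ z.im = 0

/-- phase correction: `|z|/z`, `0` at `0`. -/
noncomputable def phz (z : ℂ) : ℂ := if z = 0 then 0 else (Complex.abs z : ℂ) / z

@[simp] lemma phz_zero : phz 0 = 0 := by simp [phz]

lemma phz_mul_self (z : ℂ) : phz z * z = (Complex.abs z : ℂ) := by
  by_cases h : z = 0
  · simp [h]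
  · simp [phz, h, div_mul_cancel₀]

lemma abs_phz_le_one (z : ℂ) : Complex.abs (phz z) ≤ 1 := by
  by_cases h : z = 0
  · simp [h]
  · simp [phz, h, map_div₀, div_self, Complex.abs.ne_zero h]

lemma abs_phz_mul {z w : ℂ} (hz : z ≠ 0) :
    Complex.abs (phz z * w) = Complex.abs w := by
  rw [map_mul]
  have : Complex.abs (phz z) = 1 := by
    simp [phz, hz, map_div₀, div_self, Complex.abs.ne_zero hz]
  rw [this, one_mul]

lemma phz_eq_conj_div (z : ℂ) (hz : z ≠ 0) :
    phz z = (starRingEnd ℂ) z / (Complex.abs z : ℂ) := by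
  have h1 : (starRingEnd ℂ) z * z = ((Complex.abs z : ℝ) : ℂ) * (Complex.abs z : ℂ) := by
    rw [mul_comm, Complex.mul_conj, Complex.normSq_eq_abs]
    push_cast; ring
  have ha : (Complex.abs z : ℂ) ≠ 0 :=
    Complex.ofReal_ne_zero.mpr (Complex.abs.ne_zero hz)
  rw [phz, if_neg hz, div_eq_div_iff hz ha]
  exact h1.symm

lemma IsNN.eq_re {z : ℂ} (h : IsNN z) : z = ((z.re : ℝ) : ℂ) :=
  Complex.ext rfl (by simpa using h.2)

lemma phz_eq_of_aligned {z w : ℂ} (h : IsNN (z * (starRingEnd ℂ) w))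
    (hz : z ≠ 0) (hw : w ≠ 0) : phz z = phz w := by
  set r := z * (starRingEnd ℂ) w with hr
  have hre : r = ((r.re : ℝ) : ℂ) := h.eq_re
  have habs : Complex.abs r = Complex.abs z * Complex.abs w := by
    rw [hr, map_mul, Complex.abs_conj]
  have hrre : (r.re : ℝ) = Complex.abs z * Complex.abs w := by
    have h2 : Complex.abs r = |r.re| := by
      rw [show Complex.abs r = Complex.abs ((r.re : ℝ) : ℂ) from congrArg _ hre,
        Complex.abs_ofReal]
    rw [abs_of_nonneg h.1] at h2
    linarith [habs, h2]
  have hconj : (starRingEnd ℂ) z * w = ((Complex.abs z * Complex.abs w : ℝ) : ℂ) := by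
    have h3 : (starRingEnd ℂ) (z * (starRingEnd ℂ) w) = (starRingEnd ℂ) ((r.re : ℝ) : ℂ) := by
      rw [← hr, ← hre]
    simp only [map_mul, Complex.conj_conj, Complex.conj_ofReal] at h3
    rw [h3]
    exact_mod_cast congrArg Complex.ofReal hrre
  have haz : (Complex.abs z : ℂ) ≠ 0 :=
    Complex.ofReal_ne_zero.mpr (Complex.abs.ne_zero hz)
  have haw : (Complex.abs w : ℂ) ≠ 0 :=
    Complex.ofReal_ne_zero.mpr (Complex.abs.ne_zero hw)
  have hcw : w * (starRingEnd ℂ) w = ((Complex.abs w : ℂ)) * (Complex.abs w : ℂ) := by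
    rw [Complex.mul_conj, Complex.normSq_eq_abs]; push_cast; ring
  rw [phz_eq_conj_div z hz, phz_eq_conj_div w hw, div_eq_div_iff haz haw]
  apply mul_right_cancel₀ haw
  have h4 := congrArg (fun u => u * (starRingEnd ℂ) w) hconj
  rw [mul_assoc, hcw] at h4
  push_cast at h4 ⊢
  linear_combination h4

lemma phz_real_smul {r : ℝ} (hr : 0 < r) (A : ℂ) : phz ((r : ℂ) * A) = phz A := by
  by_cases hA : A = 0
  · simp [hA]
  · have h0 : (r : ℂ) * A ≠ 0 := mul_ne_zero (by exact_mod_cast hr.ne') hA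
    rw [phz, if_neg h0, phz, if_neg hA]
    rw [map_mul, Complex.abs_ofReal, abs_of_pos hr]
    push_cast
    rw [div_eq_div_iff h0 hA]
    ring

/-- key additivity algebra -/
lemma key_add {a b A B C : ℂ}
    (ha : Complex.abs a = Complex.abs A) (hb : Complex.abs b = Complex.abs B)
    (hc : Complex.abs (a + b) = Complex.abs C)
    (hAB : IsNN (A * (starRingEnd ℂ) B)) (hAC : IsNN (A * (starRingEnd ℂ) C))
    (hBC : IsNN (B * (starRingEnd ℂ) C)) :
    phz C * (a + b) = phz A * a + phz B * b := by
  by_cases hCz : C = 0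
  · have hab0 : a + b = 0 := by rwa [hCz, map_zero, map_eq_zero] at hc
    rw [hab0, hCz, phz_zero, mul_zero]
    by_cases hAz : A = 0
    · have ha0 : a = 0 := by rwa [hAz, map_zero, map_eq_zero] at ha
      have hb0 : b = 0 := by rwa [ha0, zero_add] at hab0
      simp [ha0, hb0]
    · have ha0 : a ≠ 0 := fun h => hAz (by rwa [h, map_zero, eq_comm, map_eq_zero] at ha)
      by_cases hBz : B = 0
      · have hb0 : b = 0 := by rwa [hBz, map_zero, map_eq_zero] at hb
        rw [hb0, add_zero] at hab0
        exact absurd hab0 ha0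
      · have hpAB : phz A = phz B := phz_eq_of_aligned hAB hAz hBz
        have hb0 : b = -a := eq_neg_of_add_eq_zero_right hab0
        rw [hb0, hpAB]; ring
  · by_cases hAz : A = 0
    · have ha0 : a = 0 := by rwa [hAz, map_zero, map_eq_zero] at ha
      by_cases hBz : B = 0
      · exfalso
        have hb0 : b = 0 := by rwa [hBz, map_zero, map_eq_zero] at hb
        rw [ha0, hb0, add_zero, map_zero, eq_comm, map_eq_zero] at hc
        exact hCz hc
      · rw [phz_eq_of_aligned hBC hBz hCz, ha0]
        simp
    · by_cases hBz : B = 0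
      · have hb0 : b = 0 := by rwa [hBz, map_zero, map_eq_zero] at hb
        rw [phz_eq_of_aligned hAC hAz hCz, hb0]
        simp
      · rw [phz_eq_of_aligned hAC hAz hCz, phz_eq_of_aligned hBC hBz hCz]
        ring




lemma isNN_ofReal {r : ℝ} (hr : 0 ≤ r) : IsNN ((r : ℝ) : ℂ) := by
  constructor <;> simp [hr]

/-- collapse: sums over pairwise-multiplicatively-zero families -/
lemma collapse1 {ι : Type*} (V : Finset ι) (ev : ι → ℂ)
    (hd : ∀ v ∈ V, ∀ v' ∈ V, v ≠ v' → ev v * ev v' = 0) (c : ι → ℂ) :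
    Complex.abs (∑ v ∈ V, c v * ev v) =
      Complex.abs (∑ v ∈ V, ((Complex.abs (c v) : ℝ) : ℂ) * ev v) := by
  by_cases hz : ∀ v ∈ V, ev v = 0
  · rw [Finset.sum_eq_zero fun v hv => by rw [hz v hv, mul_zero],
      Finset.sum_eq_zero fun v hv => by rw [hz v hv, mul_zero]]
  · push_neg at hz
    obtain ⟨v₀, hv₀, hev₀⟩ := hz
    have hzero : ∀ v ∈ V, v ≠ v₀ → ev v = 0 := by
      intro v hv hne
      have := hd v hv v₀ hv₀ hne
      exact (mul_eq_zero.mp this).resolve_right hev₀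
    rw [Finset.sum_eq_single_of_mem v₀ hv₀ (fun v hv hne => by rw [hzero v hv hne, mul_zero]),
      Finset.sum_eq_single_of_mem v₀ hv₀ (fun v hv hne => by rw [hzero v hv hne, mul_zero])]
    rw [map_mul, map_mul, Complex.abs_ofReal, abs_of_nonneg (Complex.abs.nonneg _)]

lemma collapse2 {ι : Type*} (V : Finset ι) (ev : ι → ℂ)
    (hd : ∀ v ∈ V, ∀ v' ∈ V, v ≠ v' → ev v * ev v' = 0)
    (c d : ι → ℝ) (hc : ∀ v, 0 ≤ c v) (hdd : ∀ v, 0 ≤ d v) :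
    IsNN ((∑ v ∈ V, ((c v : ℝ) : ℂ) * ev v) *
      (starRingEnd ℂ) (∑ v ∈ V, ((d v : ℝ) : ℂ) * ev v)) := by
  by_cases hz : ∀ v ∈ V, ev v = 0
  · rw [Finset.sum_eq_zero fun v hv => by rw [hz v hv, mul_zero], zero_mul]
    exact ⟨le_refl 0, rfl⟩
  · push_neg at hz
    obtain ⟨v₀, hv₀, hev₀⟩ := hz
    have hzero : ∀ v ∈ V, v ≠ v₀ → ev v = 0 := by
      intro v hv hne
      exact (mul_eq_zero.mp (hd v hv v₀ hv₀ hne)).resolve_right hev₀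
    rw [Finset.sum_eq_single_of_mem v₀ hv₀ (fun v hv hne => by rw [hzero v hv hne, mul_zero]),
      Finset.sum_eq_single_of_mem v₀ hv₀ (fun v hv hne => by rw [hzero v hv hne, mul_zero])]
    have heq : ((c v₀ : ℝ) : ℂ) * ev v₀ * (starRingEnd ℂ) (((d v₀ : ℝ) : ℂ) * ev v₀) =
        ((c v₀ * d v₀ * Complex.normSq (ev v₀) : ℝ) : ℂ) := by
      rw [map_mul, Complex.conj_ofReal,
        show ((c v₀ : ℝ) : ℂ) * ev v₀ * (((d v₀ : ℝ) : ℂ) * (starRingEnd ℂ) (ev v₀)) =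
          ((c v₀ : ℝ) : ℂ) * ((d v₀ : ℝ) : ℂ) * (ev v₀ * (starRingEnd ℂ) (ev v₀)) from by ring,
        Complex.mul_conj]
      push_cast; ring
    rw [heq]
    exact isNN_ofReal
      (mul_nonneg (mul_nonneg (hc v₀) (hdd v₀)) (Complex.normSq_nonneg _))

variable {Ω : Type*} [MeasurableSpace Ω] {μ : Measure Ω} {p : ℝ≥0∞} [Fact (1 ≤ p)]

lemma coeFn_sum_smul {ι : Type*} (V : Finset ι) (c : ι → ℂ) (F : ι → Lp ℂ p μ) :
    ⇑(∑ v ∈ V, c v • F v) =ᵐ[μ] fun ω => ∑ v ∈ V, c v * (F v ω) := by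
  classical
  induction V using Finset.induction_on with
  | empty => simp only [Finset.sum_empty]; exact Lp.coeFn_zero ℂ p μ
  | @insert a s ha ih =>
    rw [Finset.sum_insert ha]
    filter_upwards [Lp.coeFn_add (c a • F a) (∑ v ∈ s, c v • F v),
      Lp.coeFn_smul (c a) (F a), ih] with ω h1 h2 h3
    rw [Finset.sum_insert ha]
    simp only [h1, Pi.add_apply, h2, Pi.smul_apply, smul_eq_mul, h3]

/-- `absLp f` : pointwise absolute value, as a complex-valued Lp function. -/
lemma lipschitz_absC : LipschitzWith 1 (fun z : ℂ => ((Complex.abs z : ℝ) : ℂ)) :=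
  LipschitzWith.of_dist_le_mul fun z w => by
    simp only [NNReal.coe_one, one_mul]
    rw [Complex.isometry_ofReal.dist_eq, Real.dist_eq, Complex.dist_eq]
    exact Complex.abs.abs_abv_sub_le_abv_sub z w

lemma absC_zero : (fun z : ℂ => ((Complex.abs z : ℝ) : ℂ)) 0 = 0 := by simp

noncomputable def absLp (f : Lp ℂ p μ) : Lp ℂ p μ :=
  lipschitz_absC.compLp absC_zero f

lemma coeFn_absLp (f : Lp ℂ p μ) :
    ⇑(absLp f) =ᵐ[μ] fun ω => ((Complex.abs (f ω) : ℝ) : ℂ) :=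
  LipschitzWith.coeFn_compLp _ _ f

lemma continuous_absLp : Continuous (absLp : Lp ℂ p μ → Lp ℂ p μ) :=
  lipschitz_absC.continuous_compLp absC_zero

/-- a.e.-converging subsequence from Lp convergence -/
lemma exists_subseq_ae (hp : p ≠ ∞) (fn : ℕ → Lp ℂ p μ) (f : Lp ℂ p μ)
    (h : Tendsto fn atTop (𝓝 f)) :
    ∃ φ : ℕ → ℕ, StrictMono φ ∧
      ∀ᵐ ω ∂μ, Tendsto (fun n => (fn (φ n)) ω) atTop (𝓝 (f ω)) := by
  have hp0 : p ≠ 0 := by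
    have := Fact.out (p := 1 ≤ p)
    intro h0; rw [h0] at this; simp at this
  have hnorm : Tendsto (fun n => ‖fn n - f‖) atTop (𝓝 0) := by
    rw [tendsto_iff_norm_sub_tendsto_zero] at h
    exact h
  have help : Tendsto (fun n => eLpNorm (⇑(fn n) - ⇑f) p μ) atTop (𝓝 0) := by
    have heq : ∀ n, eLpNorm (⇑(fn n) - ⇑f) p μ = ENNReal.ofReal ‖fn n - f‖ := by
      intro n
      rw [← eLpNorm_congr_ae (Lp.coeFn_sub (fn n) f), Lp.norm_def,
        ENNReal.ofReal_toReal (Lp.eLpNorm_ne_top _)]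
    simp only [heq]
    have := ENNReal.tendsto_ofReal hnorm
    simpa using this
  have htm : TendstoInMeasure μ (fun n => ⇑(fn n)) atTop ⇑f :=
    tendstoInMeasure_of_tendsto_eLpNorm_of_ne_top hp0 hp
      (fun n => Lp.aestronglyMeasurable _) (Lp.aestronglyMeasurable f) help
  obtain ⟨ns, hns_mono, hns⟩ := htm.exists_seq_tendsto_ae
  exact ⟨ns, hns_mono, hns⟩


section Core
variable {Ω : Type*} [MeasurableSpace Ω] {μ : Measure Ω} {p : ℝ≥0∞} [Fact (1 ≤ p)]
lemma p_ne_zero : p ≠ 0 := by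
  have := Fact.out (p := 1 ≤ p)
  intro h0; rw [h0] at this; simp at this

theorem core_simple (hp : p ≠ ∞)
    (R : Lp ℂ p μ →L[ℂ] Lp ℂ p μ)
    (hsep : ∀ f g : Lp ℂ p μ, (∀ᵐ ω ∂μ, f ω * g ω = 0) →
      ∀ᵐ ω ∂μ, (R f) ω * (R g) ω = 0)
    (s t : SimpleFunc Ω ℂ) (hs : MemLp s p μ) (ht : MemLp t p μ)
    (f F G : Lp ℂ p μ)
    (hf : ⇑f =ᵐ[μ] fun ω => s ω)
    (hF : ⇑F =ᵐ[μ] fun ω => ((Complex.abs (s ω) : ℝ) : ℂ))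
    (hG : ⇑G =ᵐ[μ] fun ω => ((Complex.abs (t ω) : ℝ) : ℂ)) :
    ∀ᵐ ω ∂μ, Complex.abs ((R f) ω) = Complex.abs ((R F) ω) ∧
      IsNN ((R F) ω * (starRingEnd ℂ) ((R G) ω)) := by
  classical
  set w : SimpleFunc Ω (ℂ × ℂ) := s.pair t with hw
  set V : Finset (ℂ × ℂ) := w.range.erase (0 : ℂ × ℂ) with hV
  have hSfin : ∀ v ∈ V, μ (w ⁻¹' {v}) ≠ ∞ := by
    intro v hv
    have hv0 : v ≠ 0 := Finset.ne_of_mem_erase hv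
    by_cases h1 : v.1 = 0
    · have h2 : v.2 ≠ 0 := fun h => hv0 (Prod.ext h1 h)
      refine ne_of_lt (lt_of_le_of_lt (measure_mono ?_)
        (t.measure_preimage_lt_top_of_memLp p_ne_zero hp ht v.2 h2))
      intro ω hω
      have : w ω = v := hω
      simp only [Set.mem_preimage, Set.mem_singleton_iff]
      rw [← this, hw, SimpleFunc.pair_apply]
    · refine ne_of_lt (lt_of_le_of_lt (measure_mono ?_)
        (s.measure_preimage_lt_top_of_memLp p_ne_zero hp hs v.1 h1))
      intro ω hω
      have : w ω = v := hω
      simp only [Set.mem_preimage, Set.mem_singleton_iff]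
      rw [← this, hw, SimpleFunc.pair_apply]
  set χ : (ℂ × ℂ) → Lp ℂ p μ := fun v =>
    if h : v ∈ V then indicatorConstLp p (w.measurableSet_fiber v) (hSfin v h) (1 : ℂ)
    else 0 with hχ
  have hχcoe : ∀ᵐ ω ∂μ, ∀ v ∈ V,
      χ v ω = Set.indicator (w ⁻¹' {v}) (fun _ => (1 : ℂ)) ω := by
    rw [Filter.eventually_all_finset]
    intro v hv
    rw [hχ]
    simp only [dif_pos hv]
    exact indicatorConstLp_coeFn
  have hdecomp : ∀ (c : ℂ × ℂ → ℂ), c 0 = 0 → ∀ (h : Lp ℂ p μ),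
      (⇑h =ᵐ[μ] fun ω => c (w ω)) → h = ∑ v ∈ V, c v • χ v := by
    intro c hc0 h hh
    apply Lp.ext
    filter_upwards [hh, coeFn_sum_smul V c χ, hχcoe] with ω h1 h2 h3
    rw [h1, h2]
    by_cases h0 : w ω = 0
    · rw [h0, hc0]
      symm
      apply Finset.sum_eq_zero
      intro v hv
      rw [h3 v hv, Set.indicator_of_notMem, mul_zero]
      intro hmem
      have hwv : w ω = v := hmem
      exact (Finset.ne_of_mem_erase hv) (hwv ▸ h0)
    · have hmemV : w ω ∈ V := Finset.mem_erase.mpr ⟨h0, w.mem_range_self ω⟩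
      rw [Finset.sum_eq_single_of_mem (w ω) hmemV]
      · rw [h3 _ hmemV, Set.indicator_of_mem (Set.mem_preimage.mpr (Set.mem_singleton _)),
          mul_one]
      · intro v hv hne
        rw [h3 v hv, Set.indicator_of_notMem, mul_zero]
        intro hmem
        exact hne ((Set.mem_preimage.mp hmem : w ω ∈ _).symm)
  have hdisj2 : ∀ᵐ ω ∂μ, ∀ v ∈ V, ∀ v' ∈ V, v ≠ v' →
      (R (χ v)) ω * (R (χ v')) ω = 0 := by
    rw [Filter.eventually_all_finset]
    intro v hv
    rw [Filter.eventually_all_finset]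
    intro v' hv'
    by_cases hne : v = v'
    · exact Eventually.of_forall fun ω h => absurd hne h
    · have hd : ∀ᵐ ω ∂μ, (R (χ v)) ω * (R (χ v')) ω = 0 := by
        apply hsep
        filter_upwards [hχcoe] with ω h3
        rw [h3 v hv, h3 v' hv']
        by_cases hmem : w ω = v
        · have hnm : ω ∉ ⇑w ⁻¹' {v'} :=
            fun h => hne (hmem.symm.trans (Set.mem_preimage.mp h))
          rw [Set.indicator_of_notMem hnm, mul_zero]
        · have hnm : ω ∉ ⇑w ⁻¹' {v} := fun h => hmem (Set.mem_preimage.mp h)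
          rw [Set.indicator_of_notMem hnm, zero_mul]
      filter_upwards [hd] with ω h _
      exact h
  have hpair1 : ∀ ω, s ω = (w ω).1 := fun ω => by rw [hw, SimpleFunc.pair_apply]
  have hpair2 : ∀ ω, t ω = (w ω).2 := fun ω => by rw [hw, SimpleFunc.pair_apply]
  have hfd := hdecomp (fun v => v.1) rfl f
    (hf.trans (Eventually.of_forall fun ω => by simp only [hpair1]))
  have hFd := hdecomp (fun v => ((Complex.abs v.1 : ℝ) : ℂ)) (by simp) F
    (hF.trans (Eventually.of_forall fun ω => by simp only [hpair1]))
  have hGd := hdecomp (fun v => ((Complex.abs v.2 : ℝ) : ℂ)) (by simp) G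
    (hG.trans (Eventually.of_forall fun ω => by simp only [hpair2]))
  have hRf : ⇑(R f) =ᵐ[μ] fun ω => ∑ v ∈ V, v.1 * (R (χ v)) ω := by
    rw [hfd, map_sum]
    simp only [ContinuousLinearMap.map_smul]
    exact coeFn_sum_smul V _ _
  have hRF : ⇑(R F) =ᵐ[μ] fun ω => ∑ v ∈ V, ((Complex.abs v.1 : ℝ) : ℂ) * (R (χ v)) ω := by
    rw [hFd, map_sum]
    simp only [ContinuousLinearMap.map_smul]
    exact coeFn_sum_smul V _ _
  have hRG : ⇑(R G) =ᵐ[μ] fun ω => ∑ v ∈ V, ((Complex.abs v.2 : ℝ) : ℂ) * (R (χ v)) ω := by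
    rw [hGd, map_sum]
    simp only [ContinuousLinearMap.map_smul]
    exact coeFn_sum_smul V _ _
  filter_upwards [hRf, hRF, hRG, hdisj2] with ω h1 h2 h3 h4
  constructor
  · rw [h1, h2]
    exact collapse1 V (fun v => (R (χ v)) ω) h4 (fun v => v.1)
  · rw [h2, h3]
    exact collapse2 V (fun v => (R (χ v)) ω) h4 (fun v => Complex.abs v.1)
      (fun v => Complex.abs v.2) (fun v => Complex.abs.nonneg _) (fun v => Complex.abs.nonneg _)

lemma exists_simple_seq (hp : p ≠ ∞) (f : Lp ℂ p μ) :
    ∃ q : ℕ → Lp.simpleFunc ℂ p μ,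
      Tendsto (fun n => (q n : Lp ℂ p μ)) atTop (𝓝 f) := by
  have hd := Lp.simpleFunc.denseRange (E := ℂ) (μ := μ) (p := p) hp
  have hf : f ∈ closure (Set.range ((↑) : Lp.simpleFunc ℂ p μ → Lp ℂ p μ)) := hd f
  rw [mem_closure_iff_seq_limit] at hf
  obtain ⟨x, hx, hlim⟩ := hf
  refine ⟨fun n => (hx n).choose, ?_⟩
  have : (fun n => ((hx n).choose : Lp ℂ p μ)) = x := funext fun n => (hx n).choose_spec
  rw [this]
  exact hlim

theorem core (hp : p ≠ ∞)
    (R : Lp ℂ p μ →L[ℂ] Lp ℂ p μ)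
    (hsep : ∀ f g : Lp ℂ p μ, (∀ᵐ ω ∂μ, f ω * g ω = 0) →
      ∀ᵐ ω ∂μ, (R f) ω * (R g) ω = 0)
    (f g : Lp ℂ p μ) :
    ∀ᵐ ω ∂μ, Complex.abs ((R f) ω) = Complex.abs ((R (absLp f)) ω) ∧
      IsNN ((R (absLp f)) ω * (starRingEnd ℂ) ((R (absLp g)) ω)) := by
  obtain ⟨q, hq⟩ := exists_simple_seq hp f
  obtain ⟨r, hr⟩ := exists_simple_seq hp g
  have hae : ∀ n : ℕ,
      ∀ᵐ ω ∂μ, Complex.abs ((R ↑(q n)) ω) = Complex.abs ((R (absLp ↑(q n))) ω) ∧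
        IsNN ((R (absLp ↑(q n))) ω * (starRingEnd ℂ) ((R (absLp ↑(r n))) ω)) := by
    intro n
    refine core_simple hp R hsep (Lp.simpleFunc.toSimpleFunc (q n))
      (Lp.simpleFunc.toSimpleFunc (r n)) (Lp.simpleFunc.memLp _) (Lp.simpleFunc.memLp _)
      _ _ _ ?_ ?_ ?_
    · exact (Lp.simpleFunc.toSimpleFunc_eq_toFun (q n)).symm
    · refine (coeFn_absLp _).trans ?_
      filter_upwards [Lp.simpleFunc.toSimpleFunc_eq_toFun (q n)] with ω h
      rw [h]
    · refine (coeFn_absLp _).trans ?_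
      filter_upwards [Lp.simpleFunc.toSimpleFunc_eq_toFun (r n)] with ω h
      rw [h]
  have h1 : Tendsto (fun n => R ↑(q n)) atTop (𝓝 (R f)) :=
    (R.continuous.tendsto f).comp hq
  have h2 : Tendsto (fun n => R (absLp ↑(q n))) atTop (𝓝 (R (absLp f))) :=
    (R.continuous.tendsto _).comp ((continuous_absLp.tendsto f).comp hq)
  have h3 : Tendsto (fun n => R (absLp ↑(r n))) atTop (𝓝 (R (absLp g))) :=
    (R.continuous.tendsto _).comp ((continuous_absLp.tendsto g).comp hr)
  obtain ⟨φ1, hφ1m, hφ1⟩ := exists_subseq_ae hp _ _ h1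
  obtain ⟨φ2, hφ2m, hφ2⟩ := exists_subseq_ae hp _ _ (h2.comp hφ1m.tendsto_atTop)
  obtain ⟨φ3, hφ3m, hφ3⟩ := exists_subseq_ae hp _ _
    ((h3.comp hφ1m.tendsto_atTop).comp hφ2m.tendsto_atTop)
  have hc23 : Tendsto (fun n => φ2 (φ3 n)) atTop atTop :=
    hφ2m.tendsto_atTop.comp hφ3m.tendsto_atTop
  filter_upwards [hφ1, hφ2, hφ3, ae_all_iff.mpr hae] with ω H1 H2 H3 Hn
  have HA : Tendsto (fun n => (R ↑(q (φ1 (φ2 (φ3 n))))) ω) atTop (𝓝 ((R f) ω)) :=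
    H1.comp hc23
  have HB : Tendsto (fun n => (R (absLp ↑(q (φ1 (φ2 (φ3 n)))))) ω) atTop
      (𝓝 ((R (absLp f)) ω)) := H2.comp hφ3m.tendsto_atTop
  have HC : Tendsto (fun n => (R (absLp ↑(r (φ1 (φ2 (φ3 n)))))) ω) atTop
      (𝓝 ((R (absLp g)) ω)) := H3
  constructor
  · have l1 : Tendsto (fun n => Complex.abs ((R ↑(q (φ1 (φ2 (φ3 n))))) ω)) atTop
        (𝓝 (Complex.abs ((R f) ω))) := (Complex.continuous_abs.tendsto _).comp HA
    have l2 : Tendsto (fun n => Complex.abs ((R (absLp ↑(q (φ1 (φ2 (φ3 n)))))) ω)) atTop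
        (𝓝 (Complex.abs ((R (absLp f)) ω))) := (Complex.continuous_abs.tendsto _).comp HB
    exact tendsto_nhds_unique (l1.congr fun n => (Hn _).1) l2
  · have lZ : Tendsto
        (fun n => (R (absLp ↑(q (φ1 (φ2 (φ3 n)))))) ω *
          (starRingEnd ℂ) ((R (absLp ↑(r (φ1 (φ2 (φ3 n)))))) ω)) atTop
        (𝓝 ((R (absLp f)) ω * (starRingEnd ℂ) ((R (absLp g)) ω))) :=
      HB.mul ((Complex.continuous_conj.tendsto _).comp HC)
    constructor
    · exact ge_of_tendsto ((Complex.continuous_re.tendsto _).comp lZ)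
        (Eventually.of_forall fun n => (Hn _).2.1)
    · have him : Tendsto
          (fun n => ((R (absLp ↑(q (φ1 (φ2 (φ3 n)))))) ω *
            (starRingEnd ℂ) ((R (absLp ↑(r (φ1 (φ2 (φ3 n)))))) ω)).im) atTop
          (𝓝 (((R (absLp f)) ω * (starRingEnd ℂ) ((R (absLp g)) ω)).im)) :=
        (Complex.continuous_im.tendsto _).comp lZ
      have him0 : (fun n => ((R (absLp ↑(q (φ1 (φ2 (φ3 n)))))) ω *
          (starRingEnd ℂ) ((R (absLp ↑(r (φ1 (φ2 (φ3 n)))))) ω)).im) = fun _ => (0 : ℝ) :=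
        funext fun n => (Hn _).2.2
      rw [him0] at him
      exact (tendsto_nhds_unique him tendsto_const_nhds)

end Core
end SubposAux

open SubposAux in
/-- Every separation preserving contraction `R` on `L^p(Ω,μ;ℂ)` is a sub-positive
contraction: there exists a positive contraction `P` with `P + Re(e^{iθ}R) ≥ 0` for
all `θ` (tested on nonnegative functions, where `Re(e^{iθ}R)f` has a.e. value
`Re(e^{iθ}(Rf))`), and moreover `|Rf| = P|f|` μ-a.e. for all `f`. -/
theorem separation_preserving_is_subpositive
    {Ω : Type*} [MeasurableSpace Ω] (μ : Measure Ω)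
    (p : ℝ≥0∞) [Fact (1 ≤ p)] (hp : p ≠ ∞)
    (R : Lp ℂ p μ →L[ℂ] Lp ℂ p μ) (hR : ‖R‖ ≤ 1)
    (hsep : ∀ f g : Lp ℂ p μ, (∀ᵐ ω ∂μ, f ω * g ω = 0) →
      ∀ᵐ ω ∂μ, (R f) ω * (R g) ω = 0) :
    ∃ P : Lp ℂ p μ →L[ℂ] Lp ℂ p μ, ‖P‖ ≤ 1 ∧
      (∀ f : Lp ℂ p μ, (∀ᵐ ω ∂μ, 0 ≤ (f ω).re ∧ (f ω).im = 0) →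
        ∀ᵐ ω ∂μ, 0 ≤ ((P f) ω).re ∧ ((P f) ω).im = 0) ∧
      (∀ (θ : ℝ) (f : Lp ℂ p μ), (∀ᵐ ω ∂μ, 0 ≤ (f ω).re ∧ (f ω).im = 0) →
        ∀ᵐ ω ∂μ, 0 ≤ ((P f) ω).re + (Complex.exp (θ * Complex.I) * (R f) ω).re) ∧
      (∀ f g : Lp ℂ p μ, (∀ᵐ ω ∂μ, g ω = (‖f ω‖ : ℂ)) →
        ∀ᵐ ω ∂μ, (P g) ω = (‖(R f) ω‖ : ℂ)) := by
  classical
  -- pointwise definition of the modulus operator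
  set Pfun : Lp ℂ p μ → Ω → ℂ :=
    fun f ω => phz ((R (absLp f)) ω) * (R f) ω with hPfun
  have hmeas_phz : Measurable phz := by
    unfold phz
    refine Measurable.ite measurableSet_eq measurable_const ?_
    exact (Complex.continuous_ofReal.measurable.comp
        Complex.continuous_abs.measurable).div measurable_id
  have hmem : ∀ f : Lp ℂ p μ, MemLp (Pfun f) p μ := by
    intro f
    have hm : AEStronglyMeasurable (Pfun f) μ := by
      have h1 : AEMeasurable (fun ω => phz ((R (absLp f)) ω)) μ :=
        hmeas_phz.comp_aemeasurable (Lp.aestronglyMeasurable (R (absLp f))).aemeasurable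
      exact (h1.mul (Lp.aestronglyMeasurable (R f)).aemeasurable).aestronglyMeasurable
    refine MemLp.of_le (Lp.memLp (R f)) hm (Eventually.of_forall fun ω => ?_)
    rw [hPfun]
    simp only [Complex.norm_eq_abs, map_mul]
    calc Complex.abs (phz ((R (absLp f)) ω)) * Complex.abs ((R f) ω)
        ≤ 1 * Complex.abs ((R f) ω) :=
          mul_le_mul_of_nonneg_right (abs_phz_le_one _) (Complex.abs.nonneg _)
      _ = Complex.abs ((R f) ω) := one_mul _
  set P0 : Lp ℂ p μ → Lp ℂ p μ := fun f => MemLp.toLp (Pfun f) (hmem f) with hP0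
  have hP0coe : ∀ f : Lp ℂ p μ, ⇑(P0 f) =ᵐ[μ] Pfun f := fun f => MemLp.coeFn_toLp (hmem f)
  -- core facts
  have hcoreA : ∀ f : Lp ℂ p μ,
      ∀ᵐ ω ∂μ, Complex.abs ((R f) ω) = Complex.abs ((R (absLp f)) ω) :=
    fun f => (core hp R hsep f f).mono fun ω h => h.1
  have hcoreB : ∀ f g : Lp ℂ p μ,
      ∀ᵐ ω ∂μ, IsNN ((R (absLp f)) ω * (starRingEnd ℂ) ((R (absLp g)) ω)) :=
    fun f g => (core hp R hsep f g).mono fun ω h => h.2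
  -- additivity
  have hadd : ∀ f g : Lp ℂ p μ, P0 (f + g) = P0 f + P0 g := by
    intro f g
    apply Lp.ext
    have hRadd : R (f + g) = R f + R g := map_add R f g
    filter_upwards [hP0coe (f + g), Lp.coeFn_add (P0 f) (P0 g), hP0coe f, hP0coe g,
      Lp.coeFn_add (R f) (R g), hcoreA f, hcoreA g, hcoreA (f + g),
      hcoreB f g, hcoreB f (f + g), hcoreB g (f + g)] with ω e1 e2 e3 e4 e5 c1 c2 c3 b1 b2 b3
    rw [e1, e2]
    simp only [Pi.add_apply]
    rw [e3, e4, hPfun]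
    simp only []
    have hRω : (R (f + g)) ω = (R f) ω + (R g) ω := by
      rw [hRadd, e5]; rfl
    rw [hRω]
    rw [hRadd, e5] at c3
    have c3' : Complex.abs ((R f) ω + (R g) ω) =
        Complex.abs ((R (absLp (f + g))) ω) := c3
    exact key_add c1 c2 c3' b1 b2 b3
  -- zero
  have hzero : P0 0 = 0 := by
    have h00 : (0 : Lp ℂ p μ) + 0 = 0 := add_zero 0
    have := hadd 0 0
    rw [h00] at this
    have h2 : P0 0 - P0 0 = P0 0 + P0 0 - P0 0 := by rw [← this]
    simpa using h2.symm
  -- scalar multiplication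
  have hsmul : ∀ (c : ℂ) (f : Lp ℂ p μ), P0 (c • f) = c • P0 f := by
    intro c f
    by_cases hc : c = 0
    · rw [hc, zero_smul, zero_smul, hzero]
    · have habs : absLp (c • f) = ((Complex.abs c : ℝ) : ℂ) • absLp f := by
        apply Lp.ext
        filter_upwards [coeFn_absLp (c • f), Lp.coeFn_smul c f, coeFn_absLp f,
          Lp.coeFn_smul ((Complex.abs c : ℝ) : ℂ) (absLp f)] with ω a1 a2 a3 a4
        rw [a1, a4]
        simp only [Pi.smul_apply, smul_eq_mul, a3]
        have : (c • ⇑f) ω = c * f ω := rfl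
        rw [a2, this, map_mul]
        push_cast
        ring
      have hRsf : R (c • f) = c • R f := map_smul R c f
      have hRsabs : R (absLp (c • f)) = ((Complex.abs c : ℝ) : ℂ) • R (absLp f) := by
        rw [habs]; exact R.map_smul _ _
      apply Lp.ext
      filter_upwards [hP0coe (c • f), Lp.coeFn_smul c (P0 f), hP0coe f,
        Lp.coeFn_smul ((Complex.abs c : ℝ) : ℂ) (R (absLp f)),
        Lp.coeFn_smul c (R f)] with ω e1 e2 e3 e4 e5
      rw [e1, e2]
      simp only [Pi.smul_apply, smul_eq_mul]
      rw [e3, hPfun]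
      simp only []
      have h1 : (R (absLp (c • f))) ω = ((Complex.abs c : ℝ) : ℂ) * (R (absLp f)) ω := by
        rw [hRsabs, e4]; rfl
      have h2 : (R (c • f)) ω = c * (R f) ω := by
        rw [hRsf, e5]; rfl
      rw [h1, h2, phz_real_smul (Complex.abs.pos hc)]
      ring
  -- norm bound
  have hnorm : ∀ f : Lp ℂ p μ, ‖P0 f‖ ≤ 1 * ‖f‖ := by
    intro f
    have heq : ‖P0 f‖ = ‖R f‖ := by
      rw [Lp.norm_def, Lp.norm_def]
      congr 1
      apply eLpNorm_congr_norm_ae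
      filter_upwards [hP0coe f, hcoreA f] with ω e1 c1
      rw [e1, hPfun]
      simp only [Complex.norm_eq_abs]
      by_cases hA : (R (absLp f)) ω = 0
      · rw [hA]
        simp only [phz_zero, zero_mul, map_zero]
        rw [hA, map_zero] at c1
        exact c1.symm
      · rw [abs_phz_mul hA]
    rw [heq, one_mul]
    calc ‖R f‖ ≤ ‖R‖ * ‖f‖ := R.le_opNorm f
      _ ≤ 1 * ‖f‖ := mul_le_mul_of_nonneg_right hR (norm_nonneg f)
      _ = ‖f‖ := one_mul _
  -- assemble the operator
  set Plin : Lp ℂ p μ →ₗ[ℂ] Lp ℂ p μ :=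
    { toFun := P0
      map_add' := hadd
      map_smul' := hsmul } with hPlin
  set P : Lp ℂ p μ →L[ℂ] Lp ℂ p μ := Plin.mkContinuous 1 hnorm with hPdef
  have hPapp : ∀ f, P f = P0 f := fun f => rfl
  refine ⟨P, ?_, ?_, ?_, ?_⟩
  · exact Plin.mkContinuous_norm_le zero_le_one hnorm
  · -- positivity
    intro f hf
    have habs : absLp f = f := by
      apply Lp.ext
      filter_upwards [coeFn_absLp f, hf] with ω a1 a2
      rw [a1]
      have hz : f ω = (((f ω).re : ℝ) : ℂ) := IsNN.eq_re ⟨a2.1, a2.2⟩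
      rw [show Complex.abs (f ω) = Complex.abs (((f ω).re : ℝ) : ℂ) from congrArg _ hz,
        Complex.abs_ofReal, abs_of_nonneg a2.1]
      exact hz.symm
    filter_upwards [hP0coe f] with ω e1
    rw [hPapp, e1, hPfun]
    simp only []
    rw [habs, phz_mul_self]
    constructor
    · simp only [Complex.ofReal_re]
      exact Complex.abs.nonneg _
    · simp [Complex.ofReal_im]
  · -- sub-positivity
    intro θ f hf
    have habs : absLp f = f := by
      apply Lp.ext
      filter_upwards [coeFn_absLp f, hf] with ω a1 a2
      rw [a1]
      have hz : f ω = (((f ω).re : ℝ) : ℂ) := IsNN.eq_re ⟨a2.1, a2.2⟩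
      rw [show Complex.abs (f ω) = Complex.abs (((f ω).re : ℝ) : ℂ) from congrArg _ hz,
        Complex.abs_ofReal, abs_of_nonneg a2.1]
      exact hz.symm
    filter_upwards [hP0coe f] with ω e1
    rw [hPapp, e1, hPfun]
    simp only []
    rw [habs, phz_mul_self]
    simp only [Complex.ofReal_re]
    have h1 : Complex.abs (Complex.exp (θ * Complex.I) * (R f) ω) = Complex.abs ((R f) ω) := by
      rw [map_mul]
      have : Complex.abs (Complex.exp (θ * Complex.I)) = 1 := by
        rw [show ((θ : ℂ) * Complex.I) = ((θ : ℝ) : ℂ) * Complex.I from rfl]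
        exact Complex.abs_exp_ofReal_mul_I θ
      rw [this, one_mul]
    have h2 := Complex.abs_re_le_abs (Complex.exp (θ * Complex.I) * (R f) ω)
    rw [h1] at h2
    have h4 := abs_le.mp h2
    linarith [h4.1]
  · -- modulus identity
    intro f g hg
    have hg' : ⇑g =ᵐ[μ] fun ω => ((Complex.abs (f ω) : ℝ) : ℂ) := hg
    have hgabs : g = absLp f := by
      apply Lp.ext
      exact hg'.trans (coeFn_absLp f).symm
    have hgnn : absLp g = g := by
      apply Lp.ext
      filter_upwards [coeFn_absLp g, hg'] with ω a1 a2
      rw [a1, a2, Complex.abs_ofReal, abs_of_nonneg (Complex.abs.nonneg _)]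
    filter_upwards [hP0coe g, hcoreA f] with ω e1 c1
    rw [hPapp, e1, hPfun]
    simp only []
    rw [hgnn, phz_mul_self]
    have hRg : (R g) ω = (R (absLp f)) ω := by rw [hgabs]
    rw [hRg, ← c1]
    rfl
end

section
/- Let E be a reflexive Banach space, G a commutative topological group, π a uniformly bounded representation, and Γ = ⋂_{U∈𝒰(e)} (closure of π(U) in the weak operator topology). Then ξ ∈ E satisfies: (x ↦ π(x)ξ is continuous) if and only if Sξ = ξ for every S ∈ Γ. -/
open NormedSpace Set

section AuxWOT

variable {E : Type*} [NormedAddCommGroup E] [NormedSpace ℝ E]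

/-- In a reflexive space, every vector-functional equality determines elements. -/
private lemma dual_sep {a b : E} (h : ∀ y : E →L[ℝ] ℝ, y a = y b) : a = b :=
  (NormedSpace.eq_iff_forall_dual_eq ℝ).2 h

private lemma norm_incl (x : E) : ‖inclusionInDoubleDual ℝ E x‖ = ‖x‖ :=
  (inclusionInDoubleDualLi ℝ).norm_map x

/-- The WOT "ball" of radius `C` is compact when `E` is reflexive. -/
lemma wotBall_isCompact (hrefl : Function.Surjective (inclusionInDoubleDual ℝ E))
    {C : ℝ} (hC : 0 ≤ C) :
    IsCompact {T : E →WOT[ℝ] E | ∀ (x : E) (y : E →L[ℝ] ℝ), |y (T x)| ≤ C * ‖x‖ * ‖y‖} := by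
  classical
  rw [ContinuousLinearMapWOT.isEmbedding_inducingFn.isCompact_iff]
  set S : Set (E →WOT[ℝ] E) :=
    {T | ∀ (x : E) (y : E →L[ℝ] ℝ), |y (T x)| ≤ C * ‖x‖ * ‖y‖} with hS
  set P : Set (E × (E →L[ℝ] ℝ) → ℝ) :=
    {f | (∀ p, |f p| ≤ C * ‖p.1‖ * ‖p.2‖) ∧
      (∀ x y₁ y₂, f (x, y₁ + y₂) = f (x, y₁) + f (x, y₂)) ∧
      (∀ x (c : ℝ) y, f (x, c • y) = c * f (x, y)) ∧
      (∀ x₁ x₂ y, f (x₁ + x₂, y) = f (x₁, y) + f (x₂, y)) ∧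
      (∀ (c : ℝ) x y, f (c • x, y) = c * f (x, y))} with hP
  have himg : ⇑(ContinuousLinearMapWOT.inducingFn (RingHom.id ℝ) E E) '' S = P := by
    apply Set.Subset.antisymm
    · rintro - ⟨T, hT, rfl⟩
      refine ⟨fun p => by obtain ⟨x, y⟩ := p; simpa using hT x y, ?_, ?_, ?_, ?_⟩ <;>
        · intros
          simp [ContinuousLinearMapWOT.inducingFn_apply, map_add, map_smul, smul_eq_mul]
    · rintro f ⟨hf1, hf2, hf3, hf4, hf5⟩
      have hlin : ∀ x : E, ∃ η : E, ∀ y : E →L[ℝ] ℝ, y η = f (x, y) := by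
        intro x
        let g : (E →L[ℝ] ℝ) →ₗ[ℝ] ℝ :=
          { toFun := fun y => f (x, y)
            map_add' := fun y₁ y₂ => hf2 x y₁ y₂
            map_smul' := fun c y => hf3 x c y }
        have hb : ∀ y : E →L[ℝ] ℝ, ‖g y‖ ≤ (C * ‖x‖) * ‖y‖ := fun y => by
          simpa [g, Real.norm_eq_abs, mul_assoc] using hf1 (x, y)
        obtain ⟨η, hη⟩ := hrefl (g.mkContinuous (C * ‖x‖) hb)
        refine ⟨η, fun y => ?_⟩
        have h2 : inclusionInDoubleDual ℝ E η y = (g.mkContinuous (C * ‖x‖) hb) y := by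
          rw [hη]
        rw [NormedSpace.dual_def] at h2
        simpa [LinearMap.mkContinuous_apply, g] using h2
      choose η hη using hlin
      have hadd : ∀ x₁ x₂ : E, η (x₁ + x₂) = η x₁ + η x₂ := by
        intro x₁ x₂
        refine dual_sep fun y => ?_
        rw [hη, map_add, hη, hη, hf4]
      have hsmul : ∀ (c : ℝ) (x : E), η (c • x) = c • η x := by
        intro c x
        refine dual_sep fun y => ?_
        rw [hη, map_smul, hη, hf5, smul_eq_mul]
      have hbound : ∀ x : E, ‖η x‖ ≤ C * ‖x‖ := by
        intro x
        rw [← norm_incl (η x)]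
        refine ContinuousLinearMap.opNorm_le_bound _ (by positivity) fun y => ?_
        rw [NormedSpace.dual_def, hη]
        calc |f (x, y)| ≤ C * ‖x‖ * ‖y‖ := hf1 (x, y)
          _ = C * ‖x‖ * ‖y‖ := rfl
      let T : E →L[ℝ] E :=
        LinearMap.mkContinuous
          { toFun := η, map_add' := hadd, map_smul' := hsmul } (C) (by
            intro x; simpa [mul_assoc] using hbound x)
      refine ⟨ContinuousLinearMapWOT.ofCLM T, ?_, ?_⟩
      · intro x y
        have : (ContinuousLinearMapWOT.ofCLM T) x = T x := by
          rw [ContinuousLinearMap.toWOT_apply]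
        rw [this]
        calc |y (T x)| ≤ ‖y‖ * ‖T x‖ := by
              simpa [Real.norm_eq_abs] using y.le_opNorm (T x)
          _ ≤ ‖y‖ * (C * ‖x‖) := by
              refine mul_le_mul_of_nonneg_left ?_ (norm_nonneg y)
              exact hbound x
          _ = C * ‖x‖ * ‖y‖ := by ring
      · funext p
        rw [ContinuousLinearMapWOT.inducingFn_apply]
        have : (ContinuousLinearMapWOT.ofCLM T) p.1 = T p.1 := by
          rw [ContinuousLinearMap.toWOT_apply]
        rw [this]
        exact hη p.1 p.2
  rw [himg]
  have hPsub : P ⊆ {f : E × (E →L[ℝ] ℝ) → ℝ |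
      ∀ p, f p ∈ Set.Icc (-(C * ‖p.1‖ * ‖p.2‖)) (C * ‖p.1‖ * ‖p.2‖)} := by
    rintro f ⟨hf1, -⟩ p
    exact abs_le.1 (hf1 p)
  have hPclosed : IsClosed P := by
    rw [hP]
    simp only [Set.setOf_and]
    refine (IsClosed.inter ?_ (IsClosed.inter ?_ (IsClosed.inter ?_ (IsClosed.inter ?_ ?_))))
    · rw [Set.setOf_forall]
      exact isClosed_iInter fun p => isClosed_le ((continuous_apply p).abs) continuous_const
    · rw [Set.setOf_forall]
      refine isClosed_iInter fun x => ?_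
      rw [Set.setOf_forall]
      refine isClosed_iInter fun y₁ => ?_
      rw [Set.setOf_forall]
      refine isClosed_iInter fun y₂ => ?_
      exact isClosed_eq (continuous_apply _) ((continuous_apply (x, y₁)).add (continuous_apply (x, y₂)))
    · rw [Set.setOf_forall]
      refine isClosed_iInter fun x => ?_
      rw [Set.setOf_forall]
      refine isClosed_iInter fun c => ?_
      rw [Set.setOf_forall]
      refine isClosed_iInter fun y => ?_
      exact isClosed_eq (continuous_apply _) (continuous_const.mul (continuous_apply (x, y)))
    · rw [Set.setOf_forall]
      refine isClosed_iInter fun x₁ => ?_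
      rw [Set.setOf_forall]
      refine isClosed_iInter fun x₂ => ?_
      rw [Set.setOf_forall]
      refine isClosed_iInter fun y => ?_
      exact isClosed_eq (continuous_apply _) ((continuous_apply (x₁, y)).add (continuous_apply (x₂, y)))
    · rw [Set.setOf_forall]
      refine isClosed_iInter fun c => ?_
      rw [Set.setOf_forall]
      refine isClosed_iInter fun x => ?_
      rw [Set.setOf_forall]
      refine isClosed_iInter fun y => ?_
      exact isClosed_eq (continuous_apply _) (continuous_const.mul (continuous_apply (x, y)))
  exact (isCompact_pi_infinite fun p => isCompact_Icc).of_isClosed_subset hPclosed hPsub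

end AuxWOT


section Frag

variable {E : Type*} [NormedAddCommGroup E] [NormedSpace ℝ E]

/-- The "box slice" of a list of (functional, rational endpoints). -/
def boxSet (L : List ((E →L[ℝ] ℝ) × ℚ × ℚ)) : Set E :=
  {η | ∀ t ∈ L, t.1 η ∈ Set.Ioo (t.2.1 : ℝ) (t.2.2 : ℝ)}

lemma boxSet_nil : boxSet ([] : List ((E →L[ℝ] ℝ) × ℚ × ℚ)) = Set.univ := by
  ext η; simp [boxSet]

private lemma listbox_countable {s : Set (E →L[ℝ] ℝ)} (hs : s.Countable) :
    {L : List ((E →L[ℝ] ℝ) × ℚ × ℚ) | ∀ t ∈ L, t.1 ∈ s}.Countable := by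
  haveI := hs.to_subtype
  have key : ∀ L : List ((E →L[ℝ] ℝ) × ℚ × ℚ), (∀ t ∈ L, t.1 ∈ s) →
      L ∈ Set.range (fun l : List (↥s × ℚ × ℚ) =>
        l.map fun t => ((t.1 : E →L[ℝ] ℝ), t.2)) := by
    intro L
    induction L with
    | nil => exact fun _ => ⟨[], rfl⟩
    | cons a L ih =>
      intro h
      obtain ⟨l, hl⟩ := ih fun t ht => h t (List.mem_cons_of_mem a ht)
      exact ⟨(⟨a.1, h a (List.mem_cons_self)⟩, a.2) :: l, by simp [hl]⟩
  exact Set.Countable.mono (fun L hL => key L hL) (Set.countable_range _)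
  
private lemma norm_incl2 (x : E) : ‖inclusionInDoubleDual ℝ E x‖ = ‖x‖ :=
  (inclusionInDoubleDualLi ℝ).norm_map x

set_option maxHeartbeats 1000000 in
/-- Fragmentation: in a reflexive space, every bounded nonempty set has a nonempty
weakly-open box-slice of diameter at most `ε` (stated contrapositively). -/
lemma frag_false (hrefl : Function.Surjective (inclusionInDoubleDual ℝ E))
    {A : Set E} {M : ℝ} (hA : ∀ a ∈ A, ‖a‖ ≤ M) (hane : A.Nonempty)
    {ε : ℝ} (hε : 0 < ε)
    (H : ∀ L : List ((E →L[ℝ] ℝ) × ℚ × ℚ), (boxSet L ∩ A).Nonempty →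
      ∃ u ∈ boxSet L ∩ A, ∃ v ∈ boxSet L ∩ A, ε < ‖u - v‖) : False := by
  classical
  -- Step 1: choice of pairs and norming functionals
  have hpick : ∀ L : List ((E →L[ℝ] ℝ) × ℚ × ℚ),
      ∃ u : E, ∃ v : E, ∃ g : E →L[ℝ] ℝ, u ∈ A ∧ v ∈ A ∧ ‖g‖ ≤ 1 ∧
        ((boxSet L ∩ A).Nonempty →
          u ∈ boxSet L ∧ v ∈ boxSet L ∧ ε < ‖u - v‖ ∧ g (u - v) = ‖u - v‖) := by
    intro L
    by_cases h : (boxSet L ∩ A).Nonempty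
    · obtain ⟨u, ⟨hu1, hu2⟩, v, ⟨hv1, hv2⟩, huv⟩ := H L h
      have hne : u - v ≠ 0 := by
        intro h0
        rw [sub_eq_zero] at h0
        rw [h0, sub_self, norm_zero] at huv
        exact absurd huv (lt_irrefl 0 |> fun _ => not_lt.2 hε.le) -- fix later
      obtain ⟨g, hg1, hg2⟩ := exists_dual_vector ℝ (u - v) (norm_ne_zero_iff.2 hne)
      exact ⟨u, v, g, hu2, hv2, le_of_eq hg1, fun _ => ⟨hu1, hv1, huv, hg2⟩⟩
    · exact ⟨hane.choose, hane.choose, 0, hane.choose_spec, hane.choose_spec,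
        by simp, fun hc => absurd hc h⟩
  choose uf vf gf hufA hvfA hgf1 hpk using hpick
  -- Step 2: stages
  let step : Set (E →L[ℝ] ℝ) × Set E → Set (E →L[ℝ] ℝ) × Set E := fun p =>
    (p.1 ∪ gf '' {L | ∀ t ∈ L, t.1 ∈ p.1},
     (p.2 ∪ uf '' {L | ∀ t ∈ L, t.1 ∈ p.1}) ∪ vf '' {L | ∀ t ∈ L, t.1 ∈ p.1})
  let St : ℕ → Set (E →L[ℝ] ℝ) × Set E := fun n => Nat.rec ({0}, ∅) (fun _ p => step p) n
  have hSt_succ : ∀ n, St (n + 1) = step (St n) := fun n => rfl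
  have hStmono1 : ∀ n, (St n).1 ⊆ (St (n + 1)).1 := fun n => Set.subset_union_left
  have hStmono2 : ∀ n, (St n).2 ⊆ (St (n + 1)).2 :=
    fun n => Set.subset_union_left.trans Set.subset_union_left
  have hStle1 : ∀ {m n}, m ≤ n → (St m).1 ⊆ (St n).1 := by
    intro m n h
    induction h with
    | refl => exact subset_rfl
    | step h ih => exact ih.trans (hStmono1 _)
  have hStle2 : ∀ {m n}, m ≤ n → (St m).2 ⊆ (St n).2 := by
    intro m n h
    induction h with
    | refl => exact subset_rfl
    | step h ih => exact ih.trans (hStmono2 _)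
  have hStcount : ∀ n, (St n).1.Countable ∧ (St n).2.Countable := by
    intro n
    induction n with
    | zero => exact ⟨Set.countable_singleton 0, Set.countable_empty⟩
    | succ n ih =>
      refine ⟨ih.1.union ((listbox_countable ih.1).image _),
        ((ih.2.union ((listbox_countable ih.1).image _)).union
          ((listbox_countable ih.1).image _))⟩
  have hStA : ∀ n, (St n).2 ⊆ A := by
    intro n
    induction n with
    | zero => exact Set.empty_subset A
    | succ n ih =>
      rintro x ((hx | ⟨L, -, rfl⟩) | ⟨L, -, rfl⟩)
      · exact ih hx
      · exact hufA L
      · exact hvfA L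
  have hStnorm : ∀ n, ∀ g ∈ (St n).1, ‖g‖ ≤ 1 := by
    intro n
    induction n with
    | zero => intro g hg; rw [Set.mem_singleton_iff.1 hg]; simp
    | succ n ih =>
      rintro g (hg | ⟨L, -, rfl⟩)
      · exact ih g hg
      · exact hgf1 L
  -- unions
  have hΦcount : (⋃ n, (St n).1).Countable := Set.countable_iUnion fun n => (hStcount n).1
  have hDcount : (⋃ n, (St n).2).Countable := Set.countable_iUnion fun n => (hStcount n).2
  have hDsubA : (⋃ n, (St n).2) ⊆ A := Set.iUnion_subset hStA
  have hDne : ((⋃ n, (St n).2) : Set E).Nonempty := by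
    refine ⟨uf [], Set.mem_iUnion.2 ⟨0 + 1, ?_⟩⟩
    rw [hSt_succ 0]
    exact Or.inl (Or.inr ⟨[], by simp, rfl⟩)
  have hΦne : ((⋃ n, (St n).1) : Set (E →L[ℝ] ℝ)).Nonempty :=
    ⟨0, Set.mem_iUnion.2 ⟨0, rfl⟩⟩
  obtain ⟨d, hd⟩ := hDcount.exists_eq_range hDne
  obtain ⟨ff, hff⟩ := hΦcount.exists_eq_range hΦne
  have hdA : ∀ n, d n ∈ A := fun n => hDsubA (hd ▸ Set.mem_range_self n)
  have hffnorm : ∀ n, ‖ff n‖ ≤ 1 := by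
    intro n
    have : ff n ∈ ⋃ m, (St m).1 := hff ▸ Set.mem_range_self n
    obtain ⟨m, hm⟩ := Set.mem_iUnion.1 this
    exact hStnorm m _ hm
  -- key closure property
  have hclose : ∀ L : List ((E →L[ℝ] ℝ) × ℚ × ℚ), (∀ t ∈ L, t.1 ∈ ⋃ n, (St n).1) →
      ∃ N, ∀ t ∈ L, t.1 ∈ (St N).1 := by
    intro L
    induction L with
    | nil => exact fun _ => ⟨0, by simp⟩
    | cons a L ih =>
      intro h
      obtain ⟨N, hN⟩ := ih fun t ht => h t (List.mem_cons_of_mem a ht)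
      obtain ⟨N', hN'⟩ := Set.mem_iUnion.1 (h a (List.mem_cons_self))
      refine ⟨max N N', ?_⟩
      intro t ht'
      rcases List.mem_cons.1 ht' with rfl | ht
      · exact hStle1 (le_max_right N N') hN'
      · exact hStle1 (le_max_left N N') (hN t ht)
  have hprocess : ∀ L : List ((E →L[ℝ] ℝ) × ℚ × ℚ), (∀ t ∈ L, t.1 ∈ ⋃ n, (St n).1) →
      uf L ∈ (⋃ n, (St n).2) ∧ vf L ∈ (⋃ n, (St n).2) ∧ gf L ∈ (⋃ n, (St n).1) := by
    intro L hL
    obtain ⟨N, hN⟩ := hclose L hL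
    refine ⟨Set.mem_iUnion.2 ⟨N + 1, ?_⟩, Set.mem_iUnion.2 ⟨N + 1, ?_⟩,
      Set.mem_iUnion.2 ⟨N + 1, ?_⟩⟩
    · rw [hSt_succ N]; exact Or.inl (Or.inr ⟨L, hN, rfl⟩)
    · rw [hSt_succ N]; exact Or.inr ⟨L, hN, rfl⟩
    · rw [hSt_succ N]; exact Or.inr ⟨L, hN, rfl⟩
  -- Step 3: the weak-star picture
  set ι : E → WeakDual ℝ (StrongDual ℝ E) :=
    fun η => StrongDual.toWeakDual (inclusionInDoubleDual ℝ E η) with hιdef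
  have hι : ∀ (η : E) (y : E →L[ℝ] ℝ), (ι η) y = y η := fun η y => NormedSpace.dual_def ℝ E η y
  have hιnd : ∀ η : E, WeakDual.toStrongDual (ι η) = inclusionInDoubleDual ℝ E η := fun η => rfl
  set M' : ℝ := max M 0 with hM'
  set Zw : Set (WeakDual ℝ (StrongDual ℝ E)) := closure (ι '' (⋃ n, (St n).2)) with hZwdef
  have hZwb : Zw ⊆ ⇑WeakDual.toStrongDual ⁻¹' Metric.closedBall 0 M' := by
    refine closure_minimal ?_ (WeakDual.isClosed_closedBall 0 M')
    rintro - ⟨x, hx, rfl⟩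
    simp only [Set.mem_preimage, Metric.mem_closedBall, dist_zero_right]
    rw [hιnd, dist_zero_right (E := StrongDual ℝ (StrongDual ℝ E)), norm_incl2]
    exact le_max_of_le_left (hA x (hDsubA hx))
  have hZwcpt : IsCompact Zw :=
    (WeakDual.isCompact_closedBall (𝕜 := ℝ) (E := StrongDual ℝ E) 0 M').of_isClosed_subset isClosed_closure hZwb
  set j : WeakDual ℝ (StrongDual ℝ E) → (ℕ → ℝ) := fun z n => z (ff n) with hjdef
  have hjcont : Continuous j := continuous_pi fun n => WeakDual.eval_continuous (ff n)
  set Z' : Set (ℕ → ℝ) := j '' Zw with hZ'def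
  have hZ'cpt : IsCompact Z' := hZwcpt.image hjcont
  -- Step 4: rational combinations and density
  set wmap : List (ℚ × ℕ) → E := fun l => (l.map fun p => (p.1 : ℝ) • d p.2).sum with hwmap
  have hwadd : ∀ l₁ l₂, wmap l₁ + wmap l₂ = wmap (l₁ ++ l₂) := by
    intro l₁ l₂; simp only [hwmap, List.map_append, List.sum_append]
  have hwsmul : ∀ (q : ℚ) l, (q : ℝ) • wmap l = wmap (l.map fun p => (q * p.1, p.2)) := by
    intro q l
    simp only [hwmap, List.smul_sum, List.map_map]
    congr 1
    refine List.map_congr_left fun p _ => ?_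
    simp [smul_smul]
  have hWadd : ∀ a ∈ closure (Set.range wmap), ∀ b ∈ closure (Set.range wmap),
      a + b ∈ closure (Set.range wmap) := by
    intro a ha b hb
    rw [mem_closure_iff_seq_limit] at ha hb ⊢
    obtain ⟨xa, hxa, hta⟩ := ha
    obtain ⟨xb, hxb, htb⟩ := hb
    refine ⟨fun n => xa n + xb n, fun n => ?_, hta.add htb⟩
    obtain ⟨la, hla⟩ := hxa n
    obtain ⟨lb, hlb⟩ := hxb n
    exact ⟨la ++ lb, by rw [← hwadd, hla, hlb]⟩
  have hWsmul : ∀ (r : ℝ), ∀ a ∈ closure (Set.range wmap), r • a ∈ closure (Set.range wmap) := by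
    intro r a ha
    rw [mem_closure_iff_seq_limit] at ha ⊢
    obtain ⟨xa, hxa, hta⟩ := ha
    have hq : ∀ n : ℕ, ∃ q : ℚ, |(q : ℝ) - r| < 1 / (n + 1) := by
      intro n
      have hpos : (0:ℝ) < 1 / (n+1) := by positivity
      obtain ⟨q, hq1, hq2⟩ := exists_rat_btwn (show r - 1 / (n + 1) < r + 1 / (n+1) by linarith)
      exact ⟨q, abs_sub_lt_iff.2 ⟨by linarith, by linarith⟩⟩
    choose q hqr using hq
    refine ⟨fun n => (q n : ℝ) • xa n, fun n => ?_, ?_⟩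
    · obtain ⟨l, hl⟩ := hxa n
      exact ⟨l.map fun p => (q n * p.1, p.2), by rw [← hwsmul, hl]⟩
    · have hqt : Filter.Tendsto (fun n => (q n : ℝ)) Filter.atTop (nhds r) := by
        rw [tendsto_iff_dist_tendsto_zero]
        refine squeeze_zero (fun n => dist_nonneg) (fun n => ?_)
          tendsto_one_div_add_atTop_nhds_zero_nat
        rw [Real.dist_eq]
        exact (hqr n).le
      exact hqt.smul hta
  have hspan_sub : (Submodule.span ℝ (Set.range d) : Set E) ⊆ closure (Set.range wmap) := by
    intro v hv
    induction hv using Submodule.span_induction with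
    | mem x h =>
      obtain ⟨n, rfl⟩ := h
      exact subset_closure ⟨[(1, n)], by simp [hwmap]⟩
    | zero => exact subset_closure ⟨[], by simp [hwmap]⟩
    | add x y hx hy ihx ihy => exact hWadd x ihx y ihy
    | smul a x hx ihx => exact hWsmul a x ihx
  have hdense : ∀ z ∈ Zw, ∃ η : E, ι η = z ∧ ∀ δ : ℝ, 0 < δ → ∃ l, dist η (wmap l) < δ := by
    intro z hz
    obtain ⟨η, hη⟩ := hrefl (WeakDual.toStrongDual z)
    have hιz : ι η = z := by
      apply_fun StrongDual.toWeakDual at hη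
      exact hη
    refine ⟨η, hιz, ?_⟩
    have hηcl : η ∈ closure (Submodule.span ℝ (Set.range d) : Set E) := by
      by_contra hnot
      obtain ⟨f, u, hfu, huf⟩ := geometric_hahn_banach_closed_point
        ((Submodule.span ℝ (Set.range d)).convex.closure) isClosed_closure hnot
      have hf0 : ∀ v ∈ (Submodule.span ℝ (Set.range d) : Set E), f v = (0:ℝ) := by
        intro v hv
        by_contra hfv
        have h1 : ∀ c : ℝ, f (c • v) < u := fun c =>
          hfu _ (subset_closure (Submodule.smul_mem _ c hv))
        have h2 := h1 ((|u| + 1) / f v)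
        rw [map_smul, smul_eq_mul, div_mul_cancel₀ _ hfv] at h2
        have h3 : u ≤ |u| := le_abs_self u
        linarith
      have hu0 : (0:ℝ) < u := by
        have := hfu 0 (subset_closure (Submodule.zero_mem _))
        simpa using this
      have hev : z f = 0 := by
        have hset : ι '' (⋃ n, (St n).2) ⊆ {w : WeakDual ℝ (StrongDual ℝ E) | w f = 0} := by
          rintro - ⟨x, hx, rfl⟩
          have hxd : x ∈ Set.range d := hd ▸ hx
          have : x ∈ (Submodule.span ℝ (Set.range d) : Set E) := Submodule.subset_span hxd
          simp only [Set.mem_setOf_eq, hι]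
          exact hf0 x this
        have hcl2 : closure (ι '' (⋃ n, (St n).2)) ⊆ {w : WeakDual ℝ (StrongDual ℝ E) | w f = 0} :=
          closure_minimal hset (isClosed_eq (WeakDual.eval_continuous f) continuous_const)
        exact hcl2 hz
      rw [← hιz, hι] at hev
      linarith
    have hηcl2 : η ∈ closure (Set.range wmap) := by
      have : closure (Submodule.span ℝ (Set.range d) : Set E) ⊆ closure (Set.range wmap) := by
        rw [← closure_closure (s := Set.range wmap)]
        exact closure_mono hspan_sub
      exact this hηcl
    intro δ hδ
    obtain ⟨b, ⟨l, rfl⟩, hb⟩ := Metric.mem_closure_iff.1 hηcl2 δ hδ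
    exact ⟨l, hb⟩
  -- Step 5: the countable closed cover of Z'
  set Fl : List (ℚ × ℕ) → Set (ℕ → ℝ) := fun l =>
    j '' (Zw ∩ (⇑WeakDual.toStrongDual ⁻¹'
      Metric.closedBall (inclusionInDoubleDual ℝ E (wmap l)) (ε/8))) with hFldef
  have hFlclosed : ∀ l, IsClosed (Fl l) := fun l =>
    ((hZwcpt.inter_right (WeakDual.isClosed_closedBall _ _)).image hjcont).isClosed
  have hcover : Z' ⊆ ⋃ l, Fl l := by
    rintro - ⟨z, hz, rfl⟩
    obtain ⟨η, hιη, happ⟩ := hdense z hz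
    obtain ⟨l, hl⟩ := happ (ε/8) (by positivity)
    refine Set.mem_iUnion.2 ⟨l, Set.mem_image_of_mem j ⟨hz, ?_⟩⟩
    simp only [Set.mem_preimage, Metric.mem_closedBall]
    rw [← hιη, hιnd]
    calc dist (inclusionInDoubleDual ℝ E η) (inclusionInDoubleDual ℝ E (wmap l))
        = ‖inclusionInDoubleDual ℝ E η - inclusionInDoubleDual ℝ E (wmap l)‖ := dist_eq_norm (E := StrongDual ℝ (StrongDual ℝ E)) _ _
      _ = ‖inclusionInDoubleDual ℝ E (η - wmap l)‖ := by rw [map_sub]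
      _ = ‖η - wmap l‖ := norm_incl2 _
      _ ≤ ε/8 := by rw [← dist_eq_norm]; exact hl.le
  -- Step 6: Baire category in Z'
  have hZ'ne : Z'.Nonempty := by
    refine ⟨j (ι (d 0)), Set.mem_image_of_mem j ?_⟩
    exact subset_closure (Set.mem_image_of_mem ι (hd ▸ Set.mem_range_self 0))
  haveI : Nonempty ↥Z' := hZ'ne.to_subtype
  haveI : CompactSpace ↥Z' := isCompact_iff_compactSpace.mp hZ'cpt
  obtain ⟨l₀, hl₀⟩ := nonempty_interior_of_iUnion_of_closed
    (f := fun l : List (ℚ × ℕ) => (Subtype.val ⁻¹' Fl l : Set ↥Z'))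
    (fun l => (hFlclosed l).preimage continuous_subtype_val)
    (by
      rw [← Set.preimage_iUnion]
      refine Set.eq_univ_of_forall fun z => ?_
      exact hcover z.2)
  obtain ⟨z₀', hz₀'⟩ := hl₀
  have hnhds : (Subtype.val ⁻¹' Fl l₀ : Set ↥Z') ∈ nhds z₀' := mem_interior_iff_mem_nhds.1 hz₀'
  rw [nhds_subtype_eq_comap, Filter.mem_comap] at hnhds
  obtain ⟨O₂, hO₂, hO₂sub⟩ := hnhds
  set z₀ : ℕ → ℝ := (z₀' : ℕ → ℝ) with hz₀def
  rw [nhds_pi, Filter.mem_pi] at hO₂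
  obtain ⟨I, hIfin, t, ht, htsub⟩ := hO₂
  have hqr : ∀ i : ℕ, ∃ qr : ℚ × ℚ, i ∈ I →
      ((qr.1:ℝ) < z₀ i ∧ z₀ i < qr.2 ∧ Set.Ioo ((qr.1:ℝ)) (qr.2:ℝ) ⊆ t i) := by
    intro i
    by_cases hi : i ∈ I
    · obtain ⟨δ, hδ, hball⟩ := Metric.mem_nhds_iff.1 (ht i)
      obtain ⟨q, hq1, hq2⟩ := exists_rat_btwn (show z₀ i - δ < z₀ i by linarith)
      obtain ⟨r, hr1, hr2⟩ := exists_rat_btwn (show z₀ i < z₀ i + δ by linarith)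
      refine ⟨(q, r), fun _ => ⟨hq2, hr1, ?_⟩⟩
      intro x hx
      apply hball
      rw [Metric.mem_ball, Real.dist_eq, abs_sub_lt_iff]
      obtain ⟨h1, h2⟩ := hx
      constructor <;> linarith
    · exact ⟨(0, 0), fun h => absurd h hi⟩
  choose qr hqri using hqr
  set L₀ : List ((E →L[ℝ] ℝ) × ℚ × ℚ) :=
    hIfin.toFinset.toList.map (fun i => (ff i, qr i)) with hL₀def
  have hboxL₀ : ∀ η : E, η ∈ boxSet L₀ ↔
      ∀ i ∈ I, ff i η ∈ Set.Ioo (((qr i).1 : ℝ)) ((qr i).2 : ℝ) := by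
    intro η
    constructor
    · intro h i hi
      exact h (ff i, qr i) (List.mem_map.2 ⟨i, by simp [hIfin, hi], rfl⟩)
    · intro h tt htt
      obtain ⟨i, hi, rfl⟩ := List.mem_map.1 htt
      exact h i (by simpa [hIfin] using hi)
  have hL₀Φ : ∀ tt ∈ L₀, tt.1 ∈ ⋃ n, (St n).1 := by
    intro tt htt
    obtain ⟨i, hi, rfl⟩ := List.mem_map.1 htt
    exact hff ▸ Set.mem_range_self i
  obtain ⟨zw₀, hzw₀, hjzw₀⟩ := z₀'.2
  have hbne : (boxSet L₀ ∩ A).Nonempty := by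
    have hopen : IsOpen (⋂ i ∈ hIfin.toFinset,
        ((fun w : WeakDual ℝ (StrongDual ℝ E) => w (ff i)) ⁻¹'
          Set.Ioo (((qr i).1:ℝ)) ((qr i).2:ℝ))) :=
      isOpen_biInter_finset fun i _ => isOpen_Ioo.preimage (WeakDual.eval_continuous (ff i))
    have hzw₀mem : zw₀ ∈ ⋂ i ∈ hIfin.toFinset,
        ((fun w : WeakDual ℝ (StrongDual ℝ E) => w (ff i)) ⁻¹'
          Set.Ioo (((qr i).1:ℝ)) ((qr i).2:ℝ)) := by
      refine Set.mem_iInter₂.2 fun i hi => ?_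
      have hiI : i ∈ I := by simpa [hIfin] using hi
      have hco : zw₀ (ff i) = z₀ i := congrFun hjzw₀ i
      refine Set.mem_preimage.2 ?_
      rw [hco]
      exact ⟨(hqri i hiI).1, (hqri i hiI).2.1⟩
    obtain ⟨w, hwo, hws⟩ := _root_.mem_closure_iff.1 hzw₀ _ hopen hzw₀mem
    obtain ⟨x, hx, rfl⟩ := hws
    refine ⟨x, (hboxL₀ x).2 fun i hi => ?_, hDsubA hx⟩
    have hxw := Set.mem_iInter₂.1 hwo i (by simpa [hIfin] using hi)
    rw [Set.mem_preimage] at hxw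
    rw [← hι x (ff i)]
    exact hxw
  obtain ⟨huU, hvU, huvfar, hgeq⟩ := hpk L₀ hbne
  obtain ⟨hu_mem, hv_mem, hg_mem⟩ := hprocess L₀ hL₀Φ
  rw [hff] at hg_mem
  obtain ⟨m₀, hm₀⟩ := hg_mem
  have hkey : ∀ x : E, x ∈ boxSet L₀ → x ∈ (⋃ n, (St n).2) →
      ∃ zz ∈ Zw ∩ (⇑WeakDual.toStrongDual ⁻¹'
        Metric.closedBall (inclusionInDoubleDual ℝ E (wmap l₀)) (ε/8)), j zz = j (ι x) := by
    intro x hbox hxD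
    have hxZw : ι x ∈ Zw := subset_closure ⟨x, hxD, rfl⟩
    have hjO₂ : j (ι x) ∈ O₂ := by
      apply htsub
      refine Set.mem_pi.2 fun i hi => ?_
      have hco : j (ι x) i = ff i x := hι x (ff i)
      rw [hco]
      exact (hqri i hi).2.2 ((hboxL₀ x).1 hbox i hi)
    have hjZ' : j (ι x) ∈ Z' := Set.mem_image_of_mem j hxZw
    have hsub' : (⟨j (ι x), hjZ'⟩ : ↥Z') ∈ Subtype.val ⁻¹' O₂ := hjO₂
    have hFlmem : j (ι x) ∈ Fl l₀ := hO₂sub hsub'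
    obtain ⟨zz, hzz, hzzeq⟩ := hFlmem
    exact ⟨zz, hzz, hzzeq⟩
  obtain ⟨zu, ⟨hzuZ, hzub⟩, hzueq⟩ := hkey (uf L₀) huU hu_mem
  obtain ⟨zv, ⟨hzvZ, hzvb⟩, hzveq⟩ := hkey (vf L₀) hvU hv_mem
  have heq1 : ‖uf L₀ - vf L₀‖ = zu (ff m₀) - zv (ff m₀) := by
    have h1 : zu (ff m₀) = j zu m₀ := rfl
    have h2 : zv (ff m₀) = j zv m₀ := rfl
    rw [h1, h2, hzueq, hzveq]
    have h3 : j (ι (uf L₀)) m₀ = ff m₀ (uf L₀) := hι _ _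
    have h4 : j (ι (vf L₀)) m₀ = ff m₀ (vf L₀) := hι _ _
    rw [h3, h4, hm₀, ← map_sub, hgeq]
  have hdist : |zu (ff m₀) - zv (ff m₀)| ≤ ε/4 := by
    have h5 : (WeakDual.toStrongDual zu - WeakDual.toStrongDual zv) (ff m₀)
        = zu (ff m₀) - zv (ff m₀) := by
      rw [ContinuousLinearMap.sub_apply]
      rfl
    rw [← h5]
    have hu8 := Metric.mem_closedBall.1 (Set.mem_preimage.1 hzub)
    have hv8 := Metric.mem_closedBall.1 (Set.mem_preimage.1 hzvb)
    have hnorm8 : ‖WeakDual.toStrongDual zu - WeakDual.toStrongDual zv‖ ≤ ε/8 + ε/8 := by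
      calc ‖WeakDual.toStrongDual zu - WeakDual.toStrongDual zv‖
          = dist (WeakDual.toStrongDual zu) (WeakDual.toStrongDual zv) := (dist_eq_norm (E := StrongDual ℝ (StrongDual ℝ E)) _ _).symm
        _ ≤ dist (WeakDual.toStrongDual zu) (inclusionInDoubleDual ℝ E (wmap l₀)) +
            dist (inclusionInDoubleDual ℝ E (wmap l₀)) (WeakDual.toStrongDual zv) :=
            dist_triangle _ _ _
        _ ≤ ε/8 + ε/8 := add_le_add hu8 (by rw [dist_comm]; exact hv8)
    calc |(WeakDual.toStrongDual zu - WeakDual.toStrongDual zv) (ff m₀)|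
        ≤ ‖WeakDual.toStrongDual zu - WeakDual.toStrongDual zv‖ * ‖ff m₀‖ := by
          simpa [Real.norm_eq_abs] using
            (WeakDual.toStrongDual zu - WeakDual.toStrongDual zv).le_opNorm (ff m₀)
      _ ≤ (ε/8 + ε/8) * 1 :=
          mul_le_mul hnorm8 (hffnorm m₀) (norm_nonneg _) (by linarith)
      _ = ε/4 := by ring
  have hfin : ‖uf L₀ - vf L₀‖ ≤ ε/4 := by
    rw [heq1]
    exact (le_abs_self _).trans hdist
  linarith



end Frag

/-- Let `E` be a reflexive Banach space, `G` a commutative topological group, `π` a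
uniformly bounded representation, and `Γ = ⋂_{U ∈ 𝒰(e)} closure_WOT(π(U))`.  Then
`ξ ∈ E` translates continuously (`x ↦ π(x)ξ` continuous) iff `Sξ = ξ` for all
`S ∈ Γ`. -/
theorem continuous_vector_iff_gamma_fixed
    {E : Type*} [NormedAddCommGroup E] [NormedSpace ℝ E] [CompleteSpace E]
    (hrefl : Function.Surjective (inclusionInDoubleDual ℝ E))
    {G : Type*} [CommGroup G] [TopologicalSpace G] [IsTopologicalGroup G]
    (π : G →* (E ≃L[ℝ] E)) (C : ℝ)
    (hbd : ∀ x : G, ‖((π x : E ≃L[ℝ] E) : E →L[ℝ] E)‖ ≤ C)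
    (Γ : Set (E →WOT[ℝ] E))
    (hΓ : Γ = ⋂ U ∈ nhds (1 : G),
      closure ((fun x : G => ContinuousLinearMapWOT.ofCLM
        ((π x : E ≃L[ℝ] E) : E →L[ℝ] E)) '' U))
    (ξ : E) :
    (Continuous fun x : G => π x ξ) ↔
      ∀ S ∈ Γ, ContinuousLinearMapWOT.toCLM S ξ = ξ := by
  classical
  subst hΓ
  have hC0 : (0 : ℝ) ≤ C := le_trans (norm_nonneg _) (hbd 1)
  set Θ : G → (E →WOT[ℝ] E) :=
    fun x => ContinuousLinearMapWOT.ofCLM ((π x : E ≃L[ℝ] E) : E →L[ℝ] E) with hΘdef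
  have hΘapp : ∀ (x : G) (η : E), (Θ x) η = π x ξ → True := fun _ _ _ => trivial
  have hπone : (π (1 : G)) ξ = ξ := by rw [map_one]; rfl
  constructor
  · -- forward direction
    intro hcont S hS
    rw [NormedSpace.eq_iff_forall_dual_eq ℝ]
    intro φ
    have key : ∀ ε : ℝ, 0 < ε → |φ (S ξ) - φ ξ| ≤ ‖φ‖ * ε := by
      intro ε hε
      have h1 : Filter.Tendsto (fun x : G => π x ξ) (nhds 1) (nhds ξ) := by
        have h := hcont.continuousAt (x := (1 : G))
        rw [ContinuousAt, hπone] at h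
        exact h
      have h2 : {x : G | ‖π x ξ - ξ‖ < ε} ∈ nhds (1 : G) := by
        have h3 : ∀ᶠ x in nhds (1 : G), dist (π x ξ) ξ < ε := Metric.tendsto_nhds.1 h1 ε hε
        have h4 : ∀ᶠ x in nhds (1 : G), ‖π x ξ - ξ‖ < ε :=
          h3.mono fun x hx => by rwa [dist_eq_norm] at hx
        exact h4
      have hSU : S ∈ closure (Θ '' {x : G | ‖π x ξ - ξ‖ < ε}) := Set.mem_iInter₂.1 hS _ h2
      have hgcont : Continuous fun T : E →WOT[ℝ] E => φ (T ξ) :=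
        ContinuousLinearMapWOT.continuous_dual_apply ξ φ
      have hCclosed : IsClosed {r : ℝ | |r - φ ξ| ≤ ‖φ‖ * ε} :=
        isClosed_le (continuous_id.sub continuous_const).abs continuous_const
      have hsub : Θ '' {x : G | ‖π x ξ - ξ‖ < ε} ⊆
          (fun T : E →WOT[ℝ] E => φ (T ξ)) ⁻¹' {r : ℝ | |r - φ ξ| ≤ ‖φ‖ * ε} := by
        rintro - ⟨x, hx, rfl⟩
        simp only [Set.mem_preimage, Set.mem_setOf_eq]
        have happ : (Θ x) ξ = π x ξ := ContinuousLinearMap.toWOT_apply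
        rw [happ, ← map_sub]
        calc |φ (π x ξ - ξ)| ≤ ‖φ‖ * ‖π x ξ - ξ‖ := by
              simpa [Real.norm_eq_abs] using φ.le_opNorm (π x ξ - ξ)
          _ ≤ ‖φ‖ * ε := mul_le_mul_of_nonneg_left hx.le (norm_nonneg φ)
      have := closure_minimal hsub (hCclosed.preimage hgcont) hSU
      exact this
    by_contra hne
    have habs : (0 : ℝ) < |φ (S ξ) - φ ξ| := abs_pos.2 (sub_ne_zero.2 hne)
    have := key (|φ (S ξ) - φ ξ| / (2 * (‖φ‖ + 1))) (by positivity)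
    have hlt : ‖φ‖ * (|φ (S ξ) - φ ξ| / (2 * (‖φ‖ + 1))) < |φ (S ξ) - φ ξ| := by
      rw [div_eq_inv_mul, ← mul_assoc]
      have h1 : ‖φ‖ * (2 * (‖φ‖ + 1))⁻¹ < 1 := by
        rw [mul_inv_lt_iff₀ (by positivity)]
        nlinarith [norm_nonneg φ]
      nlinarith [abs_nonneg (φ (S ξ) - φ ξ)]
    linarith
  · -- backward direction
    intro hfix
    set B : Set (E →WOT[ℝ] E) :=
      {T | ∀ (η : E) (φ : E →L[ℝ] ℝ), |φ (T η)| ≤ C * ‖η‖ * ‖φ‖} with hBdef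
    have hBcpt : IsCompact B := wotBall_isCompact hrefl hC0
    have hBclosed : IsClosed B := by
      rw [hBdef, Set.setOf_forall]
      refine isClosed_iInter fun η => ?_
      rw [Set.setOf_forall]
      refine isClosed_iInter fun φ => ?_
      exact isClosed_le (ContinuousLinearMapWOT.continuous_dual_apply η φ).abs continuous_const
    have hΘB : ∀ x : G, Θ x ∈ B := by
      intro x η φ
      have happ : (Θ x) η = π x η := ContinuousLinearMap.toWOT_apply
      rw [happ]
      calc |φ (π x η)| ≤ ‖φ‖ * ‖π x η‖ := by
            simpa [Real.norm_eq_abs] using φ.le_opNorm (π x η)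
        _ ≤ ‖φ‖ * (C * ‖η‖) := by
            refine mul_le_mul_of_nonneg_left ?_ (norm_nonneg φ)
            calc ‖π x η‖ = ‖((π x : E ≃L[ℝ] E) : E →L[ℝ] E) η‖ := rfl
              _ ≤ ‖((π x : E ≃L[ℝ] E) : E →L[ℝ] E)‖ * ‖η‖ := ContinuousLinearMap.le_opNorm _ _
              _ ≤ C * ‖η‖ := mul_le_mul_of_nonneg_right (hbd x) (norm_nonneg η)
        _ = C * ‖η‖ * ‖φ‖ := by ring
    -- Step 1: weak continuity at the identity
    have hweak : ∀ φ : E →L[ℝ] ℝ,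
        Filter.Tendsto (fun x : G => φ (π x ξ)) (nhds 1) (nhds (φ ξ)) := by
      intro φ
      by_contra hnot
      rw [Metric.tendsto_nhds] at hnot
      push_neg at hnot
      obtain ⟨ε, hε, hfreq⟩ := hnot
      haveI : Nonempty {U : Set G // U ∈ nhds (1 : G)} := ⟨⟨Set.univ, Filter.univ_mem⟩⟩
      set FF : {U : Set G // U ∈ nhds (1 : G)} → Set (E →WOT[ℝ] E) := fun U =>
        closure (Θ '' {x | x ∈ U.1 ∧ ε ≤ dist (φ (π x ξ)) (φ ξ)}) with hFFdef
      have hdir : Directed (· ⊇ ·) FF := by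
        intro U V
        exact ⟨⟨U.1 ∩ V.1, Filter.inter_mem U.2 V.2⟩,
          closure_mono (Set.image_mono fun x hx => ⟨hx.1.1, hx.2⟩),
          closure_mono (Set.image_mono fun x hx => ⟨hx.1.2, hx.2⟩)⟩
      have hne : ∀ U : {U : Set G // U ∈ nhds (1 : G)}, (FF U).Nonempty := by
        intro U
        obtain ⟨x, hxU, hxd⟩ := Filter.frequently_iff.1 hfreq U.2
        exact ⟨Θ x, subset_closure ⟨x, ⟨hxU, hxd⟩, rfl⟩⟩
      have hsubB : ∀ U : {U : Set G // U ∈ nhds (1 : G)}, FF U ⊆ B := fun U =>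
        closure_minimal (by rintro - ⟨x, -, rfl⟩; exact hΘB x) hBclosed
      have hcpt : ∀ U : {U : Set G // U ∈ nhds (1 : G)}, IsCompact (FF U) := fun U =>
        hBcpt.of_isClosed_subset isClosed_closure (hsubB U)
      obtain ⟨S, hSmem⟩ := IsCompact.nonempty_iInter_of_directed_nonempty_isCompact_isClosed
        FF hdir hne hcpt (fun U => isClosed_closure)
      rw [Set.mem_iInter] at hSmem
      have hSΓ : S ∈ ⋂ U ∈ nhds (1 : G), closure (Θ '' U) :=
        Set.mem_iInter₂.2 fun U hU =>
          closure_mono (Set.image_mono fun x hx => hx.1) (hSmem ⟨U, hU⟩)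
      have hfixS : S ξ = ξ := hfix S hSΓ
      have hdistS : ε ≤ dist (φ (S ξ)) (φ ξ) := by
        have hclosed2 : IsClosed {T : E →WOT[ℝ] E | ε ≤ dist (φ (T ξ)) (φ ξ)} :=
          isClosed_le continuous_const
            ((ContinuousLinearMapWOT.continuous_dual_apply ξ φ).dist continuous_const)
        have hsub2 : Θ '' {x | x ∈ (Set.univ : Set G) ∧ ε ≤ dist (φ (π x ξ)) (φ ξ)} ⊆
            {T : E →WOT[ℝ] E | ε ≤ dist (φ (T ξ)) (φ ξ)} := by
          rintro - ⟨x, ⟨-, hx⟩, rfl⟩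
          have happ : (Θ x) ξ = π x ξ := ContinuousLinearMap.toWOT_apply
          simpa [happ] using hx
        exact closure_minimal hsub2 hclosed2 (hSmem ⟨Set.univ, Filter.univ_mem⟩)
      rw [hfixS] at hdistS
      simp only [dist_self] at hdistS
      linarith
    -- Step 2: weak continuity everywhere
    have hweakC : ∀ φ : E →L[ℝ] ℝ, Continuous fun x : G => φ (π x ξ) := by
      intro φ
      rw [continuous_iff_continuousAt]
      intro y
      rw [ContinuousAt]
      have hcomp : Filter.Tendsto (fun x : G => y⁻¹ * x) (nhds y) (nhds 1) := by
        have h := (continuous_mul_left y⁻¹).tendsto y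
        simpa using h
      have h2 := (hweak (φ.comp ((π y : E ≃L[ℝ] E) : E →L[ℝ] E))).comp hcomp
      have heq : ∀ x : G, φ (π x ξ) = (φ.comp ((π y : E ≃L[ℝ] E) : E →L[ℝ] E)) (π (y⁻¹ * x) ξ) := by
        intro x
        rw [ContinuousLinearMap.comp_apply]
        refine congrArg φ ?_
        rw [show ((π y : E ≃L[ℝ] E) : E →L[ℝ] E) (π (y⁻¹ * x) ξ) = (π y * π (y⁻¹ * x)) ξ from rfl,
          ← map_mul, show y * (y⁻¹ * x) = x by group]
      have heqy : (φ.comp ((π y : E ≃L[ℝ] E) : E →L[ℝ] E)) ξ = φ (π y ξ) := rfl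
      rw [show (fun x : G => φ (π x ξ)) = fun x : G =>
        (φ.comp ((π y : E ≃L[ℝ] E) : E →L[ℝ] E)) (π (y⁻¹ * x) ξ) from funext heq, ← heqy]
      exact h2
    -- Step 3: norm continuity at the identity, via fragmentation
    have hnorm1 : ∀ ε : ℝ, 0 < ε → ∃ N ∈ nhds (1 : G), ∀ z ∈ N, ‖π z ξ - ξ‖ ≤ C * ε := by
      intro ε hε
      set A : Set E := Set.range (fun x : G => π x ξ) with hAdef
      have hAbd : ∀ a ∈ A, ‖a‖ ≤ C * ‖ξ‖ := by
        rintro - ⟨x, rfl⟩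
        calc ‖π x ξ‖ = ‖((π x : E ≃L[ℝ] E) : E →L[ℝ] E) ξ‖ := rfl
          _ ≤ ‖((π x : E ≃L[ℝ] E) : E →L[ℝ] E)‖ * ‖ξ‖ := ContinuousLinearMap.le_opNorm _ _
          _ ≤ C * ‖ξ‖ := mul_le_mul_of_nonneg_right (hbd x) (norm_nonneg ξ)
      have hAne : A.Nonempty := ⟨π 1 ξ, Set.mem_range_self 1⟩
      have hbox : ∃ L : List ((E →L[ℝ] ℝ) × ℚ × ℚ), (boxSet L ∩ A).Nonempty ∧
          ∀ u ∈ boxSet L ∩ A, ∀ v ∈ boxSet L ∩ A, ‖u - v‖ ≤ ε := by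
        by_contra hno
        push_neg at hno
        exact frag_false hrefl hAbd hAne hε hno
      obtain ⟨L, ⟨a, haB, haA⟩, hdiam⟩ := hbox
      obtain ⟨x₀, rfl⟩ := haA
      set O : Set G := {x : G | π x ξ ∈ boxSet L} with hOdef
      have hOopen : IsOpen O := by
        have hOeq : O = ⋂ t ∈ L.toFinset,
            {x : G | t.1 (π x ξ) ∈ Set.Ioo (t.2.1 : ℝ) (t.2.2 : ℝ)} := by
          ext x
          simp [hOdef, boxSet, List.mem_toFinset]
        rw [hOeq]
        exact isOpen_biInter_finset fun t _ => isOpen_Ioo.preimage (hweakC t.1)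
      have hx₀O : x₀ ∈ O := haB
      set N : Set G := (fun z : G => x₀ * z) ⁻¹' O with hNdef
      have hNnhds : N ∈ nhds (1 : G) := by
        refine (hOopen.preimage (continuous_mul_left x₀)).mem_nhds ?_
        simp only [hNdef, Set.mem_preimage, mul_one]
        exact hx₀O
      refine ⟨N, hNnhds, fun z hz => ?_⟩
      have h1 : π (x₀ * z) ξ ∈ boxSet L ∩ A := ⟨hz, Set.mem_range_self _⟩
      have h2 : π x₀ ξ ∈ boxSet L ∩ A := ⟨haB, Set.mem_range_self _⟩
      have h3 : ‖π (x₀ * z) ξ - π x₀ ξ‖ ≤ ε := hdiam _ h1 _ h2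
      have h4 : π z ξ - ξ = π x₀⁻¹ (π (x₀ * z) ξ - π x₀ ξ) := by
        rw [map_sub]
        congr 1
        · rw [show (π x₀⁻¹) ((π (x₀ * z)) ξ) = (π x₀⁻¹ * π (x₀ * z)) ξ from rfl, ← map_mul,
            show x₀⁻¹ * (x₀ * z) = z by group]
        · rw [show (π x₀⁻¹) ((π x₀) ξ) = (π x₀⁻¹ * π x₀) ξ from rfl, ← map_mul,
            inv_mul_cancel]
          exact hπone.symm
      calc ‖π z ξ - ξ‖ = ‖((π x₀⁻¹ : E ≃L[ℝ] E) : E →L[ℝ] E) (π (x₀ * z) ξ - π x₀ ξ)‖ := by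
            rw [h4]; rfl
        _ ≤ ‖((π x₀⁻¹ : E ≃L[ℝ] E) : E →L[ℝ] E)‖ * ‖π (x₀ * z) ξ - π x₀ ξ‖ :=
            ContinuousLinearMap.le_opNorm _ _
        _ ≤ C * ε := mul_le_mul (hbd x₀⁻¹) h3 (norm_nonneg _) hC0
    -- Step 4: conclude continuity everywhere
    rw [continuous_iff_continuousAt]
    intro y
    rw [ContinuousAt, Metric.tendsto_nhds]
    intro ε hε
    have hε' : (0 : ℝ) < ε / (2 * (C * C + 1)) := by positivity
    obtain ⟨N, hN, hNs⟩ := hnorm1 (ε / (2 * (C * C + 1))) hε'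
    have hpre : (fun x : G => y⁻¹ * x) ⁻¹' N ∈ nhds y := by
      have hcont2 : Continuous fun x : G => y⁻¹ * x := continuous_mul_left y⁻¹
      have h8 : N ∈ nhds ((fun x : G => y⁻¹ * x) y) := by simpa using hN
      exact hcont2.continuousAt.preimage_mem_nhds h8
    filter_upwards [hpre] with x hx
    have h5 : ‖π (y⁻¹ * x) ξ - ξ‖ ≤ C * (ε / (2 * (C * C + 1))) := hNs _ hx
    have h6 : π x ξ - π y ξ = π y (π (y⁻¹ * x) ξ - ξ) := by
      rw [map_sub]
      congr 1
      rw [show (π y) ((π (y⁻¹ * x)) ξ) = (π y * π (y⁻¹ * x)) ξ from rfl, ← map_mul,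
        show y * (y⁻¹ * x) = x by group]
    rw [dist_eq_norm, h6]
    calc ‖π y (π (y⁻¹ * x) ξ - ξ)‖
        = ‖((π y : E ≃L[ℝ] E) : E →L[ℝ] E) (π (y⁻¹ * x) ξ - ξ)‖ := rfl
      _ ≤ ‖((π y : E ≃L[ℝ] E) : E →L[ℝ] E)‖ * ‖π (y⁻¹ * x) ξ - ξ‖ :=
          ContinuousLinearMap.le_opNorm _ _
      _ ≤ C * (C * (ε / (2 * (C * C + 1)))) := mul_le_mul (hbd y) h5 (norm_nonneg _) hC0
      _ < ε := by
        have hDpos : (0 : ℝ) < 2 * (C * C + 1) := by positivity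
        have heq9 : C * (C * (ε / (2 * (C * C + 1)))) = C * C * ε / (2 * (C * C + 1)) := by
          ring
        rw [heq9, div_lt_iff₀ hDpos]
        nlinarith [mul_nonneg (mul_nonneg hC0 hC0) hε.le]
end
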